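/- arXiv:1512.04297 — 9 statements merged into one kernel-verified Lean document; each statement's English description precedes it below -/
import Mathlib

section
/- Let q be a prime power and let 1 ≤ k ≤ n be integers. The vector space 𝔽_q^n admits a k-spread (i.e., a partial k-spread whose members cover every nonzero vector, equivalently a partial k-spread of size (q^n − 1)/(q^k − 1)) if and only if k divides n. -/
open Polynomial


lemma my_dvd_of_pow_sub_one_dvd {q k : ℕ} (hq : 2 ≤ q) (hk : k ≠ 0) :
    ∀ n, (q ^ k - 1 ∣ q ^ n - 1) → k ∣ n := by
  intro n
  induction n using Nat.strong_induction_on with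
  | _ n ih =>
    intro h
    rcases lt_or_ge n k with hlt | hge
    · have h3 : 1 ≤ q ^ n := Nat.one_le_pow _ _ (by omega)
      have h1 : q ^ n < q ^ k := Nat.pow_lt_pow_right (show 1 < q by omega) hlt
      have h2 : q ^ n - 1 = 0 := Nat.eq_zero_of_dvd_of_lt h (by
        generalize q ^ n = A at *
        generalize q ^ k = B at *
        omega)
      have h4 : q ^ n = 1 := by
        generalize q ^ n = A at *; omega
      have h5 : n = 0 := by
        by_contra hn
        exact absurd h4 (Nat.ne_of_gt (Nat.one_lt_pow hn (by omega)))
      simp [h5]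
    · have h1 : 1 ≤ q ^ (n - k) := Nat.one_le_pow _ _ (by omega)
      have h5 : 1 ≤ q ^ k := Nat.one_le_pow _ _ (by omega)
      have h3 : q ^ (n - k) * q ^ k = q ^ n := by
        rw [← pow_add]; congr 1; omega
      have h4 : q ^ (n - k) ≤ q ^ n := Nat.pow_le_pow_right (by omega) (by omega)
      have key : q ^ n - 1 = q ^ (n - k) * (q ^ k - 1) + (q ^ (n - k) - 1) := by
        rw [Nat.mul_sub, h3, mul_one]
        generalize q ^ n = A at *
        generalize q ^ (n - k) = B at *
        omega
      have h2 : q ^ k - 1 ∣ q ^ (n - k) - 1 :=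
        (Nat.dvd_add_right (dvd_mul_left _ _)).mp (key ▸ h)
      obtain ⟨c, hc⟩ := ih (n - k) (by omega) h2
      refine ⟨c + 1, ?_⟩
      rw [Nat.mul_succ, ← hc]
      omega




lemma my_exists_ext (F : Type) [Field F] [Fintype F] (k : ℕ) (hk : k ≠ 0) :
    ∃ (K : Type) (_ : Field K) (_ : Algebra F K) (_ : Finite K),
      Module.finrank F K = k := by
  obtain ⟨p, hpc⟩ := CharP.exists F
  obtain ⟨s, hp, hcard⟩ := FiniteField.card F p
  haveI : Fact p.Prime := ⟨hp⟩
  set m : ℕ := (s : ℕ) * k with hm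
  have hm0 : m ≠ 0 := by positivity
  set g : F[X] := X ^ p ^ m - X with hg
  set K := g.SplittingField with hK
  haveI : FiniteDimensional F K := IsSplittingField.finiteDimensional K g
  haveI : Finite K := Module.finite_of_finite F
  haveI : Fintype K := Fintype.ofFinite K
  haveI : CharP K p := charP_of_injective_algebraMap' F (A := K) p
  have hp1 : 1 < p := hp.one_lt
  have aux : g ≠ 0 := FiniteField.X_pow_card_pow_sub_X_ne_zero _ hm0 hp1
  have sep : g.Separable := galois_poly_separable p _ (dvd_pow (dvd_refl p) hm0)
  have key : Fintype.card (g.rootSet K) = g.natDegree :=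
    card_rootSet_eq_natDegree sep (SplittingField.splits g)
  have nat_degree_eq : g.natDegree = p ^ m :=
    FiniteField.X_pow_card_pow_sub_X_natDegree_eq _ hm0 hp1
  rw [nat_degree_eq] at key
  have huniv : g.rootSet K = Set.univ := by
    rw [Set.eq_univ_iff_forall]
    suffices h : ∀ x, x ∈ (⊤ : Subalgebra F K) →
        x ∈ g.rootSet K by
      intro x; exact h x trivial
    rw [← SplittingField.adjoin_rootSet]
    simp_rw [Algebra.mem_adjoin_iff]
    intro x hx
    refine Subring.closure_induction ?_ ?_ ?_ ?_ ?_ ?_ hx <;> simp_rw [mem_rootSet_of_ne aux]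
    · rintro x (⟨r, rfl⟩ | hx)
      · simp only [hg, map_sub, map_pow, aeval_X]
        rw [← map_pow]
        have : r ^ p ^ m = r := by
          rw [hm, pow_mul, ← hcard]
          exact FiniteField.pow_card_pow k r
        rw [this, sub_self]
      · rwa [mem_rootSet_of_ne aux] at hx
    · rw [← coeff_zero_eq_aeval_zero']
      simp only [g, coeff_X_pow, coeff_X_zero, sub_zero, _root_.map_eq_zero, ite_eq_right_iff,
        one_ne_zero, coeff_sub]
      intro hn
      exact Nat.not_lt_zero 1 ((pow_eq_zero_iff'.mp hn.symm).1 ▸ hp1)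
    · simp [g]
    · simp only [g, aeval_X_pow, aeval_X, map_sub, add_pow_char_pow, sub_eq_zero]
      intro x y _ _ hx hy
      rw [hx, hy]
    · intro x _ hx
      simp only [g, sub_eq_zero, aeval_X_pow, aeval_X, map_sub, sub_neg_eq_add] at *
      rw [neg_pow, hx, neg_one_pow_char_pow]
      ring
    · simp only [g, aeval_X_pow, aeval_X, map_sub, mul_pow, sub_eq_zero]
      intro x y _ _ hx hy
      rw [hx, hy]
  have hcardK : Fintype.card K = p ^ m := by
    calc Fintype.card K = Fintype.card (Set.univ : Set K) :=
          Fintype.card_congr (Equiv.Set.univ K).symm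
      _ = Fintype.card (g.rootSet K) := Fintype.card_congr (Equiv.setCongr huniv.symm)
      _ = p ^ m := key
  refine ⟨K, inferInstance, inferInstance, inferInstance, ?_⟩
  have h2 : Fintype.card K = Fintype.card F ^ Module.finrank F K := Module.card_eq_pow_finrank
  rw [hcardK, hcard, ← pow_mul] at h2
  have := Nat.pow_right_injective hp.two_le h2
  rw [hm] at this
  exact Nat.eq_of_mul_eq_mul_left (by positivity) this.symm


lemma my_spread_construction (F : Type) [Field F] [Fintype F] (n k : ℕ) (hk : 1 ≤ k)
    (K : Type) [Field K] [Algebra F K] [Finite K] (hfr : Module.finrank F K = k)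
    (m : ℕ) (hn : n = k * m) :
    ∃ S : Finset (Submodule F (Fin n → F)),
      ((∀ U ∈ S, Module.finrank F U = k) ∧
       ∀ U ∈ S, ∀ V ∈ S, U ≠ V → U ⊓ V = ⊥) ∧
      ∀ v : Fin n → F, v ≠ 0 → ∃ U ∈ S, v ∈ U := by
  classical
  haveI : Fintype K := Fintype.ofFinite K
  have hdim : Module.finrank F (Fin m → K) = n := by
    rw [Module.finrank_pi_fintype, Finset.sum_const, Finset.card_fin, smul_eq_mul, hfr, hn,
      mul_comm]
  have e : (Fin n → F) ≃ₗ[F] (Fin m → K) :=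
    LinearEquiv.ofFinrankEq _ _ (by rw [hdim, Module.finrank_fin_fun])
  set U : (Fin m → K) → Submodule F (Fin n → F) := fun w =>
    Submodule.comap (e : (Fin n → F) →ₗ[F] (Fin m → K))
      ((Submodule.span K {w}).restrictScalars F) with hU
  refine ⟨(Finset.univ.filter (fun w : Fin m → K => w ≠ 0)).image U, ⟨?_, ?_⟩, ?_⟩
  · rintro W hW
    simp only [Finset.mem_image, Finset.mem_filter, Finset.mem_univ, true_and] at hW
    obtain ⟨w, hw, rfl⟩ := hW
    have h1 : U w = Submodule.map (e.symm : (Fin m → K) →ₗ[F] (Fin n → F))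
        ((Submodule.span K {w}).restrictScalars F) := by
      rw [hU]
      exact (Submodule.comap_equiv_eq_map_symm e _)
    rw [h1, LinearEquiv.finrank_map_eq]
    have h2 : Module.finrank F ((Submodule.span K {w}).restrictScalars F) =
        Module.finrank F K * Module.finrank K (Submodule.span K {w}) :=
      (Module.finrank_mul_finrank F K (Submodule.span K {w})).symm
    rw [h2, finrank_span_singleton hw, hfr, mul_one]
  · rintro W hW W' hW' hne
    simp only [Finset.mem_image, Finset.mem_filter, Finset.mem_univ, true_and] at hW hW'
    obtain ⟨w, hw, rfl⟩ := hW
    obtain ⟨w', hw', rfl⟩ := hW'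
    have hspan : Submodule.span K {w} ⊓ Submodule.span K {w'} = ⊥ := by
      by_contra hbot
      obtain ⟨x, hx, hx0⟩ := Submodule.exists_mem_ne_zero_of_ne_bot hbot
      obtain ⟨hx1, hx2⟩ := Submodule.mem_inf.mp hx
      have e1 : Submodule.span K {w} = Submodule.span K {x} := by
        obtain ⟨a, rfl⟩ := Submodule.mem_span_singleton.mp hx1
        have ha : a ≠ 0 := by rintro rfl; simp at hx0
        rw [Submodule.span_singleton_smul_eq (IsUnit.mk0 a ha) w]
      have e2 : Submodule.span K {w'} = Submodule.span K {x} := by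
        obtain ⟨a, rfl⟩ := Submodule.mem_span_singleton.mp hx2
        have ha : a ≠ 0 := by rintro rfl; simp at hx0
        rw [Submodule.span_singleton_smul_eq (IsUnit.mk0 a ha) w']
      exact hne (by rw [hU]; simp only; rw [e1, e2])
    rw [hU]
    simp only
    rw [← Submodule.comap_inf]
    have hrs : Submodule.restrictScalars F (Submodule.span K {w}) ⊓
        Submodule.restrictScalars F (Submodule.span K {w'}) =
        Submodule.restrictScalars F (Submodule.span K {w} ⊓ Submodule.span K {w'}) := by
      ext x; simp [Submodule.mem_inf]
    rw [hrs, hspan]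
    simp
  · intro v hv
    refine ⟨U (e v), ?_, ?_⟩
    · simp only [Finset.mem_image, Finset.mem_filter, Finset.mem_univ, true_and]
      exact ⟨e v, by simpa using hv, rfl⟩
    · rw [hU]
      simp only [Submodule.mem_comap, LinearEquiv.coe_coe, Submodule.restrictScalars_mem]
      exact Submodule.mem_span_singleton_self _


lemma my_spread_counting (F : Type) [Field F] [Fintype F] (n k : ℕ) (hk : 1 ≤ k)
    (S : Finset (Submodule F (Fin n → F)))
    (hrank : ∀ U ∈ S, Module.finrank F U = k)
    (hint : ∀ U ∈ S, ∀ V ∈ S, U ≠ V → U ⊓ V = ⊥)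
    (hcov : ∀ v : Fin n → F, v ≠ 0 → ∃ U ∈ S, v ∈ U) :
    (Fintype.card F) ^ k - 1 ∣ (Fintype.card F) ^ n - 1 := by
  classical
  set q := Fintype.card F with hq
  set T : Submodule F (Fin n → F) → Finset (Fin n → F) :=
    fun W => (Finset.univ.filter (fun v => v ∈ W)).erase 0 with hT
  have hTcard : ∀ W ∈ S, (T W).card = q ^ k - 1 := by
    intro W hW
    have h0 : (0 : Fin n → F) ∈ Finset.univ.filter (fun v => v ∈ W) := by
      simp [W.zero_mem]
    rw [hT]
    simp only
    rw [Finset.card_erase_of_mem h0, ← Fintype.card_subtype]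
    congr 1
    rw [show Fintype.card {v : Fin n → F // v ∈ W} = Fintype.card W from rfl]
    rw [Module.card_eq_pow_finrank (K := F), hrank W hW]
  have hdisj : ∀ U ∈ S, ∀ V ∈ S, U ≠ V → Disjoint (T U) (T V) := by
    intro U hU V hV hne
    rw [Finset.disjoint_left]
    intro v hvU hvV
    rw [hT] at hvU hvV
    simp only [Finset.mem_erase, Finset.mem_filter, Finset.mem_univ, true_and] at hvU hvV
    have : v ∈ U ⊓ V := Submodule.mem_inf.mpr ⟨hvU.2, hvV.2⟩
    rw [hint U hU V hV hne] at this
    exact hvU.1 (by simpa using this)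
  have hunion : S.biUnion T = Finset.univ.erase 0 := by
    apply Finset.ext
    intro v
    simp only [Finset.mem_biUnion, Finset.mem_erase, Finset.mem_univ, and_true, hT,
      Finset.mem_filter, true_and]
    constructor
    · rintro ⟨U, hU, hv0, hvU⟩; exact hv0
    · intro hv0
      obtain ⟨U, hU, hvU⟩ := hcov v hv0
      exact ⟨U, hU, hv0, hvU⟩
  have hcount : q ^ n - 1 = S.card * (q ^ k - 1) := by
    have h1 : (S.biUnion T).card = ∑ U ∈ S, (T U).card :=
      Finset.card_biUnion (fun U hU V hV hne => hdisj U hU V hV hne)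
    rw [hunion] at h1
    rw [Finset.card_erase_of_mem (Finset.mem_univ _), Finset.card_univ] at h1
    rw [Finset.sum_congr rfl hTcard, Finset.sum_const, smul_eq_mul] at h1
    rw [← h1]
    congr 1
    rw [Fintype.card_fun, Fintype.card_fin]
  exact ⟨S.card, by rw [hcount, mul_comm]⟩

/-- A partial `k`-spread in `𝔽_q^n`: a set of `k`-dimensional subspaces
any two distinct members of which intersect trivially. -/
def IsPartialSpread (F : Type) [Field F] {n : ℕ} (k : ℕ)
    (S : Finset (Submodule F (Fin n → F))) : Prop :=
  (∀ U ∈ S, Module.finrank F U = k) ∧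
  ∀ U ∈ S, ∀ V ∈ S, U ≠ V → U ⊓ V = ⊥

/-- `𝔽_q^n` admits a `k`-spread (a partial `k`-spread covering every nonzero
vector) if and only if `k ∣ n`. -/
theorem spread_exists_iff_dvd (F : Type) [Field F] [Fintype F] (n k : ℕ)
    (hk : 1 ≤ k) (hkn : k ≤ n) :
    (∃ S : Finset (Submodule F (Fin n → F)),
        IsPartialSpread F k S ∧ ∀ v : Fin n → F, v ≠ 0 → ∃ U ∈ S, v ∈ U) ↔
      k ∣ n := by
  constructor
  · rintro ⟨S, ⟨hrank, hint⟩, hcov⟩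
    have hdvd := my_spread_counting F n k hk S hrank hint hcov
    exact my_dvd_of_pow_sub_one_dvd Fintype.one_lt_card (by omega) n hdvd
  · rintro ⟨m, hm⟩
    obtain ⟨K, _, _, _, hfr⟩ := my_exists_ext F k (by omega)
    obtain ⟨S, hS, hcov⟩ := my_spread_construction F n k hk K hfr m hm
    exact ⟨S, hS, hcov⟩
end

section
/- Let q be a prime power and let m, n, d be positive integers with m ≥ d and n ≥ d. If C is a set of m×n matrices over 𝔽_q such that any two distinct elements A, B of C satisfy rank(A − B) ≥ d, then |C| ≤ q^{max(n,m)·(min(n,m) − d + 1)}. Moreover, for all such m, n, d there exists a set C of m×n matrices over 𝔽_q attaining this bound, i.e., with |C| = q^{max(n,m)·(min(n,m) − d + 1)} and rank(A − B) ≥ d for all distinct A, B ∈ C. -/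
open Polynomial Module LinearMap

section LinAlg

variable {F : Type} [Field F]

lemma finrank_le_map_add_ker {V W : Type} [AddCommGroup V] [Module F V]
    [AddCommGroup W] [Module F W] [FiniteDimensional F V] [FiniteDimensional F W]
    (π : V →ₗ[F] W) (p : Submodule F V) :
    finrank F p ≤ finrank F (p.map π) + finrank F (ker π) := by
  have h := LinearMap.finrank_range_add_finrank_ker (π.domRestrict p)
  rw [LinearMap.range_domRestrict] at h
  have h2 : finrank F ((ker (π.domRestrict p)).map p.subtype) ≤ finrank F (ker π) := by
    apply Submodule.finrank_mono
    rintro x ⟨⟨v, hv⟩, hk, rfl⟩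
    simpa [LinearMap.mem_ker] using hk
  have h3 : finrank F (ker (π.domRestrict p)) =
      finrank F ((ker (π.domRestrict p)).map p.subtype) :=
    (Submodule.equivMapOfInjective _ p.injective_subtype _).finrank_eq
  omega

lemma finrank_ker_funLeft {N m : ℕ} (r : Fin m → Fin N) (hr : Function.Injective r) :
    finrank F (ker (LinearMap.funLeft F F r)) = N - m := by
  have hsurj : Function.Surjective (LinearMap.funLeft F F r) :=
    LinearMap.funLeft_surjective_of_injective F F r hr
  have h := LinearMap.finrank_range_add_finrank_ker (LinearMap.funLeft F F r)
  rw [LinearMap.range_eq_top.2 hsurj] at h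
  simp only [finrank_top, Module.finrank_pi, Fintype.card_fin] at h
  omega

lemma rank_le_rank_submatrix_add {N n m : ℕ} (A : Matrix (Fin N) (Fin n) F)
    (r : Fin m → Fin N) (hr : Function.Injective r) :
    A.rank ≤ (A.submatrix r _root_.id).rank + (N - m) := by
  classical
  have hm : (A.submatrix r _root_.id).mulVecLin =
      (LinearMap.funLeft F F r) ∘ₗ A.mulVecLin := by
    have := Matrix.mulVecLin_submatrix r (Equiv.refl (Fin n)) A
    have hid : LinearMap.funLeft F F (_root_.id : Fin n → Fin n) = LinearMap.id :=
      LinearMap.ext fun g => rfl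
    simpa [hid] using this
  rw [Matrix.rank, Matrix.rank, hm, LinearMap.range_comp]
  have := finrank_le_map_add_ker (LinearMap.funLeft F F r) (LinearMap.range A.mulVecLin)
  rw [finrank_ker_funLeft r hr] at this
  omega

lemma rank_le_of_rows_zero {m n k : ℕ} (hk : k ≤ m) (A : Matrix (Fin m) (Fin n) F)
    (h : ∀ i : Fin m, (i : ℕ) < k → ∀ j, A i j = 0) : A.rank ≤ m - k := by
  classical
  have hle : LinearMap.range A.mulVecLin ≤
      ker (LinearMap.funLeft F F (Fin.castLE hk)) := by
    rintro v ⟨x, rfl⟩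
    ext i
    simp only [LinearMap.funLeft_apply, Pi.zero_apply]
    have : ∀ j, A (Fin.castLE hk i) j = 0 := h _ (by simpa using i.isLt)
    simp [Matrix.mulVecLin_apply, Matrix.mulVec, dotProduct, this]
  calc A.rank ≤ finrank F (ker (LinearMap.funLeft F F (Fin.castLE hk))) :=
        Submodule.finrank_mono hle
    _ = m - k := finrank_ker_funLeft _ (Fin.castLE_injective hk)

end LinAlg

open Polynomial Module

noncomputable section

lemma splitting_finrank (F : Type) [Field F] [Fintype F] (N : ℕ) (hN : N ≠ 0) :
    Module.finrank F (SplittingField (X ^ (Fintype.card F) ^ N - X : F[X])) = N := by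
  classical
  set q := Fintype.card F with hqdef
  set g : F[X] := X ^ q ^ N - X with hg
  set K := SplittingField g with hK
  have hq1 : 1 < q := Fintype.one_lt_card
  set p := ringChar F with hpdef
  haveI hcharF : CharP F p := ringChar.charP F
  obtain ⟨f, hp, hqpf⟩ : ∃ f : ℕ+, p.Prime ∧ q = p ^ (f : ℕ) := FiniteField.card F p
  haveI : Fact p.Prime := ⟨hp⟩
  haveI : FiniteDimensional F K := by dsimp only [K]; infer_instance
  haveI : Finite K := Module.finite_of_finite F
  haveI : Fintype K := Fintype.ofFinite K
  haveI : CharP K p := charP_of_injective_algebraMap (algebraMap F K).injective p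
  have aux : g ≠ 0 := FiniteField.X_pow_card_pow_sub_X_ne_zero _ hN hq1
  have hsep : g.Separable := by
    have hdvd : p ∣ q ^ N := dvd_pow (hqpf ▸ dvd_pow_self p f.ne_zero) hN
    exact galois_poly_separable p (q ^ N) hdvd
  have key : Fintype.card (g.rootSet K) = g.natDegree :=
    card_rootSet_eq_natDegree hsep (SplittingField.splits g)
  have ndeg : g.natDegree = q ^ N :=
    FiniteField.X_pow_card_pow_sub_X_natDegree_eq _ hN hq1
  rw [ndeg] at key
  have huniv : g.rootSet K = Set.univ := by
    rw [Set.eq_univ_iff_forall]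
    suffices h : ∀ (x) (_ : x ∈ (⊤ : Subalgebra F K)), x ∈ g.rootSet K by simpa using h
    rw [← SplittingField.adjoin_rootSet]
    simp_rw [Algebra.mem_adjoin_iff]
    intro x hx
    refine Subring.closure_induction ?_ ?_ ?_ ?_ ?_ ?_ hx <;>
      simp_rw [mem_rootSet_of_ne aux]
    · rintro x (⟨r, rfl⟩ | hx)
      · simp only [hg, map_sub, map_pow, aeval_X]
        rw [← map_pow, FiniteField.pow_card_pow, sub_self]
      · rwa [mem_rootSet_of_ne aux] at hx
    · simp [hg, zero_pow (pow_ne_zero N (by omega : q ≠ 0))]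
    · simp [hg]
    · intro x y _ _ hxr hyr
      have hxy : (x + y) ^ q ^ N = x ^ q ^ N + y ^ q ^ N := by
        rw [hqpf, ← pow_mul]
        exact add_pow_char_pow x y p (↑f * N)
      simp only [hg, map_sub, map_pow, aeval_X, sub_eq_zero] at *
      rw [hxy, hxr, hyr]
    · intro x _ hxr
      have hneg : (-x) ^ q ^ N = -(x ^ q ^ N) := by
        rw [hqpf, ← pow_mul, neg_pow, neg_one_pow_char_pow, neg_one_mul]
      simp only [hg, map_sub, map_pow, aeval_X, sub_eq_zero] at *
      rw [hneg, hxr]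
    · intro x y _ _ hxr hyr
      simp only [hg, map_sub, map_pow, aeval_X, sub_eq_zero, mul_pow] at *
      rw [hxr, hyr]
  have cardK : Fintype.card K = q ^ N := by
    rw [← key]
    exact (Fintype.card_congr ((Equiv.setCongr huniv).trans (Equiv.Set.univ K))).symm
  have := card_eq_pow_finrank (K := F) (V := K)
  rw [cardK, hqdef] at this
  exact (Nat.pow_right_injective hq1 this.symm)

lemma exists_MRD (F : Type) [Field F] [Fintype F] {m n d : ℕ} (hd : 0 < d) (hdm : d ≤ m)
    (hmn : m ≤ n) :
    ∃ C : Finset (Matrix (Fin m) (Fin n) F),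
      (∀ A ∈ C, ∀ B ∈ C, A ≠ B → d ≤ (A - B).rank) ∧
      C.card = Fintype.card F ^ (n * (m - d + 1)) := by
  classical
  set q := Fintype.card F with hqdef
  have hq1 : 1 < q := Fintype.one_lt_card
  have hn0 : n ≠ 0 := by omega
  set k := m - d + 1 with hk
  set K := SplittingField (X ^ q ^ n - X : F[X]) with hK
  haveI : FiniteDimensional F K := by dsimp only [K]; infer_instance
  haveI : Finite K := Module.finite_of_finite F
  haveI : Fintype K := Fintype.ofFinite K
  have hrank : finrank F K = n := splitting_finrank F n hn0
  have cardK : Fintype.card K = q ^ n := by rw [card_eq_pow_finrank (K := F) (V := K), hrank]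
  set p := ringChar F with hpdef
  haveI hcharF : CharP F p := ringChar.charP F
  obtain ⟨f, hp, hqpf⟩ : ∃ f : ℕ+, p.Prime ∧ q = p ^ (f : ℕ) := FiniteField.card F p
  haveI : Fact p.Prime := ⟨hp⟩
  haveI : CharP K p := charP_of_injective_algebraMap (algebraMap F K).injective p
  have hfrob_add : ∀ (e : ℕ) (x y : K), (x + y) ^ q ^ e = x ^ q ^ e + y ^ q ^ e := by
    intro e x y
    have hqe : q ^ e = p ^ ((f : ℕ) * e) := by rw [hqpf, ← pow_mul]
    rw [hqe]
    exact add_pow_char_pow x y p ((f : ℕ) * e)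
  have hfrob_smul : ∀ (e : ℕ) (c : F) (x : K), (c • x) ^ q ^ e = c • x ^ q ^ e := by
    intro e c x
    rw [Algebra.smul_def, Algebra.smul_def, mul_pow, ← map_pow, FiniteField.pow_card_pow]
  let L : (Fin k → K) → (K →ₗ[F] K) := fun a =>
    { toFun := fun x => ∑ i : Fin k, a i * x ^ q ^ (i : ℕ)
      map_add' := by
        intro x y
        simp only [hfrob_add, mul_add]
        rw [Finset.sum_add_distrib]
      map_smul' := by
        intro c x
        simp only [hfrob_smul, RingHom.id_apply]
        rw [Finset.smul_sum]
        simp [mul_smul_comm] }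
  have hLsub : ∀ a a' : Fin k → K, L a - L a' = L (a - a') := by
    intro a a'
    ext x
    simp [L, sub_mul, Finset.sum_sub_distrib]
  have hker : ∀ a : Fin k → K, a ≠ 0 → n ≤ finrank F (LinearMap.range (L a)) + (k - 1) := by
    intro a ha
    set P : K[X] := ∑ i : Fin k, Polynomial.C (a i) * Polynomial.X ^ q ^ (i : ℕ) with hP
    obtain ⟨i0, hi0⟩ : ∃ i, a i ≠ 0 := by
      by_contra h; push_neg at h; exact ha (funext h)
    have hcoeff : P.coeff (q ^ (i0 : ℕ)) = a i0 := by
      rw [hP, Polynomial.finset_sum_coeff]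
      rw [Finset.sum_eq_single i0]
      · simp [Polynomial.coeff_C_mul, Polynomial.coeff_X_pow]
      · intro i _ hne
        have : q ^ (i : ℕ) ≠ q ^ (i0 : ℕ) := by
          intro h
          exact hne (Fin.ext (Nat.pow_right_injective hq1 h))
        simp only [Polynomial.coeff_C_mul, Polynomial.coeff_X_pow]
        rw [if_neg (fun h => this h.symm)]
        simp
      · intro h; exact absurd (Finset.mem_univ i0) h
    have hPne : P ≠ 0 := fun h => hi0 (by rw [← hcoeff, h, Polynomial.coeff_zero])
    have hdeg : P.natDegree ≤ q ^ (k - 1) := by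
      apply Polynomial.natDegree_sum_le_of_forall_le
      intro i _
      refine (Polynomial.natDegree_C_mul_le _ _).trans ?_
      rw [Polynomial.natDegree_X_pow]
      exact Nat.pow_le_pow_right (by omega) (by omega)
    have hroot : ∀ x : K, x ∈ LinearMap.ker (L a) → P.IsRoot x := by
      intro x hx
      have hx' : ∑ i : Fin k, a i * x ^ q ^ (i : ℕ) = 0 := hx
      simp only [Polynomial.IsRoot, hP, Polynomial.eval_finset_sum, Polynomial.eval_mul,
        Polynomial.eval_C, Polynomial.eval_pow, Polynomial.eval_X]
      exact hx'
    have hcard : Fintype.card (LinearMap.ker (L a)) ≤ q ^ (k - 1) := by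
      have hsub : (LinearMap.ker (L a) : Set K).toFinset ⊆ P.roots.toFinset := by
        intro x hx
        rw [Set.mem_toFinset] at hx
        rw [Multiset.mem_toFinset, Polynomial.mem_roots hPne]
        exact hroot x hx
      calc Fintype.card (LinearMap.ker (L a))
          = (LinearMap.ker (L a) : Set K).toFinset.card := (Set.toFinset_card _).symm
        _ ≤ P.roots.toFinset.card := Finset.card_le_card hsub
        _ ≤ Multiset.card P.roots := Multiset.toFinset_card_le _
        _ ≤ P.natDegree := Polynomial.card_roots' P
        _ ≤ q ^ (k - 1) := hdeg
    have hkerfr : finrank F (LinearMap.ker (L a)) ≤ k - 1 := by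
      rw [card_eq_pow_finrank (K := F) (V := LinearMap.ker (L a))] at hcard
      exact (Nat.pow_le_pow_iff_right hq1).mp hcard
    have hrn := LinearMap.finrank_range_add_finrank_ker (L a)
    rw [hrank] at hrn
    omega
  let b : Basis (Fin n) F K := (Module.finBasis F K).reindex (finCongr hrank)
  let M : (Fin k → K) → Matrix (Fin m) (Fin n) F := fun a =>
    ((LinearMap.toMatrix b b) (L a)).submatrix (Fin.castLE hmn) _root_.id
  have hMsub : ∀ a a', M a - M a' = M (a - a') := by
    intro a a'
    simp only [M, ← hLsub, map_sub]
    ext i j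
    simp [Matrix.sub_apply]
  have hMrank : ∀ a : Fin k → K, a ≠ 0 → d ≤ (M a).rank := by
    intro a ha
    have h1 : ((LinearMap.toMatrix b b) (L a)).rank = finrank F (LinearMap.range (L a)) := by
      rw [Matrix.rank_eq_finrank_range_toLin _ b b, Matrix.toLin_toMatrix]
    have h2 := rank_le_rank_submatrix_add ((LinearMap.toMatrix b b) (L a)) (Fin.castLE hmn)
      (Fin.castLE_injective hmn)
    have h3 := hker a ha
    rw [h1] at h2
    have : (M a).rank = (((LinearMap.toMatrix b b) (L a)).submatrix (Fin.castLE hmn) _root_.id).rank := rfl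
    omega
  have hMinj : Function.Injective M := by
    intro a a' h
    by_contra hne
    have h0 : a - a' ≠ 0 := sub_ne_zero.mpr hne
    have := hMrank _ h0
    rw [← hMsub, h, sub_self, Matrix.rank_zero] at this
    omega
  refine ⟨Finset.image M Finset.univ, ?_, ?_⟩
  · intro A hA B hB hAB
    simp only [Finset.mem_image, Finset.mem_univ, true_and] at hA hB
    obtain ⟨a, rfl⟩ := hA
    obtain ⟨a', rfl⟩ := hB
    have hne : a ≠ a' := fun h => hAB (by rw [h])
    rw [hMsub]
    exact hMrank _ (sub_ne_zero.mpr hne)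
  · rw [Finset.card_image_of_injective _ hMinj, Finset.card_univ]
    rw [Fintype.card_fun, cardK, Fintype.card_fin, ← pow_mul]

lemma bound_MRD (F : Type) [Field F] [Fintype F] {m n d : ℕ} (hd : 0 < d) (hdm : d ≤ m)
    (hmn : m ≤ n) (C : Finset (Matrix (Fin m) (Fin n) F))
    (hC : ∀ A ∈ C, ∀ B ∈ C, A ≠ B → d ≤ (A - B).rank) :
    C.card ≤ Fintype.card F ^ (n * (m - d + 1)) := by
  classical
  set k := m - d + 1 with hk
  have hkm : k ≤ m := by omega
  have key : C.card ≤ Fintype.card (Fin k → Fin n → F) := by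
    apply Finset.card_le_card_of_injOn
      (fun A => (fun (i : Fin k) (j : Fin n) => A (Fin.castLE hkm i) j))
      (fun a _ => Finset.mem_univ _)
    intro A hA B hB h
    by_contra hne
    have hr := hC A hA B hB hne
    have hzero : ∀ i : Fin m, (i : ℕ) < k → ∀ j, (A - B) i j = 0 := by
      intro i hi j
      have := congrFun (congrFun h ⟨(i : ℕ), hi⟩) j
      simp only at this
      have hcast : Fin.castLE hkm (⟨(i : ℕ), hi⟩ : Fin k) = i := by
        ext; rfl
      rw [hcast] at this
      simp [Matrix.sub_apply, this]
    have := rank_le_of_rows_zero hkm (A - B) hzero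
    omega
  calc C.card ≤ Fintype.card (Fin k → Fin n → F) := key
    _ = Fintype.card F ^ (n * k) := by
        rw [Fintype.card_fun, Fintype.card_fun, Fintype.card_fin, Fintype.card_fin, ← pow_mul]

end

/-- Singleton-type bound for rank-metric codes and existence of MRD codes:
any set of `m × n` matrices over `𝔽_q` with pairwise rank distance at least `d`
has size at most `q^(max n m · (min n m − d + 1))`, and this bound is attained. -/
theorem rank_metric_code_bound_and_MRD (F : Type) [Field F] [Fintype F]
    (q m n d : ℕ) (hq : Fintype.card F = q)
    (hm : 0 < m) (hn : 0 < n) (hd : 0 < d) (hdm : d ≤ m) (hdn : d ≤ n) :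
    (∀ C : Finset (Matrix (Fin m) (Fin n) F),
        (∀ A ∈ C, ∀ B ∈ C, A ≠ B → d ≤ (A - B).rank) →
        C.card ≤ q ^ (max n m * (min n m - d + 1))) ∧
    (∃ C : Finset (Matrix (Fin m) (Fin n) F),
        (∀ A ∈ C, ∀ B ∈ C, A ≠ B → d ≤ (A - B).rank) ∧
        C.card = q ^ (max n m * (min n m - d + 1))) := by
  classical
  subst hq
  rcases le_total m n with hmn | hnm
  · rw [max_eq_left hmn, min_eq_right hmn]
    exact ⟨fun C hC => bound_MRD F hd hdm hmn C hC, exists_MRD F hd hdm hmn⟩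
  · rw [max_eq_right hnm, min_eq_left hnm]
    have htr : ∀ (C : Finset (Matrix (Fin m) (Fin n) F)),
        (∀ A ∈ C, ∀ B ∈ C, A ≠ B → d ≤ (A - B).rank) →
        (∀ A ∈ C.image Matrix.transpose, ∀ B ∈ C.image Matrix.transpose,
          A ≠ B → d ≤ (A - B).rank) := by
      intro C hC A' hA' B' hB' hne
      simp only [Finset.mem_image] at hA' hB'
      obtain ⟨A, hA, rfl⟩ := hA'
      obtain ⟨B, hB, rfl⟩ := hB'
      have hAB : A ≠ B := fun h => hne (by rw [h])
      have : A.transpose - B.transpose = (A - B).transpose := (Matrix.transpose_sub A B).symm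
      rw [this, Matrix.rank_transpose]
      exact hC A hA B hB hAB
    constructor
    · intro C hC
      have hcard : (C.image Matrix.transpose).card = C.card :=
        Finset.card_image_of_injective _ Matrix.transpose_injective
      have := bound_MRD F hd hdn hnm (C.image Matrix.transpose) (htr C hC)
      rwa [hcard] at this
    · obtain ⟨C₀, hC₀, hcard₀⟩ := exists_MRD F hd hdn hnm
      refine ⟨C₀.image Matrix.transpose, ?_, ?_⟩
      · intro A' hA' B' hB' hne
        simp only [Finset.mem_image] at hA' hB'
        obtain ⟨A, hA, rfl⟩ := hA'
        obtain ⟨B, hB, rfl⟩ := hB'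
        have hAB : A ≠ B := fun h => hne (by rw [h])
        have : A.transpose - B.transpose = (A - B).transpose := (Matrix.transpose_sub A B).symm
        rw [this, Matrix.rank_transpose]
        exact hC₀ A hA B hB hAB
      · rw [Finset.card_image_of_injective _ Matrix.transpose_injective, hcard₀]
end

section
/- Let q be a prime power and let k, n, d be positive integers with k ≤ n, d even, and d ≤ 2·min(k, n−k). Then there exists a set C of k-dimensional subspaces of 𝔽_q^n such that any two distinct members U, V of C satisfy d_S(U,V) ≥ d, and |C| = q^{max(k,n−k)·(min(k,n−k) − d/2 + 1)}. -/
open Polynomial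

lemma exists_finite_extension (F : Type) [Field F] [Fintype F] (m : ℕ) (hm : m ≠ 0) :
    ∃ (E : Type) (_ : Field E) (_ : Algebra F E) (_ : Fintype E),
      Module.finrank F E = m := by
  classical
  obtain ⟨p, hchar⟩ := CharP.exists F
  haveI := hchar
  haveI hp : Fact p.Prime := ⟨CharP.char_is_prime F p⟩
  obtain ⟨a, hpp, hcard⟩ := FiniteField.card F p
  have ha : (a : ℕ) ≠ 0 := a.pos.ne'
  set N := (a : ℕ) * m with hN
  have hN0 : N ≠ 0 := Nat.mul_ne_zero ha hm
  have hp1 : 1 < p := hp.out.one_lt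
  set g : F[X] := X ^ p ^ N - X with hg
  let E := g.SplittingField
  haveI : FiniteDimensional F E := inferInstance
  haveI : Finite E := Module.finite_of_finite F
  haveI : Fintype E := Fintype.ofFinite E
  haveI : CharP E p := charP_of_injective_algebraMap (algebraMap F E).injective p
  have aux : g ≠ 0 := FiniteField.X_pow_card_pow_sub_X_ne_zero _ hN0 hp1
  have key : Fintype.card (g.rootSet E) = g.natDegree :=
    card_rootSet_eq_natDegree (galois_poly_separable p _ (dvd_pow_self p hN0))
      (SplittingField.splits g)
  have nat_degree_eq : g.natDegree = p ^ N :=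
    FiniteField.X_pow_card_pow_sub_X_natDegree_eq _ hN0 hp1
  rw [nat_degree_eq] at key
  have huniv : g.rootSet E = Set.univ := by
    rw [Set.eq_univ_iff_forall]
    suffices h : ∀ (x) (_ : x ∈ (⊤ : Subalgebra F E)), x ∈ g.rootSet E by simpa using h
    rw [← SplittingField.adjoin_rootSet]
    simp_rw [Algebra.mem_adjoin_iff]
    intro x hx
    refine Subring.closure_induction ?_ ?_ ?_ ?_ ?_ ?_ hx <;> simp_rw [mem_rootSet_of_ne aux]
    · rintro x (⟨r, rfl⟩ | hx)
      · simp only [g, map_sub, map_pow, aeval_X]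
        rw [← map_pow]
        have : r ^ p ^ N = r := by
          rw [hN, pow_mul, ← hcard]
          exact FiniteField.pow_card_pow m r
        rw [this, sub_self]
      · rwa [mem_rootSet_of_ne aux] at hx
    · rw [← coeff_zero_eq_aeval_zero']
      simp only [g, coeff_X_pow, coeff_X_zero, sub_zero, _root_.map_eq_zero, ite_eq_right_iff,
        one_ne_zero, coeff_sub]
      intro hn
      exact Nat.not_lt_zero 1 (eq_zero_of_pow_eq_zero hn.symm ▸ hp1)
    · simp [g]
    · simp only [g, aeval_X_pow, aeval_X, map_sub, add_pow_char_pow, sub_eq_zero]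
      intro x y _ _ hx hy
      rw [hx, hy]
    · intro x _ hx
      simp only [g, sub_eq_zero, aeval_X_pow, aeval_X, map_sub, sub_neg_eq_add] at *
      rw [neg_pow, hx, neg_one_pow_char_pow]
      ring
    · simp only [g, aeval_X_pow, aeval_X, map_sub, mul_pow, sub_eq_zero]
      intro x y _ _ hx hy
      rw [hx, hy]
  have cardE : Fintype.card E = p ^ N := by
    rw [← key]
    exact (Fintype.card_congr ((Equiv.setCongr huniv).trans (Equiv.Set.univ E))).symm
  have hfr : Fintype.card E = Fintype.card F ^ Module.finrank F E :=
    Module.card_eq_pow_finrank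
  rw [cardE, hcard, ← pow_mul] at hfr
  have := Nat.pow_right_injective hp1 hfr
  refine ⟨E, inferInstance, inferInstance, inferInstance, ?_⟩
  exact (Nat.eq_of_mul_eq_mul_left a.pos (hN ▸ this)).symm

open Polynomial Module in
lemma mrd_exists (F : Type) [Field F] [Fintype F] (t m δ : ℕ)
    (hδ : 0 < δ) (hδt : δ ≤ t) (htm : t ≤ m) :
    ∃ S : Finset ((Fin t → F) →ₗ[F] (Fin m → F)),
      (∀ φ ∈ S, ∀ ψ ∈ S, φ ≠ ψ → δ ≤ Module.finrank F (LinearMap.range (φ - ψ))) ∧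
      S.card = (Fintype.card F) ^ (m * (t - δ + 1)) := by
  classical
  set q := Fintype.card F with hqdef
  have hq2 : 1 < q := Fintype.one_lt_card
  obtain ⟨E, _, _, _, hfr⟩ :=
    exists_finite_extension F m (by omega)
  haveI : FiniteDimensional F E := Module.finite_of_finrank_pos (by omega)
  obtain ⟨p, hchar⟩ := CharP.exists F
  haveI := hchar
  haveI hp : Fact p.Prime := ⟨CharP.char_is_prime F p⟩
  obtain ⟨a, hpp, hcard⟩ := FiniteField.card F p
  haveI : CharP E p := charP_of_injective_algebraMap (algebraMap F E).injective p
  -- the q-power Frobenius maps, as F-linear maps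
  have hQp : ∀ i : ℕ, q ^ i = p ^ ((a : ℕ) * i) := by
    intro i; rw [hqdef, hcard, ← pow_mul]
  let τ : ℕ → (E →ₗ[F] E) := fun i =>
    { toFun := fun x => x ^ q ^ i
      map_add' := fun x y => by rw [hQp i]; exact add_pow_char_pow (R := E) (p := p) x y _
      map_smul' := fun c x => by
        simp only [RingHom.id_apply, Algebra.smul_def, mul_pow, ← map_pow]
        rw [hqdef, FiniteField.pow_card_pow] }
  set s := t - δ + 1 with hs
  have hs1 : 1 ≤ s := by omega
  have hst : s ≤ t := by omega
  -- the linearized polynomials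
  let L : (Fin s → E) → (E →ₗ[F] E) := fun c => ∑ i : Fin s, c i • τ (i : ℕ)
  have hLapp : ∀ c x, L c x = ∑ i : Fin s, c i * x ^ q ^ (i : ℕ) := by
    intro c x
    simp [L, LinearMap.sum_apply, LinearMap.smul_apply, smul_eq_mul, τ]
  -- kernel dimension bound
  have hker : ∀ c : Fin s → E, c ≠ 0 → finrank F (LinearMap.ker (L c)) ≤ t - δ := by
    intro c hc
    set P : E[X] := ∑ i : Fin s, C (c i) * X ^ q ^ (i : ℕ) with hP
    obtain ⟨i0, hi0⟩ : ∃ i, c i ≠ 0 := by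
      by_contra h; push_neg at h; exact hc (funext h)
    have hPcoeff : P.coeff (q ^ (i0 : ℕ)) = c i0 := by
      rw [hP, finset_sum_coeff]
      rw [Finset.sum_eq_single i0]
      · simp [coeff_C_mul, coeff_X_pow]
      · intro i _ hii0
        have h2 : q ^ (i0 : ℕ) ≠ q ^ (i : ℕ) := fun h =>
          hii0 (Fin.ext (Nat.pow_right_injective hq2 h.symm))
        simp [coeff_C_mul, coeff_X_pow, h2]
      · intro h; exact absurd (Finset.mem_univ i0) h
    have hP0 : P ≠ 0 := fun h => hi0 (by rw [← hPcoeff, h, coeff_zero])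
    have hPdeg : P.natDegree ≤ q ^ (s - 1) := by
      refine natDegree_sum_le_of_forall_le _ _ fun i _ => ?_
      refine (natDegree_C_mul_X_pow_le _ _).trans ?_
      exact Nat.pow_le_pow_right (by omega) (by omega)
    have hroot : ∀ x ∈ LinearMap.ker (L c), P.IsRoot x := by
      intro x hx
      have := (LinearMap.mem_ker.mp hx)
      rw [hLapp] at this
      simp only [IsRoot, hP, eval_finset_sum, eval_mul, eval_C, eval_pow, eval_X]
      exact this
    -- cardinality comparison
    have hsub : (LinearMap.ker (L c) : Set E).toFinset ⊆ P.roots.toFinset := by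
      intro x hx
      rw [Set.mem_toFinset] at hx
      rw [Multiset.mem_toFinset, mem_roots hP0]
      exact hroot x hx
    have hcard1 : Fintype.card (LinearMap.ker (L c)) ≤ q ^ (s - 1) := by
      calc Fintype.card (LinearMap.ker (L c))
          = (LinearMap.ker (L c) : Set E).toFinset.card := by
            rw [Set.toFinset_card]; rfl
        _ ≤ P.roots.toFinset.card := Finset.card_le_card hsub
        _ ≤ Multiset.card P.roots := Multiset.toFinset_card_le _
        _ ≤ P.natDegree := card_roots' P
        _ ≤ q ^ (s - 1) := hPdeg
    have hcard2 : Fintype.card (LinearMap.ker (L c))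
        = q ^ finrank F (LinearMap.ker (L c)) := card_eq_pow_finrank
    rw [hcard2] at hcard1
    have := (Nat.pow_le_pow_iff_right hq2).mp hcard1
    omega
  -- the evaluation points
  have hfr' : finrank F E = m := hfr
  let b : Basis (Fin m) F E := Module.finBasisOfFinrankEq F E hfr'
  let gv : Fin t → F → E := fun j _ => b (Fin.castLE htm j)  -- dummy
  let g : Fin t → E := fun j => b (Fin.castLE htm j)
  have hg_li : LinearIndependent F g :=
    b.linearIndependent.comp _ (Fin.castLE_injective htm)
  let ι : (Fin t → F) →ₗ[F] E :=
    { toFun := fun x => ∑ j, x j • g j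
      map_add' := fun x y => by simp [add_smul, Finset.sum_add_distrib]
      map_smul' := fun r x => by simp [Finset.smul_sum, smul_smul] }
  have hι_inj : Function.Injective ι := by
    rw [← LinearMap.ker_eq_bot]
    rw [LinearMap.ker_eq_bot']
    intro x hx
    have := Fintype.linearIndependent_iff.mp hg_li x hx
    funext j; exact this j
  -- the codewords
  let e := b.equivFun
  let cw : (Fin s → E) → ((Fin t → F) →ₗ[F] (Fin m → F)) := fun c =>
    (e.toLinearMap.comp (L c)).comp ι
  have hranklb : ∀ c : Fin s → E, c ≠ 0 → δ ≤ finrank F (LinearMap.range (cw c)) := by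
    intro c hc
    set ψ : (Fin t → F) →ₗ[F] E := (L c).comp ι with hψ
    have hr1 : LinearMap.range (cw c) = Submodule.map e.toLinearMap (LinearMap.range ψ) := by
      simp [cw, ψ, LinearMap.range_comp, LinearMap.comp_assoc]
    have hr2 : finrank F (LinearMap.range (cw c)) = finrank F (LinearMap.range ψ) := by
      rw [hr1]; exact LinearEquiv.finrank_map_eq e _
    have hkerψ : finrank F (LinearMap.ker ψ) ≤ t - δ := by
      have hmap : Submodule.map ι (LinearMap.ker ψ) ≤ LinearMap.ker (L c) := by
        rw [hψ, LinearMap.ker_comp]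
        exact Submodule.map_comap_le _ _
      have heq : finrank F (LinearMap.ker ψ)
          = finrank F (Submodule.map ι (LinearMap.ker ψ)) :=
        (Submodule.equivMapOfInjective ι hι_inj _).finrank_eq
      rw [heq]
      exact (Submodule.finrank_mono hmap).trans (hker c hc)
    have hrn : finrank F (LinearMap.range ψ) + finrank F (LinearMap.ker ψ)
        = finrank F (Fin t → F) := LinearMap.finrank_range_add_finrank_ker ψ
    rw [Module.finrank_pi, Fintype.card_fin] at hrn
    omega
  have hcw_sub : ∀ c c' : Fin s → E, cw c - cw c' = cw (c - c') := by
    intro c c'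
    have hL : L c - L c' = L (c - c') := by
      simp [L, sub_smul, Finset.sum_sub_distrib]
      rw [← Finset.sum_sub_distrib]; exact Finset.sum_congr rfl fun i _ => (sub_smul _ _ _).symm
    simp only [cw, ← hL]
    ext x
    simp
  have hcw_inj : Function.Injective cw := by
    intro c c' h
    by_contra hne
    have hc : c - c' ≠ 0 := sub_ne_zero.mpr hne
    have := hranklb _ hc
    rw [← hcw_sub, h, sub_self, LinearMap.range_zero] at this
    rw [finrank_bot F (Fin m → F)] at this
    omega
  refine ⟨Finset.image cw Finset.univ, ?_, ?_⟩
  · intro φ hφ ψ' hψ' hne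
    simp only [Finset.mem_image, Finset.mem_univ, true_and] at hφ hψ'
    obtain ⟨cφ, rfl⟩ := hφ
    obtain ⟨cψ, rfl⟩ := hψ'
    have hc : cφ - cψ ≠ 0 := sub_ne_zero.mpr (fun h => hne (by rw [h]))
    rw [hcw_sub]
    exact hranklb _ hc
  · rw [Finset.card_image_of_injective _ hcw_inj, Finset.card_univ]
    have hcE : Fintype.card E = q ^ m := by
      rw [card_eq_pow_finrank (K := F) (V := E), hfr']
    rw [Fintype.card_pi]
    simp only [hcE, Finset.prod_const, Finset.card_univ, Fintype.card_fin]
    rw [← pow_mul]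

open Module Matrix in
lemma mrd_exists' (F : Type) [Field F] [Fintype F] (k l δ : ℕ)
    (hδ : 0 < δ) (hδt : δ ≤ min k l) (hkl : 0 < k) (hl : 0 < l) :
    ∃ S : Finset ((Fin k → F) →ₗ[F] (Fin l → F)),
      (∀ φ ∈ S, ∀ ψ ∈ S, φ ≠ ψ → δ ≤ Module.finrank F (LinearMap.range (φ - ψ))) ∧
      S.card = (Fintype.card F) ^ (max k l * (min k l - δ + 1)) := by
  classical
  rcases le_or_gt k l with hkl' | hkl'
  · obtain ⟨S, h1, h2⟩ := mrd_exists F k l δ hδ (by omega) hkl'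
    exact ⟨S, h1, by rw [h2, min_eq_left hkl', max_eq_right hkl']⟩
  · obtain ⟨S0, h1, h2⟩ := mrd_exists F l k δ hδ (by omega) hkl'.le
    let ρ : ((Fin l → F) →ₗ[F] (Fin k → F)) → ((Fin k → F) →ₗ[F] (Fin l → F)) :=
      fun ψ => Matrix.toLin' (LinearMap.toMatrix' ψ)ᵀ
    have hρ_inj : Function.Injective ρ := by
      intro φ ψ h
      have := Matrix.toLin'.injective h
      have := congrArg Matrix.transpose this
      simp only [Matrix.transpose_transpose] at this
      exact LinearMap.toMatrix'.injective this
    have hρ_sub : ∀ φ ψ, ρ φ - ρ ψ = ρ (φ - ψ) := by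
      intro φ ψ
      simp only [ρ, ← map_sub, ← Matrix.transpose_sub]
    have hρ_rank : ∀ φ, Module.finrank F (LinearMap.range (ρ φ))
        = Module.finrank F (LinearMap.range φ) := by
      intro φ
      have h1' : LinearMap.range (ρ φ) = LinearMap.range ((LinearMap.toMatrix' φ)ᵀ).mulVecLin := by
        simp [ρ, Matrix.toLin'_apply']
      have h2' : Module.finrank F (LinearMap.range ((LinearMap.toMatrix' φ)ᵀ).mulVecLin)
          = Matrix.rank (LinearMap.toMatrix' φ)ᵀ := rfl
      rw [h1', h2', Matrix.rank_transpose]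
      show Module.finrank F (LinearMap.range (LinearMap.toMatrix' φ).mulVecLin) = _
      rw [← Matrix.toLin'_apply', Matrix.toLin'_toMatrix']
    refine ⟨Finset.image ρ S0, ?_, ?_⟩
    · intro φ hφ ψ hψ hne
      simp only [Finset.mem_image] at hφ hψ
      obtain ⟨φ0, hφ0, rfl⟩ := hφ
      obtain ⟨ψ0, hψ0, rfl⟩ := hψ
      rw [hρ_sub, hρ_rank]
      exact h1 φ0 hφ0 ψ0 hψ0 (fun h => hne (by rw [h]))
    · rw [Finset.card_image_of_injective _ hρ_inj, h2,
        max_eq_left hkl'.le, min_eq_right hkl'.le]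

/-- The subspace distance `d_S(U,V) = dim(U + V) − dim(U ∩ V)`. -/
noncomputable def subspaceDist (F : Type) [Field F] {n : ℕ} (U V : Submodule F (Fin n → F)) : ℕ :=
  Module.finrank F ↥(U ⊔ V) - Module.finrank F ↥(U ⊓ V)

open Module

/-- Existence of lifted MRD codes: for `k ≤ n`, `d` even with
`d ≤ 2·min(k, n−k)`, there is a constant dimension code of dimension `k` in
`𝔽_q^n` with minimum subspace distance at least `d` and cardinality
`q^(max(k,n−k)·(min(k,n−k) − d/2 + 1))`. -/
theorem lifted_MRD_exists (F : Type) [Field F] [Fintype F]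
    (q k n d : ℕ) (hq : Fintype.card F = q)
    (hk : 0 < k) (hd : 0 < d) (hn : 0 < n) (hkn : k ≤ n)
    (hdeven : Even d) (hdle : d ≤ 2 * min k (n - k)) :
    ∃ C : Finset (Submodule F (Fin n → F)),
      (∀ U ∈ C, Module.finrank F U = k) ∧
      (∀ U ∈ C, ∀ V ∈ C, U ≠ V → d ≤ subspaceDist F U V) ∧
      C.card = q ^ (max k (n - k) * (min k (n - k) - d / 2 + 1)) := by
  classical
  subst hq
  set δ := d / 2 with hδdef
  obtain ⟨e', he'⟩ := hdeven
  have hd2 : d = 2 * δ := by omega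
  have hδ : 0 < δ := by omega
  have hδt : δ ≤ min k (n - k) := by omega
  have hnk : 0 < n - k := by
    rcases Nat.eq_zero_or_pos (n - k) with h | h
    · exfalso; rw [h] at hδt; simp at hδt; omega
    · exact h
  obtain ⟨S, hSdist, hScard⟩ := mrd_exists' F k (n - k) δ hδ hδt hk hnk
  -- the graph construction
  let Γ : ((Fin k → F) →ₗ[F] (Fin (n - k) → F)) →
      Submodule F ((Fin k → F) × (Fin (n - k) → F)) :=
    fun φ => LinearMap.range (LinearMap.prod (LinearMap.id (R := F) (M := Fin k → F)) φ)
  have hprod_inj : ∀ φ : (Fin k → F) →ₗ[F] (Fin (n - k) → F),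
      Function.Injective (LinearMap.prod (LinearMap.id (R := F) (M := Fin k → F)) φ) := by
    intro φ x y h
    exact congrArg Prod.fst h
  have hΓ_rank : ∀ φ, finrank F (Γ φ) = k := by
    intro φ
    rw [show Γ φ = LinearMap.range (LinearMap.prod LinearMap.id φ) from rfl,
      LinearMap.finrank_range_of_inj (hprod_inj φ), finrank_pi, Fintype.card_fin]
  have hΓ_inj : Function.Injective Γ := by
    intro φ ψ h
    apply LinearMap.ext
    intro x
    have hx : ((x, φ x) : (Fin k → F) × (Fin (n - k) → F)) ∈ Γ ψ := by
      rw [← h]; exact ⟨x, rfl⟩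
    obtain ⟨y, hy⟩ := hx
    have h1 : y = x := congrArg Prod.fst hy
    have h2 : ψ y = φ x := congrArg Prod.snd hy
    exact (h1 ▸ h2).symm
  have hΓ_inf : ∀ φ ψ, Γ φ ⊓ Γ ψ
      = Submodule.map (LinearMap.prod (LinearMap.id (R := F) (M := Fin k → F)) φ)
        (LinearMap.ker (φ - ψ)) := by
    intro φ ψ
    apply le_antisymm
    · intro z hz
      rw [Submodule.mem_inf] at hz
      obtain ⟨⟨x1, hx1⟩, ⟨x2, hx2⟩⟩ := hz
      refine Submodule.mem_map.mpr ⟨x1, ?_, hx1⟩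
      have e1 : x1 = z.1 := congrArg Prod.fst hx1
      have e2 : φ x1 = z.2 := congrArg Prod.snd hx1
      have e3 : x2 = z.1 := congrArg Prod.fst hx2
      have e4 : ψ x2 = z.2 := congrArg Prod.snd hx2
      have hx : (φ - ψ) x1 = 0 := by
        rw [LinearMap.sub_apply, sub_eq_zero, e2, ← e4, e3, e1]
      exact LinearMap.mem_ker.mpr hx
    · intro z hz
      rw [Submodule.mem_map] at hz
      obtain ⟨x, hx, rfl⟩ := hz
      have hpe : φ x = ψ x := by
        have h0 := LinearMap.mem_ker.mp hx
        rwa [LinearMap.sub_apply, sub_eq_zero] at h0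
      refine Submodule.mem_inf.mpr ⟨⟨x, rfl⟩, ⟨x, ?_⟩⟩
      show ((x, ψ x) : (Fin k → F) × (Fin (n - k) → F)) = (x, φ x)
      rw [hpe]
  -- the ambient equivalence
  have hnkk : k + (n - k) = n := by omega
  let eidx : Fin n ≃ (Fin k) ⊕ (Fin (n - k)) :=
    (finCongr hnkk.symm).trans finSumFinEquiv.symm
  let Φ : ((Fin k → F) × (Fin (n - k) → F)) ≃ₗ[F] (Fin n → F) :=
    (LinearEquiv.sumArrowLequivProdArrow (Fin k) (Fin (n - k)) F F).symm.trans
      (LinearEquiv.funCongrLeft F F eidx)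
  have hΦmap_inj : Function.Injective
      (fun U => Submodule.map Φ.toLinearMap U :
        Submodule F ((Fin k → F) × (Fin (n - k) → F)) → Submodule F (Fin n → F)) :=
    Submodule.map_injective_of_injective Φ.injective
  refine ⟨Finset.image (fun φ => Submodule.map Φ.toLinearMap (Γ φ)) S, ?_, ?_, ?_⟩
  · intro U hU
    simp only [Finset.mem_image] at hU
    obtain ⟨φ, _, rfl⟩ := hU
    rw [LinearEquiv.finrank_map_eq Φ (Γ φ)]
    exact hΓ_rank φ
  · intro U hU V hV hUV
    simp only [Finset.mem_image] at hU hV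
    obtain ⟨φ, hφ, rfl⟩ := hU
    obtain ⟨ψ, hψ, rfl⟩ := hV
    have hφψ : φ ≠ ψ := fun h => hUV (by rw [h])
    have hr := hSdist φ hφ ψ hψ hφψ
    set r := finrank F (LinearMap.range (φ - ψ)) with hrdef
    set rk := finrank F (LinearMap.ker (φ - ψ)) with hrkdef
    have hrn : r + rk = k := by
      rw [hrdef, hrkdef]
      rw [LinearMap.finrank_range_add_finrank_ker (φ - ψ), finrank_pi, Fintype.card_fin]
    have hinf_rank : finrank F (Γ φ ⊓ Γ ψ : Submodule F _) = rk := by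
      rw [hΓ_inf φ ψ]
      exact ((LinearMap.ker (φ - ψ)).equivMapOfInjective _ (hprod_inj φ)).finrank_eq.symm
    have hsup_rank : finrank F (Γ φ ⊔ Γ ψ : Submodule F _) + rk = 2 * k := by
      have := Submodule.finrank_sup_add_finrank_inf_eq (Γ φ) (Γ ψ)
      rw [hinf_rank, hΓ_rank φ, hΓ_rank ψ] at this
      omega
    have hmap_sup : Submodule.map Φ.toLinearMap (Γ φ) ⊔ Submodule.map Φ.toLinearMap (Γ ψ)
        = Submodule.map Φ.toLinearMap (Γ φ ⊔ Γ ψ) := (Submodule.map_sup _ _ _).symm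
    have hmap_inf : Submodule.map Φ.toLinearMap (Γ φ) ⊓ Submodule.map Φ.toLinearMap (Γ ψ)
        = Submodule.map Φ.toLinearMap (Γ φ ⊓ Γ ψ) :=
      (Submodule.map_inf Φ.toLinearMap Φ.injective).symm
    rw [subspaceDist, hmap_sup, hmap_inf,
      LinearEquiv.finrank_map_eq Φ (Γ φ ⊔ Γ ψ), LinearEquiv.finrank_map_eq Φ (Γ φ ⊓ Γ ψ),
      hinf_rank]
    omega
  · have hcomp : Function.Injective (fun φ => Submodule.map Φ.toLinearMap (Γ φ)) :=
      fun a b h => hΓ_inj (hΦmap_inj h)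
    rw [Finset.card_image_of_injective S hcomp, hScard]
end

section
/- Let q be a prime power and let k, n be positive integers with n > 2k and n not divisible by k. Then there exists a partial k-spread in 𝔽_q^n of cardinality (q^n − q^{k + (n mod k)} + q^k − 1)/(q^k − 1) = 1 + Σ_{i=1}^{⌊n/k⌋ − 1} q^{n − ik}. -/
open Polynomial Module

lemma exists_finite_ext (F : Type) [Field F] [Fintype F] (d : ℕ) (hd : d ≠ 0) :
    ∃ (K : Type) (_ : Field K) (_ : Algebra F K),
      FiniteDimensional F K ∧ Module.finrank F K = d := by
  classical
  have hq1 : 1 < Fintype.card F := Fintype.one_lt_card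
  obtain ⟨p, hp⟩ := CharP.exists F
  haveI := hp
  have pp : p.Prime := CharP.char_is_prime F p
  haveI : Fact p.Prime := ⟨pp⟩
  obtain ⟨e, _, hcard⟩ := FiniteField.card F p
  set q := Fintype.card F with hqdef
  set g : F[X] := X ^ q ^ d - X with hg
  have hpdvd : p ∣ q ^ d := by
    rw [hcard, ← pow_mul]
    exact dvd_pow_self p (by positivity)
  obtain ⟨m, hm⟩ : ∃ m : ℕ, q ^ d = p ^ m := ⟨(e : ℕ) * d, by rw [hcard, ← pow_mul]⟩
  set K := g.SplittingField with hK
  haveI : FiniteDimensional F K := inferInstanceAs (FiniteDimensional F g.SplittingField)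
  haveI : Finite K := Module.finite_of_finite F
  haveI : Fintype K := Fintype.ofFinite K
  haveI : CharP K p := charP_of_injective_algebraMap (algebraMap F K).injective p
  refine ⟨K, inferInstance, inferInstance, inferInstance, ?_⟩
  have aux : g ≠ 0 := FiniteField.X_pow_card_pow_sub_X_ne_zero F hd hq1
  have sep : g.Separable := galois_poly_separable p (q ^ d) hpdvd
  have key : Fintype.card (g.rootSet K) = g.natDegree :=
    card_rootSet_eq_natDegree sep (SplittingField.splits g)
  have ndeg : g.natDegree = q ^ d :=
    FiniteField.X_pow_card_pow_sub_X_natDegree_eq F hd hq1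
  have huniv : g.rootSet K = Set.univ := by
    rw [Set.eq_univ_iff_forall]
    intro x
    have hx : x ∈ (⊤ : Subalgebra F K) := trivial
    rw [← SplittingField.adjoin_rootSet, Algebra.mem_adjoin_iff] at hx
    have hle : Subring.closure (Set.range (algebraMap F K) ∪ g.rootSet K) ≤
        RingHom.eqLocus (iterateFrobenius K p m) (RingHom.id K) := by
      apply Subring.closure_le.mpr
      rintro y (⟨r, rfl⟩ | hy)
      · show iterateFrobenius K p m (algebraMap F K r) = algebraMap F K r
        rw [iterateFrobenius_def, ← map_pow, ← hm, FiniteField.pow_card_pow]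
      · have := hy
        rw [mem_rootSet_of_ne aux] at this
        show iterateFrobenius K p m y = y
        simp only [hg, map_sub, map_pow, aeval_X, sub_eq_zero] at this
        rw [iterateFrobenius_def, ← hm, this]
    have := hle hx
    have hfix : x ^ q ^ d = x := by
      have : iterateFrobenius K p m x = x := this
      rwa [iterateFrobenius_def, ← hm] at this
    rw [mem_rootSet_of_ne aux]
    simp [hg, hfix]
  rw [ndeg] at key
  have : Fintype.card K = q ^ d := by
    rw [← key]
    exact (Fintype.card_congr ((Equiv.setCongr huniv).trans (Equiv.Set.univ K))).symm
  rw [card_eq_pow_finrank (K := F) (V := K)] at this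
  exact Nat.pow_right_injective hq1 this

lemma spread_aux (F : Type) [Field F] [Fintype F] (k b : ℕ) (hk : 0 < k) (hkb : k ≤ b) :
    ∀ (j : ℕ) (V : Type) [AddCommGroup V] [Module F V] [FiniteDimensional F V],
      Module.finrank F V = k * j + b →
      ∃ S : Finset (Submodule F V),
        (∀ U ∈ S, Module.finrank F U = k) ∧
        (∀ U ∈ S, ∀ U' ∈ S, U ≠ U' → U ⊓ U' = ⊥) ∧
        S.card = 1 + ∑ i ∈ Finset.range j, Fintype.card F ^ (k * i + b) := by
  intro j
  induction j with
  | zero =>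
    intro V _ _ _ hV
    obtain ⟨s, hsc, hsli⟩ := exists_finset_linearIndependent_of_le_finrank
      (show k ≤ finrank F V by omega)
    refine ⟨{Submodule.span F (s : Set V)}, ?_, ?_, by simp⟩
    · intro U hU
      rw [Finset.mem_singleton] at hU
      subst hU
      rw [finrank_span_finset_eq_card hsli, hsc]
    · intro U hU U' hU' hne
      rw [Finset.mem_singleton] at hU hU'
      exact absurd (hU.trans hU'.symm) hne
  | succ j ih =>
    intro V _ _ _ hV
    classical
    set q := Fintype.card F with hqdef
    set d := k * j + b with hd
    have hd0 : d ≠ 0 := by omega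
    -- a k-dimensional subspace W
    obtain ⟨s, hsc, hsli⟩ := exists_finset_linearIndependent_of_le_finrank
      (show k ≤ finrank F V by
        have hm : k * (j + 1) = k * j + k := by ring
        omega)
    set W : Submodule F V := Submodule.span F (s : Set V) with hW
    have hWrank : finrank F W = k := by rw [hW, finrank_span_finset_eq_card hsli, hsc]
    obtain ⟨W', hcompl⟩ := Submodule.exists_isCompl W
    have hW'rank : finrank F W' = d := by
      have h1 := Submodule.finrank_add_eq_of_isCompl hcompl
      have h2 : k * (j + 1) = k * j + k := by ring
      omega
    obtain ⟨K, _, _, _, hKrank⟩ := exists_finite_ext F d hd0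
    haveI : Finite K := Module.finite_of_finite F
    haveI : Fintype K := Fintype.ofFinite K
    obtain ⟨S', hS'rank, hS'int, hS'card⟩ := ih W' hW'rank
    -- the linear equiv and the injection
    have hφ : finrank F K = finrank F W' := by rw [hKrank, hW'rank]
    let φ : K ≃ₗ[F] W' := LinearEquiv.ofFinrankEq K ↥W' hφ
    let eW : ↥W ≃ₗ[F] (Fin k → F) :=
      LinearEquiv.ofFinrankEq ↥W (Fin k → F) (by rw [hWrank, Module.finrank_fin_fun])
    let eK : (Fin d → F) ≃ₗ[F] K :=
      LinearEquiv.ofFinrankEq (Fin d → F) K (by rw [hKrank, Module.finrank_fin_fun])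
    have hkd : k ≤ d := by omega
    let g : Fin d → Fin k := fun i => ⟨min i.1 (k - 1), by omega⟩
    have hgsurj : Function.Surjective g := by
      intro x
      refine ⟨⟨x.1, by omega⟩, ?_⟩
      ext
      simp only [g]
      omega
    let ι : ↥W →ₗ[F] K :=
      eK.toLinearMap ∘ₗ (LinearMap.funLeft F F g) ∘ₗ eW.toLinearMap
    have hι : Function.Injective ι := by
      apply eK.injective.comp
      exact (LinearMap.funLeft_injective_of_surjective F F g hgsurj).comp eW.injective
    -- graph maps
    let L : K → (↥W →ₗ[F] V) := fun α =>
      W.subtype + (W'.subtype ∘ₗ (φ.toLinearMap ∘ₗ ((LinearMap.mulLeft F α) ∘ₗ ι)))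
    have hLapp : ∀ (α : K) (x : ↥W), L α x = (x : V) + ((φ (α * ι x) : W') : V) := by
      intro α x
      simp [L, LinearMap.mulLeft_apply]
    -- uniqueness of decompositions
    have huniq : ∀ (x y : ↥W) (u v : ↥W'),
        (x : V) + (u : V) = (y : V) + (v : V) → x = y ∧ u = v := by
      intro x y u v h
      have hxy : ((x : V) - (y : V)) ∈ W := sub_mem x.2 y.2
      have huv : ((v : V) - (u : V)) ∈ W' := sub_mem v.2 u.2
      have heq : (x : V) - (y : V) = (v : V) - (u : V) := by
        rw [sub_eq_sub_iff_add_eq_add, h]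
        exact add_comm _ _
      have hbot : (x : V) - (y : V) = 0 := by
        have hmem2 : (x : V) - (y : V) ∈ W ⊓ W' := ⟨hxy, heq ▸ huv⟩
        rwa [hcompl.inf_eq_bot, Submodule.mem_bot] at hmem2
      constructor
      · exact Subtype.ext (sub_eq_zero.mp hbot)
      · have : (v : V) - (u : V) = 0 := by rw [← heq]; exact hbot
        exact (Subtype.ext (sub_eq_zero.mp this)).symm
    have hLinj : ∀ α, Function.Injective (L α) := by
      intro α x y h
      rw [hLapp, hLapp] at h
      exact (huniq _ _ _ _ h).1
    have hLrank : ∀ α, finrank F (LinearMap.range (L α)) = k := by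
      intro α
      rw [LinearMap.finrank_range_of_inj (hLinj α), hWrank]
    -- intersections of two graphs
    have hgraphint : ∀ α β : K, α ≠ β →
        LinearMap.range (L α) ⊓ LinearMap.range (L β) = ⊥ := by
      intro α β hne
      rw [eq_bot_iff]
      rintro v ⟨⟨x, hx⟩, ⟨y, hy⟩⟩
      rw [hLapp] at hx hy
      have h := hx.trans hy.symm
      obtain ⟨h1, h2⟩ := huniq _ _ _ _ h
      subst h1
      have h3 : α * ι x = β * ι x := φ.injective h2
      have h4 : ι x = 0 := by
        by_contra h4
        exact hne (mul_right_cancel₀ h4 h3)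
      have h5 : x = 0 := by
        apply hι
        rw [h4, map_zero]
      rw [← hx, h5]
      simp
    -- intersection of a graph with a subspace of W'
    have hmixint : ∀ (α : K) (T : Submodule F ↥W'),
        LinearMap.range (L α) ⊓ Submodule.map W'.subtype T = ⊥ := by
      intro α T
      rw [eq_bot_iff]
      rintro v ⟨⟨x, hx⟩, hv⟩
      have hvW' : v ∈ W' := Submodule.map_subtype_le W' T hv
      rw [hLapp] at hx
      have h : (x : V) + ((φ (α * ι x) : W') : V) = ((0 : ↥W) : V) + ((⟨v, hvW'⟩ : ↥W') : V) := by
        rw [hx]; simp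
      obtain ⟨h1, h2⟩ := huniq _ _ _ _ h
      have hv0 : v = 0 := by
        rw [← hx, h1]
        simp
      rw [hv0]
      simp
    -- injectivity of the graph family
    have hrangeinj : Function.Injective (fun α : K => LinearMap.range (L α)) := by
      intro α β h
      have h' : LinearMap.range (L α) = LinearMap.range (L β) := h
      haveI : Nontrivial ↥W := by
        apply Module.nontrivial_of_finrank_pos (R := F)
        omega
      obtain ⟨x₀, hx₀⟩ := exists_ne (0 : ↥W)
      have hmem : L α x₀ ∈ LinearMap.range (L β) := by
        rw [← h']; exact LinearMap.mem_range_self _ _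
      obtain ⟨y, hy⟩ := hmem
      rw [hLapp, hLapp] at hy
      obtain ⟨h1, h2⟩ := huniq _ _ _ _ hy
      rw [h1] at h2
      have h3 : β * ι x₀ = α * ι x₀ := φ.injective h2
      have h4 : ι x₀ ≠ 0 := fun hh => hx₀ (hι (by rw [hh, map_zero]))
      exact (mul_right_cancel₀ h4 h3).symm
    -- assemble
    set A : Finset (Submodule F V) :=
      Finset.image (fun α : K => LinearMap.range (L α)) Finset.univ with hA
    set B : Finset (Submodule F V) :=
      Finset.image (Submodule.map W'.subtype) S' with hB
    have hmemA : ∀ U, U ∈ A ↔ ∃ α : K, LinearMap.range (L α) = U := by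
      intro U; simp [hA]
    have hmemB : ∀ U, U ∈ B ↔ ∃ T ∈ S', Submodule.map W'.subtype T = U := by
      intro U; simp [hB]
    have hBrank : ∀ U ∈ B, finrank F U = k := by
      intro U hU
      obtain ⟨T, hT, rfl⟩ := (hmemB U).mp hU
      rw [Submodule.finrank_map_subtype_eq]
      exact hS'rank T hT
    have hArank : ∀ U ∈ A, finrank F U = k := by
      intro U hU
      obtain ⟨α, rfl⟩ := (hmemA U).mp hU
      exact hLrank α
    have hdisj : Disjoint A B := by
      rw [Finset.disjoint_left]
      intro U hUA hUB
      obtain ⟨α, rfl⟩ := (hmemA U).mp hUA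
      obtain ⟨T, hT, hTeq⟩ := (hmemB _).mp hUB
      have h0 : LinearMap.range (L α) = ⊥ := by
        have := hmixint α T
        rw [hTeq, inf_idem] at this
        exact this
      have := hLrank α
      rw [h0, finrank_bot] at this
      omega
    refine ⟨A ∪ B, ?_, ?_, ?_⟩
    · intro U hU
      rcases Finset.mem_union.mp hU with h | h
      · exact hArank U h
      · exact hBrank U h
    · intro U hU U' hU' hne
      rcases Finset.mem_union.mp hU with h | h <;> rcases Finset.mem_union.mp hU' with h' | h'
      · obtain ⟨α, rfl⟩ := (hmemA U).mp h
        obtain ⟨β, rfl⟩ := (hmemA U').mp h'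
        exact hgraphint α β (fun hh => hne (by rw [hh]))
      · obtain ⟨α, rfl⟩ := (hmemA U).mp h
        obtain ⟨T, hT, rfl⟩ := (hmemB U').mp h'
        exact hmixint α T
      · obtain ⟨T, hT, rfl⟩ := (hmemB U).mp h
        obtain ⟨α, rfl⟩ := (hmemA U').mp h'
        rw [inf_comm]
        exact hmixint α T
      · obtain ⟨T, hT, rfl⟩ := (hmemB U).mp h
        obtain ⟨T', hT', rfl⟩ := (hmemB U').mp h'
        have hTT' : T ≠ T' := by
          intro hh; exact hne (by rw [hh])
        rw [← Submodule.map_inf _ (Submodule.injective_subtype W'),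
          hS'int T hT T' hT' hTT', Submodule.map_bot]
    · rw [Finset.card_union_of_disjoint hdisj]
      have hAcard : A.card = q ^ d := by
        rw [hA, Finset.card_image_of_injective _ hrangeinj, Finset.card_univ,
          card_eq_pow_finrank (K := F) (V := K), hKrank]
      have hBcard : B.card = S'.card := by
        rw [hB]
        apply Finset.card_image_of_injective
        exact Submodule.map_injective_of_injective (Submodule.injective_subtype W')
      rw [hAcard, hBcard, hS'card, Finset.sum_range_succ]
      ring

/-- For `n > 2k` with `k ∤ n` there is a partial `k`-spread in `𝔽_q^n` of
cardinality `(q^n − q^(k + (n mod k)) + q^k − 1)/(q^k − 1)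
= 1 + Σ_{i=1}^{⌊n/k⌋−1} q^(n − ik)`. -/
theorem partial_spread_construction (F : Type) [Field F] [Fintype F]
    (q k n : ℕ) (hq : Fintype.card F = q)
    (hk : 0 < k) (hn : 2 * k < n) (hndvd : ¬ k ∣ n) :
    (q ^ n - q ^ (k + n % k) + q ^ k - 1) / (q ^ k - 1)
      = 1 + ∑ i ∈ Finset.Icc 1 (n / k - 1), q ^ (n - i * k) ∧
    ∃ S : Finset (Submodule F (Fin n → F)),
      IsPartialSpread F k S ∧
      S.card = (q ^ n - q ^ (k + n % k) + q ^ k - 1) / (q ^ k - 1) := by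
  subst hq
  set q := Fintype.card F with hqdef
  have hq2 : 2 ≤ q := Fintype.one_lt_card
  set r := n % k with hrdef
  set t := n / k with htdef
  have htr : k * t + r = n := Nat.div_add_mod n k
  have hr0 : r ≠ 0 := fun h => hndvd (Nat.dvd_of_mod_eq_zero h)
  have hrk : r < k := Nat.mod_lt n hk
  have ht2 : 2 ≤ t := by
    by_contra hlt
    push_neg at hlt
    have h3 : k * t ≤ k * 1 := Nat.mul_le_mul_left k (by omega)
    have h4 : k * 1 = k := mul_one k
    omega
  set b := k + r with hbdef
  set j := t - 1 with hjdef
  have h5 : k * j + k = k * t := by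
    rw [← Nat.mul_succ]
    congr 1
    omega
  have hnj : n = k * j + b := by omega
  -- geometric series identity
  have hgeom : ∀ m : ℕ, (q ^ k - 1) * (∑ i ∈ Finset.range m, q ^ (k * i + b)) + q ^ b
      = q ^ (k * m + b) := by
    intro m
    induction m with
    | zero => simp
    | succ m ihm =>
      rw [Finset.sum_range_succ, Nat.mul_add]
      have h1 : q ^ (k * (m + 1) + b) = q ^ k * q ^ (k * m + b) := by
        rw [← pow_add]; congr 1; ring
      have h2 : (q ^ k - 1) * q ^ (k * m + b) = q ^ k * q ^ (k * m + b) - q ^ (k * m + b) := by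
        rw [Nat.sub_mul, one_mul]
      have h3 : q ^ (k * m + b) ≤ q ^ k * q ^ (k * m + b) :=
        Nat.le_mul_of_pos_left _ (by positivity)
      omega
  have hqk : 2 ≤ q ^ k := le_trans hq2 (Nat.le_self_pow hk.ne' q)
  set Sg : ℕ := ∑ i ∈ Finset.range j, q ^ (k * i + b) with hSg
  have hE : (q ^ k - 1) * Sg + q ^ b = q ^ n := by
    rw [hSg, hgeom j, ← hnj]
  have hval : q ^ n - q ^ b + q ^ k - 1 = (q ^ k - 1) * (1 + Sg) := by
    have hexp : (q ^ k - 1) * (1 + Sg) = (q ^ k - 1) * 1 + (q ^ k - 1) * Sg := by ring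
    have hb1 : (q ^ k - 1) * 1 = q ^ k - 1 := mul_one _
    omega
  have hdiv : (q ^ n - q ^ b + q ^ k - 1) / (q ^ k - 1) = 1 + Sg := by
    rw [hval, Nat.mul_div_cancel_left _ (by omega)]
  have hre : ∑ i ∈ Finset.Icc 1 j, q ^ (n - i * k) = Sg := by
    rw [hSg]
    refine Finset.sum_nbij' (fun a => t - 1 - a) (fun a => t - 1 - a) ?_ ?_ ?_ ?_ ?_
    · intro a ha
      simp only [Finset.mem_Icc] at ha
      simp only [Finset.mem_range]
      omega
    · intro a ha
      simp only [Finset.mem_range] at ha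
      simp only [Finset.mem_Icc]
      omega
    · intro a ha
      simp only [Finset.mem_Icc] at ha
      omega
    · intro a ha
      simp only [Finset.mem_range] at ha
      omega
    · intro a ha
      simp only [Finset.mem_Icc] at ha
      congr 1
      have hc : a * k = k * a := Nat.mul_comm a k
      have h6 : k * (t - 1 - a) + k * a + k = k * t := by
        rw [← Nat.mul_add, ← Nat.mul_succ]
        congr 1
        omega
      omega
  constructor
  · rw [hdiv, hre]
  · obtain ⟨S, hS1, hS2, hS3⟩ := spread_aux F k b hk (by omega) j (Fin n → F)
      (by rw [Module.finrank_fin_fun]; omega)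
    refine ⟨S, ⟨hS1, hS2⟩, ?_⟩
    rw [hdiv]
    exact hS3
end

section
/- Let q be a prime power and let P be a vector space partition of 𝔽_q^n that contains members of at least two distinct dimensions. Let d₁ be the smallest dimension occurring among the members of P, let n₁ be the number of members of P of dimension d₁, and let d₂ be the second-smallest dimension occurring among the members of P. Then: (i) if q^{d₂−d₁} does not divide n₁ and d₂ < 2d₁, then n₁ ≥ q^{d₁} + 1; (ii) if q^{d₂−d₁} does not divide n₁ and d₂ ≥ 2d₁, then either d₁ divides d₂ and n₁ = (q^{d₂} − 1)/(q^{d₁} − 1), or n₁ > 2q^{d₂−d₁}; (iii) if q^{d₂−d₁} divides n₁ and d₂ < 2d₁, then n₁ ≥ q^{d₂} − q^{d₁} + q^{d₂−d₁}; (iv) if q^{d₂−d₁} divides n₁ and d₂ ≥ 2d₁, then n₁ ≥ q^{d₂}. -/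
set_option maxHeartbeats 1000000
set_option linter.unusedSectionVars false
set_option linter.unusedVariables false

open Module Finset


-- q^a - 1 ∣ q^b - 1 → a ∣ b
lemma aux_dvd_of_pow_sub_one_dvd (q a b : ℕ) (hq : 2 ≤ q) (ha : 1 ≤ a)
    (h : (q ^ a - 1) ∣ (q ^ b - 1)) : a ∣ b := by
  have hqa1 : 1 ≤ q ^ a := Nat.one_le_pow _ _ (by omega)
  have hmod : q ^ a ≡ 1 [MOD q ^ a - 1] := ((Nat.modEq_iff_dvd' (by omega)).mpr dvd_rfl).symm
  have hb : b = a * (b / a) + b % a := (Nat.div_add_mod b a).symm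
  have hpow : q ^ b ≡ q ^ (b % a) [MOD q ^ a - 1] := by
    calc q ^ b = (q ^ a) ^ (b / a) * q ^ (b % a) := by rw [← pow_mul, ← pow_add, ← hb]
    _ ≡ 1 ^ (b / a) * q ^ (b % a) [MOD q ^ a - 1] := (hmod.pow _).mul_right _
    _ = q ^ (b % a) := by ring
  have hqb1 : 1 ≤ q ^ b := Nat.one_le_pow _ _ (by omega)
  have hqr1 : 1 ≤ q ^ (b % a) := Nat.one_le_pow _ _ (by omega)
  have h1 : q ^ b ≡ 1 [MOD q ^ a - 1] := (Nat.modEq_iff_dvd' hqb1).mpr h |>.symm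
  have h2 : q ^ (b % a) ≡ 1 [MOD q ^ a - 1] := (hpow.symm.trans h1)
  have h3 : (q ^ a - 1) ∣ (q ^ (b % a) - 1) := (Nat.modEq_iff_dvd' hqr1).mp h2.symm
  have hlt : q ^ (b % a) - 1 < q ^ a - 1 := by
    have : q ^ (b % a) < q ^ a := Nat.pow_lt_pow_right (by omega) (Nat.mod_lt _ (by omega))
    omega
  have h0 : q ^ (b % a) - 1 = 0 := Nat.eq_zero_of_dvd_of_lt h3 hlt
  have : q ^ (b % a) = 1 := by omega
  have : b % a = 0 := by
    by_contra hr
    have : q ^ (b % a) ≥ q ^ 1 := Nat.pow_le_pow_right (by omega) (by omega)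
    simp [pow_one] at this; omega
  exact Nat.dvd_of_mod_eq_zero this


set_option linter.unusedSectionVars false
open Module Finset

section Geo

variable {F : Type} [Field F] [Fintype F] {n : ℕ}

open scoped Classical in
lemma card_filter_mem (q : ℕ) (hq : Fintype.card F = q) (X : Submodule F (Fin n → F)) :
    (Finset.univ.filter (fun v => v ∈ X)).card = q ^ (Module.finrank F X) := by
  rw [← hq, ← card_eq_pow_finrank (K := F) (V := X)]
  exact (Fintype.card_subtype (fun v => v ∈ X)).symm

open scoped Classical in
lemma card_filter_mem_ne (q : ℕ) (hq : Fintype.card F = q) (X : Submodule F (Fin n → F)) :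
    (Finset.univ.filter (fun v => v ∈ X ∧ v ≠ 0)).card = q ^ (Module.finrank F X) - 1 := by
  have he : Finset.univ.filter (fun v => v ∈ X ∧ v ≠ 0)
      = (Finset.univ.filter (fun v => v ∈ X)).erase 0 := by
    ext v
    simp [Finset.mem_erase, and_comm]
  rw [he, Finset.card_erase_of_mem (by simp [Submodule.zero_mem]), card_filter_mem q hq X]

open scoped Classical in
lemma partition_sum (P : Finset (Submodule F (Fin n → F)))
    (hcover : ∀ v : Fin n → F, v ≠ 0 → ∃! U, U ∈ P ∧ v ∈ U)
    (W : Submodule F (Fin n → F)) :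
    ∑ U ∈ P, (Finset.univ.filter (fun v => v ∈ (U ⊓ W) ∧ v ≠ 0)).card
      = (Finset.univ.filter (fun v => v ∈ W ∧ v ≠ 0)).card := by
  rw [← Finset.card_biUnion]
  · congr 1
    ext v
    simp only [Finset.mem_biUnion, Finset.mem_filter, Finset.mem_univ, true_and,
      Submodule.mem_inf]
    constructor
    · rintro ⟨U, _, ⟨_, hvW⟩, hv0⟩
      exact ⟨hvW, hv0⟩
    · rintro ⟨hvW, hv0⟩
      obtain ⟨U, ⟨hUP, hvU⟩, _⟩ := hcover v hv0
      exact ⟨U, hUP, ⟨hvU, hvW⟩, hv0⟩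
  · intro U hU U' hU' hne
    rw [Function.onFun, Finset.disjoint_left]
    intro v hv hv'
    simp only [Finset.mem_filter, Finset.mem_univ, true_and, Submodule.mem_inf] at hv hv'
    obtain ⟨Z, _, hZuniq⟩ := hcover v hv.2
    exact hne ((hZuniq U ⟨hU, hv.1.1⟩).trans (hZuniq U' ⟨hU', hv'.1.1⟩).symm)

lemma partition_pow_sum (q : ℕ) (hq : Fintype.card F = q)
    (P : Finset (Submodule F (Fin n → F)))
    (hcover : ∀ v : Fin n → F, v ≠ 0 → ∃! U, U ∈ P ∧ v ∈ U)
    (W : Submodule F (Fin n → F)) :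
    ∑ U ∈ P, (q ^ (Module.finrank F ↥(U ⊓ W)) - 1) = q ^ (Module.finrank F W) - 1 := by
  classical
  calc ∑ U ∈ P, (q ^ (Module.finrank F ↥(U ⊓ W)) - 1)
      = ∑ U ∈ P, (Finset.univ.filter (fun v => v ∈ (U ⊓ W) ∧ v ≠ 0)).card :=
        Finset.sum_congr rfl (fun U _ => (card_filter_mem_ne q hq _).symm)
    _ = (Finset.univ.filter (fun v => v ∈ W ∧ v ≠ 0)).card := partition_sum P hcover W
    _ = q ^ (Module.finrank F W) - 1 := card_filter_mem_ne q hq W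

-- rank of kernel of a nonzero functional
lemma ker_hyperplane (φ : Module.Dual F (Fin n → F)) (hφ : φ ≠ 0) :
    Module.finrank F ↥(LinearMap.ker φ) + 1 = n := by
  have hne : ∃ v, φ v ≠ 0 := by
    by_contra hc
    push_neg at hc
    exact hφ (LinearMap.ext fun v => by simp [hc])
  obtain ⟨v, hv⟩ := hne
  have hrange : LinearMap.range φ = ⊤ := by
    rw [Submodule.eq_top_iff']
    intro x
    refine ⟨(x * (φ v)⁻¹) • v, ?_⟩
    rw [map_smul, smul_eq_mul, mul_assoc, inv_mul_cancel₀ hv, mul_one]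
  have h1 := LinearMap.finrank_range_add_finrank_ker φ
  rw [hrange, finrank_top, Module.finrank_self, Module.finrank_fin_fun F] at h1
  omega

lemma inf_hyperplane (U H : Submodule F (Fin n → F))
    (hH : Module.finrank F ↥H + 1 = n) (hUH : ¬ U ≤ H) :
    Module.finrank F ↥(U ⊓ H) + 1 = Module.finrank F ↥U := by
  have hfinV : Module.finrank F (Fin n → F) = n := Module.finrank_fin_fun F
  have hlt : H < U ⊔ H := lt_of_le_of_ne le_sup_right (fun h => hUH (h ▸ le_sup_left))
  have h1 : Module.finrank F ↥H < Module.finrank F ↥(U ⊔ H) :=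
    Submodule.finrank_lt_finrank_of_lt hlt
  have h2 := Submodule.finrank_le (U ⊔ H)
  rw [hfinV] at h2
  have h3 := Submodule.finrank_sup_add_finrank_inf_eq U H
  omega

open scoped Classical in
lemma card_ann (q : ℕ) (hq : Fintype.card F = q)
    (e : (Fin n → F) ≃ₗ[F] Module.Dual F (Fin n → F)) (X : Submodule F (Fin n → F)) :
    (Finset.univ.filter (fun w => X ≤ LinearMap.ker (e w) ∧ w ≠ 0)).card
      = q ^ (n - Module.finrank F X) - 1 := by
  set S : Submodule F (Fin n → F) := X.dualAnnihilator.comap (e : (Fin n → F) →ₗ[F] _) with hS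
  have hmem : ∀ w, (X ≤ LinearMap.ker (e w)) ↔ w ∈ S := by
    intro w
    simp only [hS, Submodule.mem_comap, Submodule.mem_dualAnnihilator, LinearEquiv.coe_coe]
    constructor
    · intro h x hx
      exact LinearMap.mem_ker.mp (h hx)
    · intro h x hx
      exact LinearMap.mem_ker.mpr (h x hx)
  have hfilter : Finset.univ.filter (fun w => X ≤ LinearMap.ker (e w) ∧ w ≠ 0)
      = Finset.univ.filter (fun w => w ∈ S ∧ w ≠ 0) := by
    apply Finset.filter_congr
    intro w _
    rw [hmem w]
  rw [hfilter, card_filter_mem_ne q hq S]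
  congr 2
  -- finrank S = n - finrank X
  have h1 : Module.finrank F ↥S = Module.finrank F ↥(X.dualAnnihilator) := by
    rw [hS, Submodule.comap_equiv_eq_map_symm]
    exact LinearEquiv.finrank_map_eq e.symm _
  have h2 : Module.finrank F ↥(X.dualAnnihilator)
      = Module.finrank F ((Fin n → F) ⧸ X) :=
    (LinearEquiv.finrank_eq (Subspace.quotEquivAnnihilator X)).symm
  have h3 := Submodule.finrank_quotient_add_finrank X
  rw [Module.finrank_fin_fun F] at h3
  omega

end Geo

lemma heden_endgame {ι : Type} (T : Finset ι) (a : ι → ℕ)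
    (q d₁ d₂ n s : ℕ) (hq : 2 ≤ q) (hd₁ : 1 ≤ d₁) (h12 : d₁ < d₂) (hn : d₁ + d₂ ≤ n)
    (hs : 1 ≤ s)
    (hdiv : ∀ w ∈ T, q ^ (d₂ - d₁) ∣ (s - a w))
    (hle : ∀ w ∈ T, a w ≤ s)
    (hM0 : T.card = q ^ n - 1)
    (hM1 : (∑ w ∈ T, a w) = s * (q ^ (n - d₁) - 1))
    (hM2 : (∑ w ∈ T, (a w) ^ 2) = s * (q ^ (n - d₁) - 1) + s * (s - 1) * (q ^ (n - 2 * d₁) - 1)) :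
    (¬ (q ^ (d₂ - d₁) ∣ s) → d₂ < 2 * d₁ → q ^ d₁ + 1 ≤ s) ∧
    (¬ (q ^ (d₂ - d₁) ∣ s) → 2 * d₁ ≤ d₂ →
      (d₁ ∣ d₂ ∧ s = (q ^ d₂ - 1) / (q ^ d₁ - 1)) ∨ 2 * q ^ (d₂ - d₁) < s) ∧
    (q ^ (d₂ - d₁) ∣ s → d₂ < 2 * d₁ → q ^ d₂ - q ^ d₁ + q ^ (d₂ - d₁) ≤ s) ∧
    (q ^ (d₂ - d₁) ∣ s → 2 * d₁ ≤ d₂ → q ^ d₂ ≤ s) := by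
  have hq1 : (1:ℤ) ≤ (q:ℤ) := by exact_mod_cast (by omega : 1 ≤ q)
  -- basic power bounds (ℕ)
  have h1Q : 1 ≤ q ^ d₁ := Nat.one_le_pow _ _ (by omega)
  have h1θ : 1 ≤ q ^ (d₂ - d₁) := Nat.one_le_pow _ _ (by omega)
  have h1B : 1 ≤ q ^ (n - d₁) := Nat.one_le_pow _ _ (by omega)
  have h1A : 1 ≤ q ^ (n - 2 * d₁) := Nat.one_le_pow _ _ (by omega)
  have h1N : 1 ≤ q ^ n := Nat.one_le_pow _ _ (by omega)
  have h1D : 1 ≤ q ^ d₂ := Nat.one_le_pow _ _ (by omega)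
  have h2Q : 2 ≤ q ^ d₁ := le_trans hq (Nat.le_self_pow (by omega) q)
  have h2θ : 2 ≤ q ^ (d₂ - d₁) := le_trans hq (Nat.le_self_pow (by omega) q)
  have hA1 : (1:ℤ) ≤ (q:ℤ) ^ (n - 2 * d₁) := one_le_pow₀ hq1
  have hQ2 : (2:ℤ) ≤ (q:ℤ) ^ d₁ := by exact_mod_cast h2Q
  have hθ2 : (2:ℤ) ≤ (q:ℤ) ^ (d₂ - d₁) := by exact_mod_cast h2θ
  have eB : (q:ℤ) ^ (n - d₁) = (q:ℤ) ^ (n - 2 * d₁) * (q:ℤ) ^ d₁ := by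
    rw [← pow_add]; congr 1; omega
  have eN : (q:ℤ) ^ n = (q:ℤ) ^ (n - 2 * d₁) * (q:ℤ) ^ d₁ * (q:ℤ) ^ d₁ := by
    rw [← pow_add, ← pow_add]; congr 1; omega
  have eD2 : (q:ℤ) ^ d₂ = (q:ℤ) ^ (d₂ - d₁) * (q:ℤ) ^ d₁ := by
    rw [← pow_add]; congr 1; omega
  have eD2n : q ^ d₂ = q ^ (d₂ - d₁) * q ^ d₁ := by
    rw [← pow_add]; congr 1; omega
  -- cast moments to ℤ
  have c0 : (T.card : ℤ) = (q:ℤ) ^ n - 1 := by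
    rw [hM0]; push_cast [h1N]; ring
  have c1 : (∑ w ∈ T, (a w : ℤ)) = (s:ℤ) * ((q:ℤ) ^ (n - d₁) - 1) := by
    rw [← Nat.cast_sum, hM1]; push_cast [h1B]; ring
  have c2 : (∑ w ∈ T, (a w : ℤ) ^ 2)
      = (s:ℤ) * ((q:ℤ) ^ (n - d₁) - 1) + (s:ℤ) * ((s:ℤ) - 1) * ((q:ℤ) ^ (n - 2 * d₁) - 1) := by
    have h' : (∑ w ∈ T, (a w : ℤ) ^ 2) = ((∑ w ∈ T, (a w) ^ 2 : ℕ) : ℤ) := by push_cast; ring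
    rw [h', hM2]; push_cast [h1B, h1A, hs]; ring
  -- the key inequality for the divisible cases
  have hstar : q ^ (d₂ - d₁) ∣ s →
      ((q:ℤ) ^ (d₂ - d₁) - 1) * ((q:ℤ) ^ (n - 2 * d₁) * (q:ℤ) ^ d₁ - 1)
        ≤ ((s:ℤ) - 1) * ((q:ℤ) ^ (n - 2 * d₁) - 1) := by
    intro hdvds
    have hpt : ∀ w ∈ T, (0:ℤ) ≤ (a w : ℤ) ^ 2 - (q:ℤ) ^ (d₂ - d₁) * (a w : ℤ) := by
      intro w hw
      have hda : q ^ (d₂ - d₁) ∣ a w := by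
        have h2 := hdiv w hw
        have h3 : s - (s - a w) = a w := by have := hle w hw; omega
        exact h3 ▸ Nat.dvd_sub hdvds h2
      rcases Nat.eq_zero_or_pos (a w) with h0 | hpos
      · simp [h0]
      · have hθa : q ^ (d₂ - d₁) ≤ a w := Nat.le_of_dvd hpos hda
        have hθa' : (q:ℤ) ^ (d₂ - d₁) ≤ (a w : ℤ) := by exact_mod_cast hθa
        nlinarith [hθa', (by positivity : (0:ℤ) < (q:ℤ) ^ (d₂ - d₁))]
    have hsum : (0:ℤ) ≤ ∑ w ∈ T, ((a w : ℤ) ^ 2 - (q:ℤ) ^ (d₂ - d₁) * (a w : ℤ)) :=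
      Finset.sum_nonneg hpt
    rw [Finset.sum_sub_distrib, ← Finset.mul_sum, c1, c2, eB] at hsum
    have hspos : (0:ℤ) < (s:ℤ) := by exact_mod_cast hs
    have hX : (s:ℤ) * 0 ≤ (s:ℤ) * (((s:ℤ) - 1) * ((q:ℤ) ^ (n - 2 * d₁) - 1)
        - ((q:ℤ) ^ (d₂ - d₁) - 1) * ((q:ℤ) ^ (n - 2 * d₁) * (q:ℤ) ^ d₁ - 1)) := by
      rw [mul_zero]; linarith [hsum]
    have := le_of_mul_le_mul_left hX hspos
    linarith
  refine ⟨?_, ?_, ?_, ?_⟩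
  · -- case (i)
    intro hndvd _
    by_contra hcon
    push_neg at hcon
    have hsQ : (s:ℤ) ≤ (q:ℤ) ^ d₁ := by exact_mod_cast (by omega : s ≤ q ^ d₁)
    have h1a : ∀ w ∈ T, (1:ℤ) ≤ (a w : ℤ) := by
      intro w hw
      have haw : a w ≠ 0 := by
        intro h0
        exact hndvd (by simpa [h0] using hdiv w hw)
      exact_mod_cast Nat.one_le_iff_ne_zero.mpr haw
    have hsum : (T.card : ℤ) ≤ ∑ w ∈ T, (a w : ℤ) := by
      calc (T.card : ℤ) = ∑ _w ∈ T, (1:ℤ) := by simp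
      _ ≤ _ := Finset.sum_le_sum h1a
    rw [c0, c1, eB, eN] at hsum
    have hAQ2 : (1:ℤ) * 2 ≤ (q:ℤ) ^ (n - 2 * d₁) * (q:ℤ) ^ d₁ :=
      mul_le_mul hA1 hQ2 (by norm_num) (by linarith)
    have := mul_le_mul_of_nonneg_right hsQ
      (by linarith : (0:ℤ) ≤ (q:ℤ) ^ (n - 2 * d₁) * (q:ℤ) ^ d₁ - 1)
    linarith [hsum, this, hQ2]
  · -- case (ii)
    intro hndvd h2d
    by_cases hbig : 2 * q ^ (d₂ - d₁) < s
    · exact Or.inr hbig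
    left
    push_neg at hbig
    by_cases hsθ : s < q ^ (d₂ - d₁)
    · exfalso
      have hall : ∀ w ∈ T, a w = s := by
        intro w hw
        have h0 : s - a w = 0 := Nat.eq_zero_of_dvd_of_lt (hdiv w hw) (by omega)
        have := hle w hw; omega
      have hTs : (∑ w ∈ T, a w) = T.card * s := by
        rw [Finset.sum_congr rfl hall, Finset.sum_const, smul_eq_mul]
      rw [hM1, hM0] at hTs
      have hpowlt : q ^ (n - d₁) < q ^ n := Nat.pow_lt_pow_right (by omega) (by omega)
      have hlt2 : q ^ (n - d₁) - 1 < q ^ n - 1 := by omega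
      have h3 : s * (q ^ (n - d₁) - 1) < s * (q ^ n - 1) :=
        (Nat.mul_lt_mul_left (by omega)).mpr hlt2
      have h4 : (q ^ n - 1) * s = s * (q ^ n - 1) := Nat.mul_comm _ _
      omega
    push_neg at hsθ
    have hslt : s < 2 * q ^ (d₂ - d₁) := by
      rcases Nat.lt_or_ge s (2 * q ^ (d₂ - d₁)) with h | h
      · exact h
      · exfalso
        have hseq : s = 2 * q ^ (d₂ - d₁) := by omega
        exact hndvd ⟨2, by omega⟩
    -- pointwise: s - a w ∈ {0, θ}
    have hpt : ∀ w ∈ T, ((s:ℤ) - a w) * (((s:ℤ) - a w) - (q:ℤ) ^ (d₂ - d₁)) = 0 := by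
      intro w hw
      obtain ⟨k, hk⟩ := hdiv w hw
      have hka : a w ≤ s := hle w hw
      have hk1 : k ≤ 1 := by
        have h5 : q ^ (d₂ - d₁) * k < q ^ (d₂ - d₁) * 2 := by
          have := Nat.sub_le s (a w)
          omega
        exact Nat.lt_succ_iff.mp (Nat.lt_of_mul_lt_mul_left h5)
      have hcast : ((s:ℤ) - a w) = ((s - a w : ℕ) : ℤ) := by omega
      interval_cases k
      · have : s - a w = 0 := by omega
        rw [hcast, this]; simp
      · have : ((s - a w : ℕ) : ℤ) = (q:ℤ) ^ (d₂ - d₁) := by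
          rw [hk]; push_cast; ring
        rw [hcast, this]; ring
    have hsum0 : ∑ w ∈ T, (((s:ℤ) - a w) * (((s:ℤ) - a w) - (q:ℤ) ^ (d₂ - d₁))) = 0 :=
      Finset.sum_eq_zero hpt
    have hexp : ∑ w ∈ T, ((a w : ℤ) ^ 2 - (2 * (s:ℤ) - (q:ℤ) ^ (d₂ - d₁)) * (a w : ℤ)
        + ((s:ℤ) * s - (q:ℤ) ^ (d₂ - d₁) * s)) = 0 := by
      rw [← hsum0]
      exact Finset.sum_congr rfl (fun w _ => by ring)
    rw [Finset.sum_add_distrib, Finset.sum_sub_distrib, ← Finset.mul_sum, Finset.sum_const,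
      nsmul_eq_mul, c0, c1, c2, eB, eN] at hexp
    have hfac : (s:ℤ) * (q:ℤ) ^ (n - 2 * d₁) * ((q:ℤ) ^ d₁ - 1) *
        ((s:ℤ) * ((q:ℤ) ^ d₁ - 1) - ((q:ℤ) ^ (d₂ - d₁) * (q:ℤ) ^ d₁ - 1)) = 0 := by
      linear_combination hexp
    have hppos : (0:ℤ) < (s:ℤ) * (q:ℤ) ^ (n - 2 * d₁) * ((q:ℤ) ^ d₁ - 1) := by
      have hspos : (0:ℤ) < (s:ℤ) := by exact_mod_cast hs
      apply mul_pos (mul_pos hspos (by positivity))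
      linarith
    have hlast : (s:ℤ) * ((q:ℤ) ^ d₁ - 1) = (q:ℤ) ^ (d₂ - d₁) * (q:ℤ) ^ d₁ - 1 := by
      rcases mul_eq_zero.mp hfac with h | h
      · exact absurd h (by linarith)
      · linarith
    have snat : s * (q ^ d₁ - 1) = q ^ d₂ - 1 := by
      have : ((s * (q ^ d₁ - 1) : ℕ) : ℤ) = ((q ^ d₂ - 1 : ℕ) : ℤ) := by
        push_cast [h1Q, h1D]
        rw [eD2]; linarith [hlast]
      exact_mod_cast this
    have hdvdp : (q ^ d₁ - 1) ∣ (q ^ d₂ - 1) := ⟨s, by rw [← snat]; ring⟩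
    have hd1d2 : d₁ ∣ d₂ := aux_dvd_of_pow_sub_one_dvd q d₁ d₂ hq hd₁ hdvdp
    refine ⟨hd1d2, ?_⟩
    exact (Nat.div_eq_of_eq_mul_left (show 0 < q ^ d₁ - 1 by omega)
      snat.symm).symm
  · -- case (iii)
    intro hdvds hlt
    have hkey := hstar hdvds
    by_contra hcon
    push_neg at hcon
    have hYX : q ^ d₁ ≤ q ^ d₂ := Nat.pow_le_pow_right (by omega) (by omega)
    have hlin : s + q ^ d₁ < q ^ d₂ + q ^ (d₂ - d₁) := by omega
    obtain ⟨k, hk⟩ := hdvds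
    have eQm : q ^ d₁ = q ^ (d₂ - d₁) * q ^ (d₁ - (d₂ - d₁)) := by
      rw [← pow_add]; congr 1; omega
    have hmul : q ^ (d₂ - d₁) * (k + q ^ (d₁ - (d₂ - d₁)))
        < q ^ (d₂ - d₁) * (q ^ d₁ + 1) := by
      calc q ^ (d₂ - d₁) * (k + q ^ (d₁ - (d₂ - d₁)))
          = s + q ^ d₁ := by rw [Nat.mul_add, ← hk, ← eQm]
      _ < q ^ d₂ + q ^ (d₂ - d₁) := hlin
      _ = q ^ (d₂ - d₁) * (q ^ d₁ + 1) := by rw [eD2n]; ring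
    have hk2 : k + q ^ (d₁ - (d₂ - d₁)) ≤ q ^ d₁ :=
      Nat.lt_succ_iff.mp (Nat.lt_of_mul_lt_mul_left hmul)
    have hsnat : s + q ^ d₁ ≤ q ^ d₂ := by
      calc s + q ^ d₁ = q ^ (d₂ - d₁) * (k + q ^ (d₁ - (d₂ - d₁))) := by
            rw [Nat.mul_add, ← hk, ← eQm]
      _ ≤ q ^ (d₂ - d₁) * q ^ d₁ := Nat.mul_le_mul_left _ hk2
      _ = q ^ d₂ := eD2n.symm
    have hsle : (s:ℤ) ≤ (q:ℤ) ^ (d₂ - d₁) * (q:ℤ) ^ d₁ - (q:ℤ) ^ d₁ := by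
      have := (Nat.cast_le (α := ℤ)).mpr hsnat
      push_cast at this
      rw [eD2] at this
      linarith
    -- contradiction with hkey
    have e2 : ((s:ℤ) - 1) * ((q:ℤ) ^ (n - 2 * d₁) - 1)
        ≤ ((q:ℤ) ^ (d₂ - d₁) * (q:ℤ) ^ d₁ - (q:ℤ) ^ d₁ - 1) * ((q:ℤ) ^ (n - 2 * d₁) - 1) :=
      mul_le_mul_of_nonneg_right (by linarith) (by linarith)
    have hprod : (1:ℤ) * 1 ≤ ((q:ℤ) ^ (d₂ - d₁) - 1) * ((q:ℤ) ^ d₁ - 1) :=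
      mul_le_mul (by linarith) (by linarith) (by norm_num) (by linarith)
    linarith [hkey, e2, hprod, hA1]
  · -- case (iv)
    intro hdvds h2d
    have hkey := hstar hdvds
    by_contra hcon
    push_neg at hcon
    obtain ⟨k, hk⟩ := hdvds
    have hklt : k < q ^ d₁ := by
      by_contra hk2
      push_neg at hk2
      have : q ^ d₂ ≤ s := by
        calc q ^ d₂ = q ^ (d₂ - d₁) * q ^ d₁ := eD2n
        _ ≤ q ^ (d₂ - d₁) * k := Nat.mul_le_mul_left _ hk2
        _ = s := hk.symm
      omega
    have hsnat : s + q ^ (d₂ - d₁) ≤ q ^ d₂ := by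
      calc s + q ^ (d₂ - d₁) = q ^ (d₂ - d₁) * (k + 1) := by rw [hk]; ring
      _ ≤ q ^ (d₂ - d₁) * q ^ d₁ := Nat.mul_le_mul_left _ (by omega)
      _ = q ^ d₂ := eD2n.symm
    have hsle : (s:ℤ) ≤ (q:ℤ) ^ (d₂ - d₁) * (q:ℤ) ^ d₁ - (q:ℤ) ^ (d₂ - d₁) := by
      have := (Nat.cast_le (α := ℤ)).mpr hsnat
      push_cast at this
      rw [eD2] at this
      linarith
    have hθQ : (q:ℤ) ^ d₁ ≤ (q:ℤ) ^ (d₂ - d₁) := by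
      exact_mod_cast Nat.pow_le_pow_right (by omega) (by omega)
    have e2 : ((s:ℤ) - 1) * ((q:ℤ) ^ (n - 2 * d₁) - 1)
        ≤ ((q:ℤ) ^ (d₂ - d₁) * (q:ℤ) ^ d₁ - (q:ℤ) ^ (d₂ - d₁) - 1) * ((q:ℤ) ^ (n - 2 * d₁) - 1) :=
      mul_le_mul_of_nonneg_right (by linarith) (by linarith)
    have hAtQ : (1:ℤ) * 1 ≤ (q:ℤ) ^ (n - 2 * d₁) * ((q:ℤ) ^ (d₂ - d₁) - (q:ℤ) ^ d₁ + 1) :=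
      mul_le_mul hA1 (by linarith) (by norm_num) (by linarith)
    have hθQ2 : (0:ℤ) ≤ (q:ℤ) ^ (d₂ - d₁) * ((q:ℤ) ^ d₁ - 2) :=
      mul_nonneg (by positivity) (by linarith)
    linarith [hkey, e2, hAtQ, hθQ2]

/-- Theorem 1 in [heden2009length] on the length of the tail of a vector space
partition. -/
theorem length_of_tail (F : Type) [Field F] [Fintype F] (q n : ℕ)
    (hq : Fintype.card F = q)
    (P : Finset (Submodule F (Fin n → F)))
    (hbot : ⊥ ∉ P)
    (hcover : ∀ v : Fin n → F, v ≠ 0 → ∃! U, U ∈ P ∧ v ∈ U)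
    (d₁ d₂ n₁ : ℕ)
    (hd₁mem : ∃ U ∈ P, Module.finrank F U = d₁)
    (hd₁min : ∀ U ∈ P, d₁ ≤ Module.finrank F U)
    (hd₂mem : ∃ U ∈ P, Module.finrank F U = d₂)
    (hd₁d₂ : d₁ < d₂)
    (hd₂snd : ∀ U ∈ P, Module.finrank F U = d₁ ∨ d₂ ≤ Module.finrank F U)
    (hn₁ : n₁ = (P.filter (fun (U : Submodule F (Fin n → F)) => Module.finrank F ↥U = d₁)).card) :
    (¬ (q ^ (d₂ - d₁) ∣ n₁) → d₂ < 2 * d₁ → q ^ d₁ + 1 ≤ n₁) ∧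
    (¬ (q ^ (d₂ - d₁) ∣ n₁) → 2 * d₁ ≤ d₂ →
      (d₁ ∣ d₂ ∧ n₁ = (q ^ d₂ - 1) / (q ^ d₁ - 1)) ∨ 2 * q ^ (d₂ - d₁) < n₁) ∧
    (q ^ (d₂ - d₁) ∣ n₁ → d₂ < 2 * d₁ → q ^ d₂ - q ^ d₁ + q ^ (d₂ - d₁) ≤ n₁) ∧
    (q ^ (d₂ - d₁) ∣ n₁ → 2 * d₁ ≤ d₂ → q ^ d₂ ≤ n₁) := by
  classical
  subst hn₁
  obtain ⟨U₁, hU₁P, hU₁d⟩ := hd₁mem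
  obtain ⟨W₂, hW₂P, hW₂d⟩ := hd₂mem
  have hq2 : 2 ≤ q := hq ▸ Fintype.one_lt_card
  have hfinV : Module.finrank F (Fin n → F) = n := Module.finrank_fin_fun F
  -- pairwise trivial intersections
  have hUU' : ∀ U ∈ P, ∀ U' ∈ P, U ≠ U' → U ⊓ U' = ⊥ := by
    intro U hU U' hU' hne
    rw [Submodule.eq_bot_iff]
    intro v hv
    rw [Submodule.mem_inf] at hv
    by_contra hv0
    obtain ⟨Z, _, hZuniq⟩ := hcover v hv0
    exact hne ((hZuniq U ⟨hU, hv.1⟩).trans (hZuniq U' ⟨hU', hv.2⟩).symm)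
  -- d₁ ≥ 1
  have hd₁1 : 1 ≤ d₁ := by
    rcases Nat.eq_zero_or_pos d₁ with h0 | h
    · exfalso
      apply hbot
      have : U₁ = ⊥ := Submodule.finrank_eq_zero.mp (by omega)
      exact this ▸ hU₁P
    · exact h
  -- n ≥ d₁ + d₂
  have hnge : d₁ + d₂ ≤ n := by
    have hne : U₁ ≠ W₂ := fun h => by rw [h, hW₂d] at hU₁d; omega
    have hinf : U₁ ⊓ W₂ = ⊥ := hUU' U₁ hU₁P W₂ hW₂P hne
    have h3 := Submodule.finrank_sup_add_finrank_inf_eq U₁ W₂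
    rw [hinf, finrank_bot, hU₁d, hW₂d] at h3
    have h4 := Submodule.finrank_le (U₁ ⊔ W₂)
    rw [hfinV] at h4
    omega
  set Tail : Finset (Submodule F (Fin n → F)) :=
    P.filter (fun (U : Submodule F (Fin n → F)) => Module.finrank F ↥U = d₁) with hTail
  have hs1 : 1 ≤ Tail.card := Finset.card_pos.mpr ⟨U₁, Finset.mem_filter.mpr ⟨hU₁P, hU₁d⟩⟩
  set e : (Fin n → F) ≃ₗ[F] Module.Dual F (Fin n → F) :=
    (Pi.basisFun F (Fin n)).toDualEquiv with he
  set T : Finset (Fin n → F) := Finset.univ.filter (fun w => w ≠ 0) with hT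
  have hcardV : Fintype.card (Fin n → F) = q ^ n := by
    rw [← hq, card_eq_pow_finrank (K := F) (V := Fin n → F), hfinV]
  -- the tail-count function
  set a : (Fin n → F) → ℕ :=
    fun w => (Tail.filter (fun U => U ≤ LinearMap.ker (e w))).card with ha
  -- counting T
  have hM0 : T.card = q ^ n - 1 := by
    rw [hT, Finset.filter_ne', Finset.card_erase_of_mem (Finset.mem_univ 0),
      Finset.card_univ, hcardV]
  -- generic count of w ∈ T with X ≤ ker (e w)
  have hTfilter : ∀ (X : Submodule F (Fin n → F)),
      (T.filter (fun w => X ≤ LinearMap.ker (e w))).card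
        = q ^ (n - Module.finrank F X) - 1 := by
    intro X
    rw [← card_ann q hq e X]
    congr 1
    rw [hT, Finset.filter_filter]
    apply Finset.filter_congr
    intro w _
    tauto
  -- first moment
  have hM1 : (∑ w ∈ T, a w) = Tail.card * (q ^ (n - d₁) - 1) := by
    calc (∑ w ∈ T, a w)
        = ∑ w ∈ T, ∑ U ∈ Tail, (if U ≤ LinearMap.ker (e w) then 1 else 0) :=
          Finset.sum_congr rfl (fun w _ => Finset.card_filter _ _)
      _ = ∑ U ∈ Tail, ∑ w ∈ T, (if U ≤ LinearMap.ker (e w) then 1 else 0) :=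
          Finset.sum_comm
      _ = ∑ U ∈ Tail, (T.filter (fun w => U ≤ LinearMap.ker (e w))).card :=
          Finset.sum_congr rfl (fun U _ => (Finset.card_filter _ _).symm)
      _ = ∑ U ∈ Tail, (q ^ (n - d₁) - 1) := by
          apply Finset.sum_congr rfl
          intro U hU
          rw [hTfilter U, (Finset.mem_filter.mp hU).2]
      _ = Tail.card * (q ^ (n - d₁) - 1) := by
          rw [Finset.sum_const, smul_eq_mul]
  -- second moment
  have hM2 : (∑ w ∈ T, (a w) ^ 2)
      = Tail.card * (q ^ (n - d₁) - 1)
        + Tail.card * (Tail.card - 1) * (q ^ (n - 2 * d₁) - 1) := by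
    have hsq : ∀ w, (a w) ^ 2 = ∑ U ∈ Tail, ∑ U' ∈ Tail,
        (if U ⊔ U' ≤ LinearMap.ker (e w) then 1 else 0) := by
      intro w
      rw [pow_two]
      simp only [ha]
      rw [Finset.card_filter, Finset.sum_mul_sum]
      apply Finset.sum_congr rfl; intro U _
      apply Finset.sum_congr rfl; intro U' _
      rw [sup_le_iff]
      split_ifs with h1 h2 h3 <;> simp_all
    calc (∑ w ∈ T, (a w) ^ 2)
        = ∑ w ∈ T, ∑ U ∈ Tail, ∑ U' ∈ Tail,
            (if U ⊔ U' ≤ LinearMap.ker (e w) then 1 else 0) :=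
          Finset.sum_congr rfl (fun w _ => hsq w)
      _ = ∑ U ∈ Tail, ∑ U' ∈ Tail, ∑ w ∈ T,
            (if U ⊔ U' ≤ LinearMap.ker (e w) then 1 else 0) := by
          rw [Finset.sum_comm]
          apply Finset.sum_congr rfl
          intro U _
          rw [Finset.sum_comm]
      _ = ∑ U ∈ Tail, ∑ U' ∈ Tail,
            (q ^ (n - Module.finrank F ↥(U ⊔ U')) - 1) := by
          apply Finset.sum_congr rfl; intro U _
          apply Finset.sum_congr rfl; intro U' _
          rw [← hTfilter (U ⊔ U'), Finset.card_filter]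
      _ = ∑ U ∈ Tail, ∑ U' ∈ Tail,
            (if U' = U then (q ^ (n - d₁) - 1) else (q ^ (n - 2 * d₁) - 1)) := by
          apply Finset.sum_congr rfl; intro U hU
          apply Finset.sum_congr rfl; intro U' hU'
          obtain ⟨hUP, hUd⟩ := Finset.mem_filter.mp hU
          obtain ⟨hU'P, hU'd⟩ := Finset.mem_filter.mp hU'
          by_cases hee : U' = U
          · rw [if_pos hee, hee, sup_idem, hUd]
          · rw [if_neg hee]
            have hinf : U ⊓ U' = ⊥ := hUU' U hUP U' hU'P (fun h => hee h.symm)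
            have h3 := Submodule.finrank_sup_add_finrank_inf_eq U U'
            rw [hinf, finrank_bot, hUd, hU'd] at h3
            have : Module.finrank F ↥(U ⊔ U') = 2 * d₁ := by omega
            rw [this]
      _ = ∑ _U ∈ Tail, ((q ^ (n - d₁) - 1) + (Tail.card - 1) * (q ^ (n - 2 * d₁) - 1)) := by
          apply Finset.sum_congr rfl; intro U hU
          rw [← Finset.sum_filter_add_sum_filter_not Tail (fun U' => U' = U)]
          have hfe : Tail.filter (fun U' => U' = U) = {U} := by
            rw [Finset.filter_eq' Tail U, if_pos hU]
          have hs1 : ∑ U' ∈ Tail.filter (fun U' => U' = U),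
              (if U' = U then (q ^ (n - d₁) - 1) else (q ^ (n - 2 * d₁) - 1))
              = (q ^ (n - d₁) - 1) := by
            rw [hfe, Finset.sum_singleton, if_pos rfl]
          have hs2 : ∑ U' ∈ Tail.filter (fun U' => ¬ U' = U),
              (if U' = U then (q ^ (n - d₁) - 1) else (q ^ (n - 2 * d₁) - 1))
              = (Tail.card - 1) * (q ^ (n - 2 * d₁) - 1) := by
            rw [Finset.sum_congr rfl
              (fun U' hU' => if_neg (Finset.mem_filter.mp hU').2)]
            rw [Finset.sum_const, smul_eq_mul]
            congr 1
            have hcc := Finset.card_filter_add_card_filter_not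
              (s := Tail) (p := fun U' => U' = U)
            rw [hfe] at hcc
            simp only [Finset.card_singleton] at hcc
            omega
          rw [hs1, hs2]
      _ = Tail.card * (q ^ (n - d₁) - 1)
            + Tail.card * (Tail.card - 1) * (q ^ (n - 2 * d₁) - 1) := by
          rw [Finset.sum_const, smul_eq_mul]; ring
    -- a w ≤ Tail.card
  have hle : ∀ w ∈ T, a w ≤ Tail.card := fun w _ =>
    Finset.card_le_card (Finset.filter_subset _ _)
  -- divisibility
  have hdiv : ∀ w ∈ T, q ^ (d₂ - d₁) ∣ (Tail.card - a w) := by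
    intro w hw
    have hw0 : w ≠ 0 := (Finset.mem_filter.mp hw).2
    have hφ : e w ≠ 0 := fun h => hw0 (by
      have := (LinearEquiv.map_eq_zero_iff e).mp h
      exact this)
    set H : Submodule F (Fin n → F) := LinearMap.ker (e w) with hH
    have hHrank : Module.finrank F ↥H + 1 = n := ker_hyperplane (e w) hφ
    -- ℕ sums
    have hStop := partition_pow_sum q hq P hcover ⊤
    have hSH := partition_pow_sum q hq P hcover H
    -- cast helper
    have castpow : ∀ k : ℕ, ((q ^ k - 1 : ℕ) : ℤ) = (q : ℤ) ^ k - 1 := by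
      intro k
      have h1 : 1 ≤ q ^ k := Nat.one_le_pow _ _ (by omega)
      rw [Nat.cast_sub h1, Nat.cast_pow, Nat.cast_one]
    have hZtop : ∑ U ∈ P, ((q : ℤ) ^ (Module.finrank F ↥U) - 1) = (q : ℤ) ^ n - 1 := by
      have hc := congrArg (Nat.cast : ℕ → ℤ) hStop
      rw [Nat.cast_sum] at hc
      simp only [castpow] at hc
      rw [finrank_top, hfinV] at hc
      rw [← hc]
      apply Finset.sum_congr rfl
      intro U _
      rw [inf_top_eq U]
    have hZH : ∑ U ∈ P, ((q : ℤ) ^ (Module.finrank F ↥(U ⊓ H)) - 1)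
        = (q : ℤ) ^ (n - 1) - 1 := by
      have hc := congrArg (Nat.cast : ℕ → ℤ) hSH
      rw [Nat.cast_sum] at hc
      simp only [castpow] at hc
      rw [hc]
      congr 2
      omega
    have hsub : ∑ U ∈ P, ((q : ℤ) ^ (Module.finrank F ↥U) - (q : ℤ) ^ (Module.finrank F ↥(U ⊓ H)))
        = (q : ℤ) ^ n - (q : ℤ) ^ (n - 1) := by
      have : ∑ U ∈ P, ((q : ℤ) ^ (Module.finrank F ↥U) - (q : ℤ) ^ (Module.finrank F ↥(U ⊓ H)))
          = (∑ U ∈ P, ((q : ℤ) ^ (Module.finrank F ↥U) - 1))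
            - (∑ U ∈ P, ((q : ℤ) ^ (Module.finrank F ↥(U ⊓ H)) - 1)) := by
        rw [← Finset.sum_sub_distrib]
        apply Finset.sum_congr rfl
        intro U _
        ring
      rw [this, hZtop, hZH]
      ring
    -- split into tail and rest
    have hsplit := Finset.sum_filter_add_sum_filter_not P
      (fun (U : Submodule F (Fin n → F)) => Module.finrank F ↥U = d₁)
      (fun U => ((q : ℤ) ^ (Module.finrank F ↥U) - (q : ℤ) ^ (Module.finrank F ↥(U ⊓ H))))
    -- tail part
    have hTailSum : ∑ U ∈ Tail,
        ((q : ℤ) ^ (Module.finrank F ↥U) - (q : ℤ) ^ (Module.finrank F ↥(U ⊓ H)))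
        = ((Tail.card - a w : ℕ) : ℤ) * ((q : ℤ) ^ d₁ - (q : ℤ) ^ (d₁ - 1)) := by
      rw [← Finset.sum_filter_add_sum_filter_not Tail (fun U => U ≤ H)]
      have h1 : ∑ U ∈ Tail.filter (fun U => U ≤ H),
          ((q : ℤ) ^ (Module.finrank F ↥U) - (q : ℤ) ^ (Module.finrank F ↥(U ⊓ H))) = 0 := by
        apply Finset.sum_eq_zero
        intro U hU
        rw [inf_eq_left.mpr (Finset.mem_filter.mp hU).2]
        ring
      have h2 : ∑ U ∈ Tail.filter (fun U => ¬ U ≤ H),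
          ((q : ℤ) ^ (Module.finrank F ↥U) - (q : ℤ) ^ (Module.finrank F ↥(U ⊓ H)))
          = ((Tail.card - a w : ℕ) : ℤ) * ((q : ℤ) ^ d₁ - (q : ℤ) ^ (d₁ - 1)) := by
        have hterm : ∀ U ∈ Tail.filter (fun U => ¬ U ≤ H),
            ((q : ℤ) ^ (Module.finrank F ↥U) - (q : ℤ) ^ (Module.finrank F ↥(U ⊓ H)))
            = ((q : ℤ) ^ d₁ - (q : ℤ) ^ (d₁ - 1)) := by
          intro U hU
          obtain ⟨hUT, hUH⟩ := Finset.mem_filter.mp hU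
          have hUd := (Finset.mem_filter.mp hUT).2
          have hdc := inf_hyperplane U H hHrank hUH
          rw [hUd] at hdc
          rw [hUd, show Module.finrank F ↥(U ⊓ H) = d₁ - 1 by omega]
        rw [Finset.sum_congr rfl hterm, Finset.sum_const, nsmul_eq_mul]
        congr 2
        have hcc := Finset.card_filter_add_card_filter_not
          (s := Tail) (p := fun U => U ≤ H)
        have haw : (Tail.filter (fun U => U ≤ H)).card = a w := rfl
        omega
      rw [h1, h2, zero_add]
    -- rest part divisibility
    have hRest : ((q : ℤ) ^ (d₂ - 1)) ∣ ∑ U ∈ P.filter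
        (fun (U : Submodule F (Fin n → F)) => ¬ Module.finrank F ↥U = d₁),
        ((q : ℤ) ^ (Module.finrank F ↥U) - (q : ℤ) ^ (Module.finrank F ↥(U ⊓ H))) := by
      apply Finset.dvd_sum
      intro U hU
      obtain ⟨hUP, hUd⟩ := Finset.mem_filter.mp hU
      have hUd2 : d₂ ≤ Module.finrank F ↥U := (hd₂snd U hUP).resolve_left hUd
      by_cases hUH : U ≤ H
      · rw [inf_eq_left.mpr hUH, sub_self]
        exact dvd_zero _
      · have hdc := inf_hyperplane U H hHrank hUH
        have hexp : (q : ℤ) ^ (Module.finrank F ↥U) - (q : ℤ) ^ (Module.finrank F ↥(U ⊓ H))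
            = (q : ℤ) ^ (Module.finrank F ↥(U ⊓ H)) * ((q : ℤ) - 1) := by
          rw [← hdc, pow_succ]
          ring
        rw [hexp]
        exact Dvd.dvd.mul_right (pow_dvd_pow (q : ℤ) (by omega)) _
    -- combine
    have hcomb : ((q : ℤ) ^ (d₂ - 1)) ∣ (q : ℤ) ^ n - (q : ℤ) ^ (n - 1)
        - ((Tail.card - a w : ℕ) : ℤ) * ((q : ℤ) ^ d₁ - (q : ℤ) ^ (d₁ - 1)) := by
      have : (q : ℤ) ^ n - (q : ℤ) ^ (n - 1)
          - ((Tail.card - a w : ℕ) : ℤ) * ((q : ℤ) ^ d₁ - (q : ℤ) ^ (d₁ - 1))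
          = ∑ U ∈ P.filter
              (fun (U : Submodule F (Fin n → F)) => ¬ Module.finrank F ↥U = d₁),
              ((q : ℤ) ^ (Module.finrank F ↥U) - (q : ℤ) ^ (Module.finrank F ↥(U ⊓ H))) := by
        rw [← hsub, ← hsplit, ← hTail, hTailSum]
        ring
      rw [this]
      exact hRest
    -- now the pure arithmetic
    set t : ℤ := ((Tail.card - a w : ℕ) : ℤ) with ht
    have e1 : (q : ℤ) ^ n = (q : ℤ) ^ (d₁ - 1) * ((q : ℤ) ^ (d₂ - d₁) * ((q : ℤ) ^ (n - d₂) * (q : ℤ))) := by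
      conv_lhs => rw [show n = (d₁ - 1) + ((d₂ - d₁) + ((n - d₂) + 1)) from by omega]
      rw [pow_add, pow_add, pow_add, pow_one]
    have e2 : (q : ℤ) ^ (n - 1) = (q : ℤ) ^ (d₁ - 1) * ((q : ℤ) ^ (d₂ - d₁) * (q : ℤ) ^ (n - d₂)) := by
      conv_lhs => rw [show n - 1 = (d₁ - 1) + ((d₂ - d₁) + (n - d₂)) from by omega]
      rw [pow_add, pow_add]
    have e3 : (q : ℤ) ^ d₁ = (q : ℤ) ^ (d₁ - 1) * (q : ℤ) := by
      conv_lhs => rw [show d₁ = (d₁ - 1) + 1 from by omega]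
      rw [pow_add, pow_one]
    have e4 : (q : ℤ) ^ (d₂ - 1) = (q : ℤ) ^ (d₁ - 1) * (q : ℤ) ^ (d₂ - d₁) := by
      conv_lhs => rw [show d₂ - 1 = (d₁ - 1) + (d₂ - d₁) from by omega]
      rw [pow_add]
    have hexpr : (q : ℤ) ^ n - (q : ℤ) ^ (n - 1) - t * ((q : ℤ) ^ d₁ - (q : ℤ) ^ (d₁ - 1))
        = (q : ℤ) ^ (d₁ - 1) * (((q : ℤ) - 1) * ((q : ℤ) ^ (d₂ - d₁) * (q : ℤ) ^ (n - d₂) - t)) := by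
      rw [e1, e2, e3]
      ring
    rw [hexpr, e4] at hcomb
    have hq0 : (q : ℤ) ^ (d₁ - 1) ≠ 0 := by positivity
    have hc1 : (q : ℤ) ^ (d₂ - d₁) ∣ ((q : ℤ) - 1) * ((q : ℤ) ^ (d₂ - d₁) * (q : ℤ) ^ (n - d₂) - t) :=
      (mul_dvd_mul_iff_left hq0).mp hcomb
    have hco : IsCoprime ((q : ℤ) ^ (d₂ - d₁)) ((q : ℤ) - 1) :=
      IsCoprime.pow_left ⟨1, -1, by ring⟩
    have hc2 : (q : ℤ) ^ (d₂ - d₁) ∣ ((q : ℤ) ^ (d₂ - d₁) * (q : ℤ) ^ (n - d₂) - t) :=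
      hco.dvd_of_dvd_mul_left hc1
    have hc3 : (q : ℤ) ^ (d₂ - d₁) ∣ t := by
      have hrw : t = (q : ℤ) ^ (d₂ - d₁) * (q : ℤ) ^ (n - d₂)
          - ((q : ℤ) ^ (d₂ - d₁) * (q : ℤ) ^ (n - d₂) - t) := by ring
      rw [hrw]
      exact dvd_sub (Dvd.intro _ rfl) hc2
    have hc4 : ((q ^ (d₂ - d₁) : ℕ) : ℤ) ∣ ((Tail.card - a w : ℕ) : ℤ) := by
      rw [Nat.cast_pow]
      exact hc3
    exact_mod_cast hc4
  exact heden_endgame T a q d₁ d₂ n Tail.card hq2 hd₁1 hd₁d₂ hnge hs1 hdiv hle hM0 hM1 hM2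
end

section
/- Let t ≥ 1 and k ≥ 4 be integers, and set n_k = (2^{kt+2} + 2^k − 5)/(2^k − 1) and n_{k−1} = 2^{kt+2} − 3. Then there is no vector space partition of 𝔽_2^{k(t+1)+1} consisting of exactly n_k subspaces of dimension k, exactly n_{k−1} subspaces of dimension k−1, and exactly 1 + 2^{k−1} subspaces of dimension 1 (and no subspaces of any other dimension). -/
open Finset

attribute [local instance] Classical.propDecidable

private def chi : ZMod 2 → ℤ := fun c => if c = 0 then 1 else -1

private lemma chi_add : ∀ a b : ZMod 2, chi (a + b) = chi a * chi b := by decide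

private lemma chi_add_one : ∀ a : ZMod 2, chi (a + 1) = - chi a := by decide

private def dot {n : ℕ} (w x : Fin n → ZMod 2) : ZMod 2 := ∑ i, w i * x i

private lemma dot_add_right {n : ℕ} (w x y : Fin n → ZMod 2) :
    dot w (x + y) = dot w x + dot w y := by
  simp [dot, mul_add, Finset.sum_add_distrib]

private lemma dot_add_left {n : ℕ} (w w' x : Fin n → ZMod 2) :
    dot (w + w') x = dot w x + dot w' x := by
  simp [dot, add_mul, Finset.sum_add_distrib]

private lemma dot_zero_right {n : ℕ} (w : Fin n → ZMod 2) : dot w 0 = 0 := by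
  simp [dot]

private lemma dot_ne_zero {n : ℕ} {w x : Fin n → ZMod 2} (h : dot w x = 1) : x ≠ 0 := by
  intro h0; rw [h0, dot_zero_right] at h; simp at h

private lemma sum_chi_dot {n : ℕ} (v : Fin n → ZMod 2) :
    ∑ w : Fin n → ZMod 2, chi (dot w v) = if v = 0 then (2 ^ n : ℤ) else 0 := by
  by_cases hv : v = 0
  · subst hv
    simp [dot_zero_right, chi, Finset.card_univ]
  · rw [if_neg hv]
    obtain ⟨i, hi⟩ : ∃ i, v i ≠ 0 := by
      by_contra h; push_neg at h; exact hv (funext h)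
    have hvi : v i = 1 := by
      have : ∀ a : ZMod 2, a ≠ 0 → a = 1 := by decide
      exact this _ hi
    set w₀ : Fin n → ZMod 2 := Pi.single i 1 with hw₀
    have hdw₀ : dot w₀ v = 1 := by
      rw [dot, Finset.sum_eq_single i]
      · rw [hw₀, Pi.single_eq_same, one_mul, hvi]
      · intro j _ hj; rw [hw₀, Pi.single_eq_of_ne hj, zero_mul]
      · intro h; exact absurd (Finset.mem_univ i) h
    have hre : ∑ w : Fin n → ZMod 2, chi (dot (w + w₀) v)
        = ∑ w : Fin n → ZMod 2, chi (dot w v) :=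
      Equiv.sum_comp (Equiv.addRight w₀) (fun w => chi (dot w v))
    have hneg : ∀ w : Fin n → ZMod 2, chi (dot (w + w₀) v) = - chi (dot w v) := by
      intro w; rw [dot_add_left, hdw₀, chi_add_one]
    rw [Finset.sum_congr rfl (fun w _ => hneg w), Finset.sum_neg_distrib] at hre
    linarith

private lemma card_mem_submodule {n : ℕ} (U : Submodule (ZMod 2) (Fin n → ZMod 2)) :
    (univ.filter (fun x => x ∈ U)).card = 2 ^ Module.finrank (ZMod 2) U := by
  classical
  rw [← Fintype.card_subtype]
  have := Module.card_eq_pow_finrank (K := ZMod 2) (V := ↥U)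
  rwa [ZMod.card] at this

private lemma fiber_card {n : ℕ} (U : Submodule (ZMod 2) (Fin n → ZMod 2))
    (w x₀ : Fin n → ZMod 2) (hx₀ : x₀ ∈ U) (h1 : dot w x₀ = 1) :
    (univ.filter (fun x => x ∈ U ∧ dot w x = 1)).card
      = 2 ^ (Module.finrank (ZMod 2) U - 1) := by
  classical
  have hadd : ∀ y : Fin n → ZMod 2, y + y = 0 := by
    intro y; funext i
    have : ∀ a : ZMod 2, a + a = 0 := by decide
    exact this (y i)
  have hdadd : ∀ x : Fin n → ZMod 2, dot w (x + x₀) = dot w x + dot w x₀ :=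
    fun x => dot_add_right w x x₀
  have hAB : (univ.filter (fun x => x ∈ U ∧ dot w x = 0)).card
      = (univ.filter (fun x => x ∈ U ∧ dot w x = 1)).card := by
    apply Finset.card_bij' (fun x _ => x + x₀) (fun x _ => x + x₀)
    · intro x hx
      simp only [mem_filter, mem_univ, true_and] at hx ⊢
      refine ⟨U.add_mem hx.1 hx₀, ?_⟩
      rw [hdadd, hx.2, h1, zero_add]
    · intro x hx
      simp only [mem_filter, mem_univ, true_and] at hx ⊢
      refine ⟨U.add_mem hx.1 hx₀, ?_⟩
      rw [hdadd, hx.2, h1]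
      decide
    · intro x _; rw [add_assoc, hadd, add_zero]
    · intro x _; rw [add_assoc, hadd, add_zero]
  have hsum : (univ.filter (fun x => x ∈ U ∧ dot w x = 1)).card
      + (univ.filter (fun x => x ∈ U ∧ dot w x = 0)).card
      = 2 ^ Module.finrank (ZMod 2) U := by
    rw [← card_mem_submodule U]
    have hne : ∀ a : ZMod 2, ¬ a = 1 ↔ a = 0 := by decide
    have := Finset.card_filter_add_card_filter_not
      (s := univ.filter (fun x => x ∈ U)) (p := fun x => dot w x = 1)
    rw [Finset.filter_filter, Finset.filter_filter] at this
    simp only [hne] at this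
    exact this
  have h2 : 2 * (univ.filter (fun x => x ∈ U ∧ dot w x = 1)).card
      = 2 ^ Module.finrank (ZMod 2) U := by omega
  rcases Nat.eq_zero_or_pos (Module.finrank (ZMod 2) U) with hd | hd
  · rw [hd] at h2; omega
  · have : (2:ℕ) ^ Module.finrank (ZMod 2) U
        = 2 * 2 ^ (Module.finrank (ZMod 2) U - 1) := by
      rw [← pow_succ']; congr 1; omega
    omega

/-- Lemma: for `t ≥ 1` and `k ≥ 4` there is no vector space partition of
`𝔽_2^{k(t+1)+1}` of type `k^{n_k} (k−1)^{n_{k−1}} 1^{1+2^{k−1}}`,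
where `n_k = (2^{kt+2} + 2^k − 5)/(2^k − 1)` and `n_{k−1} = 2^{kt+2} − 3`. -/
theorem no_partition_type_six (t k : ℕ) (ht : 1 ≤ t) (hk : 4 ≤ k)
    (nk nk1 : ℕ)
    (hnk : nk = (2 ^ (k * t + 2) + 2 ^ k - 5) / (2 ^ k - 1))
    (hnk1 : nk1 = 2 ^ (k * t + 2) - 3) :
    ¬ ∃ P : Finset (Submodule (ZMod 2) (Fin (k * (t + 1) + 1) → ZMod 2)),
        (⊥ ∉ P) ∧
        (∀ v : Fin (k * (t + 1) + 1) → ZMod 2, v ≠ 0 → ∃! U, U ∈ P ∧ v ∈ U) ∧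
        (∀ U ∈ P, Module.finrank (ZMod 2) U = k ∨
          Module.finrank (ZMod 2) U = k - 1 ∨ Module.finrank (ZMod 2) U = 1) ∧
        (P.filter (fun (U : Submodule (ZMod 2) (Fin (k * (t + 1) + 1) → ZMod 2)) =>
          Module.finrank (ZMod 2) ↥U = k)).card = nk ∧
        (P.filter (fun (U : Submodule (ZMod 2) (Fin (k * (t + 1) + 1) → ZMod 2)) =>
          Module.finrank (ZMod 2) ↥U = k - 1)).card = nk1 ∧
        (P.filter (fun (U : Submodule (ZMod 2) (Fin (k * (t + 1) + 1) → ZMod 2)) =>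
          Module.finrank (ZMod 2) ↥U = 1)).card = 1 + 2 ^ (k - 1) := by
  rintro ⟨P, hbot, huniq, hdim, hck, hck1, hc1⟩
  classical
  set P₁ := P.filter (fun (U : Submodule (ZMod 2) (Fin (k * (t + 1) + 1) → ZMod 2)) => Module.finrank (ZMod 2) ↥U = 1) with hP₁
  set T : Finset (Fin (k * (t + 1) + 1) → ZMod 2) :=
    univ.filter (fun x => x ≠ 0 ∧ ∃ U ∈ P₁, x ∈ U) with hTdef
  -- the "name" function: each nonzero vector is sent to its unique member
  set f : (Fin (k * (t + 1) + 1) → ZMod 2) →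
      Submodule (ZMod 2) (Fin (k * (t + 1) + 1) → ZMod 2) :=
    fun x => if h : ∃ U ∈ P, x ∈ U then h.choose else ⊥ with hfdef
  have hf : ∀ x : Fin (k * (t + 1) + 1) → ZMod 2, x ≠ 0 → ∀ U ∈ P, x ∈ U → f x = U := by
    intro x hx U hU hxU
    have hex : ∃ U ∈ P, x ∈ U := ⟨U, hU, hxU⟩
    have h1 : f x = hex.choose := by rw [hfdef]; exact dif_pos hex
    obtain ⟨h2, h3⟩ := hex.choose_spec
    rw [h1]
    exact (huniq x hx).unique ⟨h2, h3⟩ ⟨hU, hxU⟩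
  -- splitting a count of vectors according to the member containing them
  have hsplit : ∀ Q : Finset (Submodule (ZMod 2) (Fin (k * (t + 1) + 1) → ZMod 2)),
      Q ⊆ P → ∀ s : Finset (Fin (k * (t + 1) + 1) → ZMod 2),
      (∀ x ∈ s, x ≠ 0) → (∀ x ∈ s, ∃ U ∈ Q, x ∈ U) →
      s.card = ∑ U ∈ Q, (s.filter (fun x => x ∈ U)).card := by
    intro Q hQ s hs0 hsQ
    rw [Finset.card_eq_sum_card_fiberwise (f := f) (t := Q) ?_]
    · apply Finset.sum_congr rfl
      intro U hUQ
      congr 1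
      ext x
      simp only [mem_filter]
      constructor
      · rintro ⟨hxs, hfx⟩
        obtain ⟨U', hU', hxU'⟩ := hsQ x hxs
        have := hf x (hs0 x hxs) U' (hQ hU') hxU'
        rw [this] at hfx
        subst hfx
        exact ⟨hxs, hxU'⟩
      · rintro ⟨hxs, hxU⟩
        exact ⟨hxs, hf x (hs0 x hxs) U (hQ hUQ) hxU⟩
    · intro x hx
      obtain ⟨U, hUQ, hxU⟩ := hsQ x hx
      rw [hf x (hs0 x hx) U (hQ hUQ) hxU]
      exact hUQ
  -- cardinality of the tail
  have hTcard : T.card = 1 + 2 ^ (k - 1) := by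
    have h := hsplit P₁ (Finset.filter_subset _ _) T
      (fun x hx => by rw [hTdef] at hx; exact (Finset.mem_filter.1 hx).2.1)
      (fun x hx => by rw [hTdef] at hx; exact (Finset.mem_filter.1 hx).2.2)
    have hone : ∀ U ∈ P₁, (T.filter (fun x => x ∈ U)).card = 1 := by
      intro U hU
      have hU' := hU
      simp only [hP₁, mem_filter] at hU'
      have h2 : (univ.filter
          (fun x : Fin (k * (t + 1) + 1) → ZMod 2 => x ∈ U)).card = 2 := by
        rw [card_mem_submodule U, hU'.2]; rfl
      have he : T.filter (fun x => x ∈ U)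
          = (univ.filter (fun x : Fin (k * (t + 1) + 1) → ZMod 2 => x ∈ U)).erase 0 := by
        ext x
        simp only [hTdef, Finset.filter_filter, mem_filter, mem_univ, true_and,
          Finset.mem_erase]
        constructor
        · rintro ⟨⟨hx0, -⟩, hxU⟩; exact ⟨hx0, hxU⟩
        · rintro ⟨hx0, hxU⟩; exact ⟨⟨hx0, U, hU, hxU⟩, hxU⟩
      rw [he, Finset.card_erase_of_mem (by simp [U.zero_mem]), h2]
    rw [h, Finset.sum_congr rfl hone, Finset.sum_const, smul_eq_mul, mul_one]
    exact hc1
  -- key divisibility for the tail counts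
  have hkn : k - 2 ≤ k * (t + 1) := by
    have : k ≤ k * (t + 1) := Nat.le_mul_of_pos_right k (by omega)
    omega
  have hdvd : ∀ w : Fin (k * (t + 1) + 1) → ZMod 2,
      2 ^ (k - 2) ∣ (T.filter (fun x => dot w x = 1)).card := by
    intro w
    by_cases hw : ∃ x₀ : Fin (k * (t + 1) + 1) → ZMod 2, dot w x₀ = 1
    · obtain ⟨x₀, hx₀⟩ := hw
      set s : Finset (Fin (k * (t + 1) + 1) → ZMod 2) :=
        univ.filter (fun x => dot w x = 1) with hsdef
      have hs0 : ∀ x ∈ s, x ≠ 0 := by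
        intro x hx
        rw [hsdef] at hx
        exact dot_ne_zero (Finset.mem_filter.1 hx).2
      have hsQ : ∀ x ∈ s, ∃ U ∈ P, x ∈ U := by
        intro x hx
        obtain ⟨U, hU⟩ := (huniq x (hs0 x hx)).exists
        exact ⟨U, hU.1, hU.2⟩
      have hfintop : Module.finrank (ZMod 2)
          (⊤ : Submodule (ZMod 2) (Fin (k * (t + 1) + 1) → ZMod 2)) = k * (t + 1) + 1 := by
        rw [finrank_top, Module.finrank_fintype_fun_eq_card, Fintype.card_fin]
      have hscard : s.card = 2 ^ (k * (t + 1)) := by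
        have he : s = univ.filter
            (fun x => x ∈ (⊤ : Submodule (ZMod 2) (Fin (k * (t + 1) + 1) → ZMod 2))
              ∧ dot w x = 1) := by
          ext x
          simp only [hsdef, mem_filter, mem_univ, true_and, Submodule.mem_top]
        rw [he, fiber_card ⊤ w x₀ trivial hx₀, hfintop]
        congr 1 <;> omega
      have hPsum := hsplit P (Finset.Subset.refl P) s hs0 hsQ
      have hsplitP := Finset.sum_filter_add_sum_filter_not P
        (fun (U : Submodule (ZMod 2) (Fin (k * (t + 1) + 1) → ZMod 2)) =>
          Module.finrank (ZMod 2) ↥U = 1)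
        (fun U => (s.filter (fun x => x ∈ U)).card)
      have hUfilter : ∀ U : Submodule (ZMod 2) (Fin (k * (t + 1) + 1) → ZMod 2),
          s.filter (fun x => x ∈ U) = univ.filter (fun x => x ∈ U ∧ dot w x = 1) := by
        intro U
        ext x
        simp only [hsdef, Finset.filter_filter, mem_filter, mem_univ, true_and]
        tauto
      have hrest : 2 ^ (k - 2) ∣
          ∑ U ∈ P.filter (fun (U : Submodule (ZMod 2) (Fin (k * (t + 1) + 1) → ZMod 2)) =>
              ¬ Module.finrank (ZMod 2) ↥U = 1),
            (s.filter (fun x => x ∈ U)).card := by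
        apply Finset.dvd_sum
        intro U hU
        simp only [mem_filter] at hU
        have hd : Module.finrank (ZMod 2) ↥U = k ∨ Module.finrank (ZMod 2) ↥U = k - 1 := by
          rcases hdim U hU.1 with h | h | h
          · exact Or.inl h
          · exact Or.inr h
          · exact absurd h hU.2
        rw [hUfilter U]
        by_cases hUw : ∃ y ∈ U, dot w y = 1
        · obtain ⟨y, hy, hy1⟩ := hUw
          rw [fiber_card U w y hy hy1]
          exact pow_dvd_pow 2 (by omega)
        · have : univ.filter
              (fun x : Fin (k * (t + 1) + 1) → ZMod 2 => x ∈ U ∧ dot w x = 1) = ∅ := by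
            apply Finset.filter_false_of_mem
            rintro x - ⟨hxU, hx1⟩
            exact hUw ⟨x, hxU, hx1⟩
          rw [this]
          simp
      have htail : ∑ U ∈ P₁, (s.filter (fun x => x ∈ U)).card
          = (T.filter (fun x => dot w x = 1)).card := by
        have hs0' : ∀ x ∈ T.filter (fun x => dot w x = 1), x ≠ 0 := by
          intro x hx
          rw [hTdef] at hx
          simp only [Finset.filter_filter, mem_filter, mem_univ, true_and] at hx
          exact hx.1.1
        have hsQ' : ∀ x ∈ T.filter (fun x => dot w x = 1), ∃ U ∈ P₁, x ∈ U := by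
          intro x hx
          rw [hTdef] at hx
          simp only [Finset.filter_filter, mem_filter, mem_univ, true_and] at hx
          exact hx.1.2
        have h1 := hsplit P₁ (Finset.filter_subset _ _) (T.filter (fun x => dot w x = 1))
          hs0' hsQ'
        rw [h1]
        apply Finset.sum_congr rfl
        intro U hU
        congr 1
        ext x
        simp only [hTdef, Finset.filter_filter, mem_filter, mem_univ, true_and, hsdef]
        constructor
        · rintro ⟨h1', h2'⟩
          exact ⟨⟨⟨dot_ne_zero h1', U, hU, h2'⟩, h1'⟩, h2'⟩
        · rintro ⟨⟨⟨-, -⟩, hdot⟩, hxU⟩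
          exact ⟨hdot, hxU⟩
      have hpow : (2:ℕ) ^ (k - 2) ∣ 2 ^ (k * (t + 1)) := pow_dvd_pow 2 hkn
      rw [← hscard, hPsum, ← hsplitP] at hpow
      rw [← htail]
      rw [add_comm] at hpow
      exact (Nat.dvd_add_right hrest).mp hpow
    · have : T.filter (fun x => dot w x = 1) = ∅ := by
        apply Finset.filter_false_of_mem
        intro x _ h1
        exact hw ⟨x, h1⟩
      rw [this]
      simp
  -- tail counts take only three values
  have h4le : (4:ℕ) ≤ 2 ^ (k - 2) := by
    calc (4:ℕ) = 2 ^ 2 := by norm_num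
    _ ≤ 2 ^ (k - 2) := Nat.pow_le_pow_right (by norm_num) (by omega)
  have hk1 : (2:ℕ) ^ (k - 1) = 2 ^ (k - 2) * 2 := by
    rw [← pow_succ]; congr 1; omega
  have hcc : ∀ w : Fin (k * (t + 1) + 1) → ZMod 2,
      (T.filter (fun x => dot w x = 1)).card = 0 ∨
      (T.filter (fun x => dot w x = 1)).card = 2 ^ (k - 2) ∨
      (T.filter (fun x => dot w x = 1)).card = 2 ^ (k - 1) := by
    intro w
    obtain ⟨m, hm⟩ := hdvd w
    have hle : (T.filter (fun x => dot w x = 1)).card ≤ T.card := Finset.card_filter_le _ _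
    rw [hTcard, hm, hk1] at hle
    rw [hm, hk1]
    have hm2 : m ≤ 2 := by
      by_contra hm3
      have h3 : 2 ^ (k - 2) * 3 ≤ 2 ^ (k - 2) * m :=
        Nat.mul_le_mul_left _ (by omega)
      omega
    interval_cases m
    · left; simp
    · right; left; simp
    · right; right; rfl
  -- the character sums
  set W : (Fin (k * (t + 1) + 1) → ZMod 2) → ℤ :=
    fun w => ∑ x ∈ T, chi (dot w x) with hWdef
  obtain ⟨sInt, hsInt⟩ : ∃ sInt : ℤ, sInt = 2 ^ (k - 1) := ⟨_, rfl⟩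
  have hWc : ∀ w : Fin (k * (t + 1) + 1) → ZMod 2,
      W w = (T.card : ℤ) - 2 * ((T.filter (fun x => dot w x = 1)).card : ℤ) := by
    intro w
    have hsp := Finset.sum_filter_add_sum_filter_not T (fun x => dot w x = 1)
      (fun x => chi (dot w x))
    have h1 : ∑ x ∈ T.filter (fun x => dot w x = 1), chi (dot w x)
        = -(((T.filter (fun x => dot w x = 1)).card : ℤ)) := by
      have hterm : ∀ x ∈ T.filter (fun x => dot w x = 1), chi (dot w x) = -1 := by
        intro x hx
        have := (Finset.mem_filter.1 hx).2
        rw [this]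
        decide
      rw [Finset.sum_congr rfl hterm, Finset.sum_const]
      push_cast
      ring
    have h2 : ∑ x ∈ T.filter (fun x => ¬ dot w x = 1), chi (dot w x)
        = ((T.filter (fun x => ¬ dot w x = 1)).card : ℤ) := by
      have hterm : ∀ x ∈ T.filter (fun x => ¬ dot w x = 1), chi (dot w x) = 1 := by
        intro x hx
        have h3 := (Finset.mem_filter.1 hx).2
        have h4 : dot w x = 0 := by
          have : ∀ a : ZMod 2, ¬ a = 1 → a = 0 := by decide
          exact this _ h3
        rw [h4]
        decide
      rw [Finset.sum_congr rfl hterm, Finset.sum_const]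
      push_cast
      ring
    have h5 := Finset.card_filter_add_card_filter_not
      (s := T) (p := fun x => dot w x = 1)
    rw [h1, h2] at hsp
    rw [hWdef]
    simp only []
    rw [← hsp]
    have h6 : ((T.filter (fun x => ¬ dot w x = 1)).card : ℤ)
        = (T.card : ℤ) - ((T.filter (fun x => dot w x = 1)).card : ℤ) := by
      omega
    rw [h6]
    ring
  have hk1' : (2:ℤ) ^ (k - 1) = 2 ^ (k - 2) * 2 := by
    rw [← pow_succ]; congr 1; omega
  have hWvals : ∀ w : Fin (k * (t + 1) + 1) → ZMod 2,
      W w = 1 + sInt ∨ W w = 1 ∨ W w = 1 - sInt := by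
    intro w
    rcases hcc w with h | h | h <;> rw [hWc w, h, hTcard, hsInt] <;> push_cast
    · left; ring
    · right; left; rw [hk1']; ring
    · right; right; ring
  -- moment computations
  have hcardV : ((univ : Finset (Fin (k * (t + 1) + 1) → ZMod 2)).card : ℤ)
      = 2 ^ (k * (t + 1) + 1) := by
    rw [Finset.card_univ, Fintype.card_fun, ZMod.card, Fintype.card_fin]
    push_cast
    ring
  have hT0 : ∀ x ∈ T, x ≠ (0 : Fin (k * (t + 1) + 1) → ZMod 2) := by
    intro x hx
    rw [hTdef] at hx
    exact (Finset.mem_filter.1 hx).2.1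
  have hS1 : ∑ w : Fin (k * (t + 1) + 1) → ZMod 2, W w = 0 := by
    rw [hWdef]
    simp only []
    rw [Finset.sum_comm]
    have hz : ∀ x ∈ T, ∑ w : Fin (k * (t + 1) + 1) → ZMod 2, chi (dot w x) = 0 := by
      intro x hx
      rw [sum_chi_dot, if_neg (hT0 x hx)]
    rw [Finset.sum_congr rfl hz, Finset.sum_const_zero]
  have hmulW : ∀ (w u : Fin (k * (t + 1) + 1) → ZMod 2),
      chi (dot w u) * W w = ∑ z ∈ T, chi (dot w (u + z)) := by
    intro w u
    rw [hWdef]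
    simp only []
    rw [Finset.mul_sum]
    exact Finset.sum_congr rfl (fun z _ => by rw [← chi_add, ← dot_add_right])
  have hW2 : ∀ w : Fin (k * (t + 1) + 1) → ZMod 2,
      (W w) ^ 2 = ∑ x ∈ T, ∑ y ∈ T, chi (dot w (x + y)) := by
    intro w
    have h1 : (W w) ^ 2 = ∑ x ∈ T, chi (dot w x) * W w := by
      rw [← Finset.sum_mul]
      show (W w) ^ 2 = W w * W w
      ring
    rw [h1]
    exact Finset.sum_congr rfl (fun x _ => hmulW w x)
  have hW3 : ∀ w : Fin (k * (t + 1) + 1) → ZMod 2,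
      (W w) ^ 3 = ∑ x ∈ T, ∑ y ∈ T, ∑ z ∈ T, chi (dot w (x + y + z)) := by
    intro w
    have h1 : (W w) ^ 3 = (∑ x ∈ T, ∑ y ∈ T, chi (dot w (x + y))) * W w := by
      rw [← hW2 w]
      ring
    rw [h1, Finset.sum_mul]
    apply Finset.sum_congr rfl
    intro x _
    rw [Finset.sum_mul]
    exact Finset.sum_congr rfl (fun y _ => hmulW w (x + y))
  have hzero_iff : ∀ x y : Fin (k * (t + 1) + 1) → ZMod 2, x + y = 0 ↔ y = x := by
    intro x y
    have hab : ∀ a b : ZMod 2, a + b = 0 ↔ b = a := by decide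
    constructor
    · intro h
      funext i
      exact (hab (x i) (y i)).1 (congrFun h i)
    · rintro rfl
      funext i
      exact (hab _ _).2 rfl
  have hS2 : ∑ w : Fin (k * (t + 1) + 1) → ZMod 2, (W w) ^ 2
      = 2 ^ (k * (t + 1) + 1) * ((1 : ℤ) + sInt) := by
    rw [Finset.sum_congr rfl (fun w _ => hW2 w), Finset.sum_comm]
    have hx : ∀ x ∈ T, (∑ y ∈ T, ∑ w : Fin (k * (t + 1) + 1) → ZMod 2,
        chi (dot w (x + y))) = 2 ^ (k * (t + 1) + 1) := by
      intro x hx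
      have h1 : ∀ y ∈ T, (∑ w : Fin (k * (t + 1) + 1) → ZMod 2, chi (dot w (x + y)))
          = (if y = x then (2 ^ (k * (t + 1) + 1) : ℤ) else 0) := by
        intro y _
        rw [sum_chi_dot, if_congr (hzero_iff x y) rfl rfl]
      rw [Finset.sum_congr rfl h1,
        Finset.sum_ite_eq' T x (fun _ => (2 ^ (k * (t + 1) + 1) : ℤ)), if_pos hx]
    have hswap : ∀ x ∈ T, (∑ w : Fin (k * (t + 1) + 1) → ZMod 2, ∑ y ∈ T,
        chi (dot w (x + y))) = 2 ^ (k * (t + 1) + 1) := by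
      intro x hxT
      rw [Finset.sum_comm]
      exact hx x hxT
    rw [Finset.sum_congr rfl hswap, Finset.sum_const, hTcard, hsInt]
    push_cast
    ring
  have hS3 : 0 ≤ ∑ w : Fin (k * (t + 1) + 1) → ZMod 2, (W w) ^ 3 := by
    rw [Finset.sum_congr rfl (fun w _ => hW3 w), Finset.sum_comm]
    apply Finset.sum_nonneg
    intro x _
    rw [Finset.sum_comm]
    apply Finset.sum_nonneg
    intro y _
    rw [Finset.sum_comm]
    apply Finset.sum_nonneg
    intro z _
    rw [sum_chi_dot]
    split <;> positivity
  -- the pointwise cubic identity and the contradiction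
  have hptw : ∀ w : Fin (k * (t + 1) + 1) → ZMod 2,
      (W w - 1) ^ 3 = sInt ^ 2 * (W w - 1) := by
    intro w
    rcases hWvals w with h | h | h <;> rw [h] <;> ring
  have hEq : ∑ w : Fin (k * (t + 1) + 1) → ZMod 2, (W w - 1) ^ 3
      = ∑ w : Fin (k * (t + 1) + 1) → ZMod 2, sInt ^ 2 * (W w - 1) :=
    Finset.sum_congr rfl (fun w _ => hptw w)
  have hL : ∑ w : Fin (k * (t + 1) + 1) → ZMod 2, (W w - 1) ^ 3
      = (∑ w : Fin (k * (t + 1) + 1) → ZMod 2, (W w) ^ 3)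
        - 3 * (∑ w : Fin (k * (t + 1) + 1) → ZMod 2, (W w) ^ 2)
        + 3 * (∑ w : Fin (k * (t + 1) + 1) → ZMod 2, W w)
        - ((univ : Finset (Fin (k * (t + 1) + 1) → ZMod 2)).card : ℤ) := by
    have h1 : ∀ w : Fin (k * (t + 1) + 1) → ZMod 2,
        (W w - 1) ^ 3 = (W w) ^ 3 - 3 * (W w) ^ 2 + 3 * (W w) - 1 := by
      intro w; ring
    rw [Finset.sum_congr rfl (fun w _ => h1 w), Finset.sum_sub_distrib,
      Finset.sum_add_distrib, Finset.sum_sub_distrib, ← Finset.mul_sum, ← Finset.mul_sum,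
      Finset.sum_const, nsmul_eq_mul, mul_one]
  have hR : ∑ w : Fin (k * (t + 1) + 1) → ZMod 2, sInt ^ 2 * (W w - 1)
      = sInt ^ 2 * ((∑ w : Fin (k * (t + 1) + 1) → ZMod 2, W w)
        - ((univ : Finset (Fin (k * (t + 1) + 1) → ZMod 2)).card : ℤ)) := by
    rw [← Finset.mul_sum, Finset.sum_sub_distrib, Finset.sum_const, nsmul_eq_mul, mul_one]
  rw [hL, hR, hS1, hS2, hcardV] at hEq
  have h8 : (8:ℤ) ≤ sInt := by
    have h := Nat.pow_le_pow_right (show 0 < 2 by norm_num) (show 3 ≤ k - 1 by omega)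
    rw [hsInt]
    calc (8:ℤ) = ((2 ^ 3 : ℕ) : ℤ) := by norm_num
    _ ≤ ((2 ^ (k - 1) : ℕ) : ℤ) := by exact_mod_cast h
    _ = (2:ℤ) ^ (k - 1) := by push_cast; ring
  have hpos : (0:ℤ) < 2 ^ (k * (t + 1) + 1) := by positivity
  have hneg : (∑ w : Fin (k * (t + 1) + 1) → ZMod 2, (W w) ^ 3)
      = 2 ^ (k * (t + 1) + 1) * (4 + 3 * sInt - sInt ^ 2) := by
    linear_combination hEq
  have hlt : (2:ℤ) ^ (k * (t + 1) + 1) * (4 + 3 * sInt - sInt ^ 2) < 0 := by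
    apply mul_neg_of_pos_of_neg hpos
    have h0 : (0:ℤ) ≤ sInt := by linarith
    have h1 : sInt * 8 ≤ sInt * sInt := mul_le_mul_of_nonneg_left h8 h0
    have h2 : sInt ^ 2 = sInt * sInt := by ring
    linarith only [h1, h2, h8]
  rw [hneg] at hS3
  linarith only [hS3, hlt]
end

section
/- Let q ≥ 2 be an integer and let r, k be integers with r ≥ 1 and k ≥ 2r. Let θ be the real number satisfying 2θ = √(1 + 4q^k(q^k − q^r)) − (2q^k − 2q^r + 1). Then ⌊θ⌋ = ⌊(q^r − 2)/2⌋; in particular ⌊θ⌋ = (q^r − 2)/2 if q is even and ⌊θ⌋ = (q^r − 3)/2 if q is odd. -/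
set_option maxHeartbeats 800000 in
/-- For integers `q ≥ 2`, `r ≥ 1`, `k ≥ 2r`, the number `θ` with
`2θ = √(1 + 4q^k(q^k − q^r)) − (2q^k − 2q^r + 1)` satisfies
`⌊θ⌋ = ⌊(q^r − 2)/2⌋`; in particular `⌊θ⌋ = (q^r − 2)/2` for `q` even and
`⌊θ⌋ = (q^r − 3)/2` for `q` odd. -/
theorem floor_theta_eq (q r k : ℕ) (hq : 2 ≤ q) (hr : 1 ≤ r) (hk : 2 * r ≤ k)
    (θ : ℝ)
    (hθ : 2 * θ = Real.sqrt (1 + 4 * (q : ℝ) ^ k * ((q : ℝ) ^ k - (q : ℝ) ^ r))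
        - (2 * (q : ℝ) ^ k - 2 * (q : ℝ) ^ r + 1)) :
    ⌊θ⌋ = ⌊((q : ℝ) ^ r - 2) / 2⌋ ∧
    (Even q → (⌊θ⌋ : ℝ) = ((q : ℝ) ^ r - 2) / 2) ∧
    (Odd q → (⌊θ⌋ : ℝ) = ((q : ℝ) ^ r - 3) / 2) := by
  set P : ℝ := (q : ℝ) ^ r with hPdef
  set Q : ℝ := (q : ℝ) ^ k with hQdef
  have hP2 : (2 : ℝ) ≤ P := by
    have h : (2 : ℕ) ≤ q ^ r := hq.trans (Nat.le_self_pow (by omega) q)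
    rw [hPdef]; exact_mod_cast h
  have hQP : P ^ 2 ≤ Q := by
    have h : q ^ (2 * r) ≤ q ^ k := Nat.pow_le_pow_right (by omega) hk
    have h2 : (q : ℝ) ^ (2 * r) ≤ (q : ℝ) ^ k := by exact_mod_cast h
    calc P ^ 2 = (q : ℝ) ^ (2 * r) := by rw [hPdef, ← pow_mul, mul_comm]
      _ ≤ Q := h2
  have hPQ : P ≤ Q := by nlinarith
  have hD : (0 : ℝ) ≤ 1 + 4 * Q * (Q - P) := by nlinarith
  have h1 : 2 * θ + (2 * Q - 2 * P + 1) = Real.sqrt (1 + 4 * Q * (Q - P)) := by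
    linarith
  have hsq : (2 * θ + (2 * Q - 2 * P + 1)) ^ 2 = 1 + 4 * Q * (Q - P) := by
    rw [h1, Real.sq_sqrt hD]
  have hpos : 0 ≤ 2 * θ + (2 * Q - 2 * P + 1) := h1 ▸ Real.sqrt_nonneg _
  clear hθ h1 hQdef
  -- upper bound: θ < P/2
  have hub : θ < P / 2 := by
    by_contra h
    push_neg at h
    nlinarith [hsq, sq_nonneg (2 * θ - P)]
  rcases Nat.even_or_odd q with he | ho
  · -- even case
    obtain ⟨t, ht⟩ := (Nat.even_pow (n := r)).mpr ⟨he, by omega⟩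
    have hPt : P = 2 * (t : ℝ) := by
      rw [hPdef, ← Nat.cast_pow, ht]; push_cast; ring
    have ht1 : 1 ≤ (t : ℝ) := by nlinarith
    have hlb : (P - 2) / 2 ≤ θ := by
      by_contra h
      push_neg at h
      nlinarith [hsq, sq_nonneg (2 * θ - (P - 2))]
    have hfloor : ⌊θ⌋ = (t : ℤ) - 1 := by
      rw [Int.floor_eq_iff]
      constructor
      · push_cast; nlinarith
      · push_cast; nlinarith
    have hfloor2 : ⌊(P - 2) / 2⌋ = (t : ℤ) - 1 := by
      rw [Int.floor_eq_iff]
      constructor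
      · push_cast; nlinarith
      · push_cast; nlinarith
    refine ⟨by rw [hfloor, hfloor2], fun _ => ?_,
      fun hodd => absurd hodd (by simpa using he)⟩
    rw [hfloor]; push_cast; nlinarith
  · -- odd case
    obtain ⟨t, ht⟩ := ho.pow (n := r)
    have hPt : P = 2 * (t : ℝ) + 1 := by
      rw [hPdef, ← Nat.cast_pow, ht]; push_cast; ring
    have hq3 : 3 ≤ q := by
      rcases Nat.odd_iff.mp ho with h; omega
    have ht1n : 1 ≤ t := by
      have h3 : 3 ≤ q ^ r := hq3.trans (Nat.le_self_pow (by omega) q)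
      omega
    have ht1 : 1 ≤ (t : ℝ) := by exact_mod_cast ht1n
    have hub2 : θ < (P - 1) / 2 := by
      by_contra h
      push_neg at h
      nlinarith [hsq, sq_nonneg (2 * θ - (P - 1))]
    have hlb : (P - 3) / 2 ≤ θ := by
      by_contra h
      push_neg at h
      nlinarith [hsq, sq_nonneg (2 * θ - (P - 3))]
    have hfloor : ⌊θ⌋ = (t : ℤ) - 1 := by
      rw [Int.floor_eq_iff]
      constructor
      · push_cast; nlinarith
      · push_cast; nlinarith
    have hfloor2 : ⌊(P - 2) / 2⌋ = (t : ℤ) - 1 := by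
      rw [Int.floor_eq_iff]
      constructor
      · push_cast; nlinarith
      · push_cast; nlinarith
    refine ⟨by rw [hfloor, hfloor2], fun hev => absurd hev (by simpa using ho),
      fun _ => ?_⟩
    rw [hfloor]; push_cast; nlinarith
end

section
/- Let q ≥ 2 be an integer and let r, k be integers with r ≥ 1 and k ≥ 2r. Then the real number 2θ = √(1 + 4q^k(q^k − q^r)) − (2q^k − 2q^r + 1) satisfies q^r − 2 < 2θ < q^r − 1. -/
/-- For integers `q ≥ 2`, `r ≥ 1`, `k ≥ 2r`, the real number
`2θ = √(1 + 4q^k(q^k − q^r)) − (2q^k − 2q^r + 1)` satisfies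
`q^r − 2 < 2θ < q^r − 1`. -/
theorem two_theta_bounds (q r k : ℕ) (hq : 2 ≤ q) (hr : 1 ≤ r) (hk : 2 * r ≤ k)
    (θ : ℝ)
    (hθ : 2 * θ = Real.sqrt (1 + 4 * (q : ℝ) ^ k * ((q : ℝ) ^ k - (q : ℝ) ^ r))
        - (2 * (q : ℝ) ^ k - 2 * (q : ℝ) ^ r + 1)) :
    (q : ℝ) ^ r - 2 < 2 * θ ∧ 2 * θ < (q : ℝ) ^ r - 1 := by
  set x : ℝ := (q : ℝ) ^ k with hxdef
  set y : ℝ := (q : ℝ) ^ r with hydef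
  have hq1 : (1 : ℝ) ≤ (q : ℝ) := by exact_mod_cast hq.trans' (by norm_num)
  have hy2 : (2 : ℝ) ≤ y := by
    have h : (2 : ℕ) ≤ q ^ r := le_trans hq (Nat.le_self_pow (by omega) q)
    have := (Nat.cast_le (α := ℝ)).mpr h
    push_cast at this
    simpa [hydef] using this
  have hx : y ^ 2 ≤ x := by
    have : ((q : ℝ)) ^ (2 * r) ≤ (q : ℝ) ^ k := pow_le_pow_right₀ hq1 hk
    calc y ^ 2 = (q : ℝ) ^ (2 * r) := by rw [hydef, ← pow_mul, mul_comm]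
    _ ≤ x := this
  have hlb0 : (0 : ℝ) ≤ 2 * x - y - 1 := by nlinarith
  have hs1 : 2 * x - y - 1 < Real.sqrt (1 + 4 * x * (x - y)) := by
    rw [show (2 * x - y - 1 : ℝ) = Real.sqrt ((2 * x - y - 1) ^ 2) from
      (Real.sqrt_sq hlb0).symm]
    apply Real.sqrt_lt_sqrt (by positivity)
    nlinarith
  have hs2 : Real.sqrt (1 + 4 * x * (x - y)) < 2 * x - y := by
    rw [show (2 * x - y : ℝ) = Real.sqrt ((2 * x - y) ^ 2) from
      (Real.sqrt_sq (by nlinarith)).symm]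
    apply Real.sqrt_lt_sqrt (by nlinarith)
    nlinarith
  constructor <;> rw [hθ] <;> linarith
end

section
/- Let S be a partial 3-spread in 𝔽_2^8 of cardinality 34. For each hyperplane H (7-dimensional subspace) of 𝔽_2^8, let c(H) be the number of members of S contained in H, and for each integer i let a_i be the number of hyperplanes H with c(H) = i. Then a_i = 0 for i ∉ {2,3,4,5}, and a_2 = 51 − a_5, a_3 = 3a_5 − 136, a_4 = 340 − 3a_5; in particular 46 ≤ a_5 ≤ 51. -/
open Module Submodule

abbrev V8 := Fin 8 → ZMod 2

/-- A partial `3`-spread in `𝔽_2^8`: a set of `3`-dimensional subspaces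
any two distinct members of which intersect trivially. -/
def IsPartialThreeSpread (S : Finset (Submodule (ZMod 2) (Fin 8 → ZMod 2))) : Prop :=
  (∀ U ∈ S, Module.finrank (ZMod 2) U = 3) ∧
  ∀ U ∈ S, ∀ V ∈ S, U ≠ V → U ⊓ V = ⊥

lemma natcard_mod (M : Type*) [AddCommGroup M] [Module (ZMod 2) M] [Module.Finite (ZMod 2) M] :
    Nat.card M = 2 ^ finrank (ZMod 2) M := by
  have : Finite M := Module.finite_of_finite (ZMod 2)
  have : Fintype M := Fintype.ofFinite M
  rw [Nat.card_eq_fintype_card]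
  have := card_eq_pow_finrank (K := ZMod 2) (V := M)
  simpa using this

lemma natcard_ne_zero (M : Type*) [AddCommGroup M] [Module (ZMod 2) M] [Module.Finite (ZMod 2) M] :
    Nat.card {x : M // x ≠ 0} = 2 ^ finrank (ZMod 2) M - 1 := by
  have : Finite M := Module.finite_of_finite (ZMod 2)
  have : Fintype M := Fintype.ofFinite M
  classical
  rw [Nat.card_eq_fintype_card]
  have h := Set.card_ne_eq (0 : M)
  rw [← natcard_mod M, Nat.card_eq_fintype_card]
  convert h using 2
  rfl

lemma card_nonzero {M : Type*} [AddCommGroup M] [Module (ZMod 2) M] [FiniteDimensional (ZMod 2) M]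
    (A : Submodule (ZMod 2) M) :
    Nat.card {x : M // x ∈ A ∧ x ≠ 0} = 2 ^ finrank (ZMod 2) A - 1 := by
  have e : {x : M // x ∈ A ∧ x ≠ 0} ≃ {y : A // y ≠ 0} := by
    refine ⟨fun x => ⟨⟨x.1, x.2.1⟩, by simpa using x.2.2⟩,
           fun y => ⟨y.1.1, y.1.2, by simpa using y.2⟩, fun x => rfl, fun y => rfl⟩
  rw [Nat.card_congr e, natcard_ne_zero A]

lemma zmod2_cases (a : ZMod 2) : a = 0 ∨ a = 1 := by
  fin_cases a
  exacts [Or.inl rfl, Or.inr rfl]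

lemma finrank_V8 : finrank (ZMod 2) V8 = 8 := by simp

lemma ker_finrank_seven {f : Module.Dual (ZMod 2) V8} (hf : f ≠ 0) :
    finrank (ZMod 2) (LinearMap.ker f) = 7 := by
  have h := LinearMap.finrank_range_add_finrank_ker f
  have hr : LinearMap.range f = ⊤ := by
    rcases Ideal.eq_bot_or_top (LinearMap.range f) with h0 | h1
    · exact absurd (LinearMap.range_eq_bot.1 h0) hf
    · exact h1
  rw [hr] at h
  have : finrank (ZMod 2) (⊤ : Submodule (ZMod 2) (ZMod 2)) = 1 := by
    rw [finrank_top]; exact finrank_self _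
  rw [this, finrank_V8] at h
  omega

lemma count_hyp (W : Submodule (ZMod 2) V8) :
    Nat.card {H : Submodule (ZMod 2) V8 // finrank (ZMod 2) H = 7 ∧ W ≤ H}
      = 2 ^ (8 - finrank (ZMod 2) W) - 1 := by
  classical
  have key : Nat.card {f : Module.Dual (ZMod 2) V8 // f ∈ W.dualAnnihilator ∧ f ≠ 0}
      = Nat.card {H : Submodule (ZMod 2) V8 // finrank (ZMod 2) H = 7 ∧ W ≤ H} := by
    apply Nat.card_eq_of_bijective
      (fun f => ⟨LinearMap.ker f.1, ker_finrank_seven f.2.2,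
        fun x hx => (Submodule.mem_dualAnnihilator _).1 f.2.1 x hx⟩)
    constructor
    · rintro ⟨f, hfa, hf⟩ ⟨g, hga, hg⟩ h
      have hker : LinearMap.ker f = LinearMap.ker g := congrArg Subtype.val h
      apply Subtype.ext
      apply LinearMap.ext
      intro x
      by_cases hx : x ∈ LinearMap.ker f
      · have hx' : x ∈ LinearMap.ker g := hker ▸ hx
        rw [LinearMap.mem_ker] at hx hx'
        rw [hx, hx']
      · have hx' : x ∉ LinearMap.ker g := hker ▸ hx
        rw [LinearMap.mem_ker] at hx hx'
        rcases zmod2_cases (f x) with h1 | h1 <;> rcases zmod2_cases (g x) with h2 | h2 <;>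
          simp_all
    · rintro ⟨H, hH7, hWH⟩
      have hq : finrank (ZMod 2) (V8 ⧸ H) = finrank (ZMod 2) (ZMod 2) := by
        have h2 := Submodule.finrank_quotient_add_finrank H
        rw [finrank_V8, hH7] at h2
        rw [finrank_self]
        omega
      obtain ⟨e⟩ := FiniteDimensional.nonempty_linearEquiv_of_finrank_eq hq
      refine ⟨⟨e.toLinearMap.comp H.mkQ, ?_, ?_⟩, ?_⟩
      · rw [Submodule.mem_dualAnnihilator]
        intro w hw
        simp [Submodule.Quotient.mk_eq_zero, hWH hw]
      · intro h0
        have : H = ⊤ := by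
          rw [eq_top_iff]
          intro x _
          have hx0 : e (H.mkQ x) = 0 := congrFun (congrArg DFunLike.coe h0) x
          have : H.mkQ x = 0 := by
            apply e.injective
            simpa using hx0
          rwa [← Submodule.Quotient.mk_eq_zero]
        rw [this] at hH7
        have : finrank (ZMod 2) (⊤ : Submodule (ZMod 2) V8) = 8 := by
          rw [finrank_top]; exact finrank_V8
        omega
      · apply Subtype.ext
        show LinearMap.ker (e.toLinearMap.comp H.mkQ) = H
        rw [LinearMap.ker_comp, LinearEquiv.ker, Submodule.comap_bot, Submodule.ker_mkQ]
  rw [← key]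
  have := card_nonzero (M := Module.Dual (ZMod 2) V8) W.dualAnnihilator
  rw [this]
  have e := Subspace.quotEquivAnnihilator (K := ZMod 2) (V := V8) W
  have h : finrank (ZMod 2) (V8 ⧸ W) = finrank (ZMod 2) W.dualAnnihilator := e.finrank_eq
  have h2 := Submodule.finrank_quotient_add_finrank W
  rw [finrank_V8] at h2
  have h3 : finrank (ZMod 2) W.dualAnnihilator = 8 - finrank (ZMod 2) W := by omega
  rw [h3]

open scoped Classical

noncomputable instance : Fintype (Submodule (ZMod 2) V8) := Fintype.ofFinite _

lemma filter_card_eq {α : Type*} [Fintype α] (p : α → Prop) [DecidablePred p] :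
    (Finset.univ.filter p).card = Nat.card {x // p x} := by
  rw [Nat.card_eq_fintype_card]
  exact (Fintype.card_subtype p).symm

lemma count_hyp' (W : Submodule (ZMod 2) V8) :
    (Finset.univ.filter fun H : Submodule (ZMod 2) V8 =>
      finrank (ZMod 2) H = 7 ∧ W ≤ H).card = 2 ^ (8 - finrank (ZMod 2) W) - 1 := by
  rw [filter_card_eq, count_hyp]

lemma pointcount (A : Submodule (ZMod 2) V8) :
    (Finset.univ.filter fun x : V8 => x ∈ A ∧ x ≠ 0).card = 2 ^ finrank (ZMod 2) A - 1 := by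
  rw [filter_card_eq, card_nonzero]

section Main

variable (S : Finset (Submodule (ZMod 2) V8))

/-- Holes of the partial spread `S`. -/
noncomputable def DS : Finset V8 := Finset.univ.filter (fun x => x ≠ 0 ∧ ∀ U ∈ S, x ∉ U)

lemma partitionS (hS : IsPartialThreeSpread S) (A : Submodule (ZMod 2) V8) :
    (Finset.univ.filter fun x : V8 => x ∈ A ∧ x ≠ 0).card
      = (∑ U ∈ S, (Finset.univ.filter fun x : V8 => x ∈ U ⊓ A ∧ x ≠ 0).card)
        + ((DS S).filter (fun x => x ∈ A)).card := by
  rw [DS, Finset.filter_filter]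
  simp only [Finset.card_filter]
  rw [Finset.sum_comm]
  rw [← Finset.sum_add_distrib]
  apply Finset.sum_congr rfl
  intro x _
  by_cases hx0 : x = 0
  · simp [hx0]
  by_cases hxA : x ∈ A
  · simp only [hxA, hx0, and_true, true_and, not_false_iff, if_true]
    by_cases hU : ∃ U ∈ S, x ∈ U
    · obtain ⟨U0, hU0S, hU0⟩ := hU
      have hsum : ∀ U ∈ S, (if x ∈ U ⊓ A ∧ ¬x = 0 then 1 else 0) = (if U = U0 then 1 else 0) := by
        intro U hUS
        congr 1
        simp only [Submodule.mem_inf, hxA, and_true, hx0, not_false_iff, eq_iff_iff]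
        constructor
        · intro hxU
          by_contra hne
          have := hS.2 U hUS U0 hU0S hne
          have : x ∈ U ⊓ U0 := Submodule.mem_inf.2 ⟨hxU, hU0⟩
          rw [hS.2 U hUS U0 hU0S hne] at this
          exact hx0 (Submodule.mem_bot _ |>.1 this)
        · rintro rfl; exact hU0
      rw [Finset.sum_congr rfl hsum, Finset.sum_ite_eq' S U0 (fun _ => 1)]
      simp only [hU0S, if_true]
      have hno : ¬(∀ U ∈ S, x ∉ U) := fun h => h U0 hU0S hU0
      simp [hx0, hxA, hno]
    · push_neg at hU
      have hsum : ∀ U ∈ S, (if x ∈ U ⊓ A ∧ ¬x = 0 then 1 else 0) = 0 := by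
        intro U hUS
        simp only [Submodule.mem_inf, ite_eq_right_iff]
        rintro ⟨⟨hxU, -⟩, -⟩
        exact absurd hxU (hU U hUS)
      rw [Finset.sum_congr rfl hsum]
      simp only [Finset.sum_const_zero, zero_add]
      rw [if_pos (show x ≠ 0 from hx0), if_pos ⟨(show x ≠ 0 from hx0), hU⟩]

  · have : ∀ U ∈ S, (if x ∈ U ⊓ A ∧ ¬x = 0 then 1 else 0) = 0 := by
      intro U hUS
      simp only [Submodule.mem_inf, ite_eq_right_iff]
      rintro ⟨⟨-, hxA'⟩, -⟩
      exact absurd hxA' hxA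
    rw [Finset.sum_congr rfl this]
    simp [hxA]

end Main

section Main2
variable (S : Finset (Submodule (ZMod 2) V8))

lemma finrank_top_V8 : finrank (ZMod 2) (⊤ : Submodule (ZMod 2) V8) = 8 := by
  rw [finrank_top]; exact finrank_V8

lemma inf_dim {U H : Submodule (ZMod 2) V8} (hU3 : finrank (ZMod 2) U = 3)
    (hH : finrank (ZMod 2) H = 7) (hUH : ¬ U ≤ H) : finrank (ZMod 2) (U ⊓ H : Submodule (ZMod 2) V8) = 2 := by
  have hsum := Submodule.finrank_sup_add_finrank_inf_eq U H
  have hlt : H < U ⊔ H := by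
    rcases lt_or_eq_of_le (le_sup_right : H ≤ U ⊔ H) with h | h
    · exact h
    · exact absurd (h ▸ le_sup_left : U ≤ H) hUH
  have h1 : finrank (ZMod 2) H < finrank (ZMod 2) (U ⊔ H : Submodule (ZMod 2) V8) :=
    Submodule.finrank_lt_finrank_of_lt hlt
  have h2 : finrank (ZMod 2) (U ⊔ H : Submodule (ZMod 2) V8) ≤ 8 := by
    have := Submodule.finrank_le (U ⊔ H : Submodule (ZMod 2) V8)
    rwa [finrank_V8] at this
  omega

lemma hole_rel (hS : IsPartialThreeSpread S) (hcard : S.card = 34)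
    {H : Submodule (ZMod 2) V8} (hH : finrank (ZMod 2) H = 7) :
    ((DS S).filter (fun x => x ∈ H)).card + 4 * (S.filter (fun U => U ≤ H)).card = 25 := by
  have hpart := partitionS S hS H
  rw [pointcount, hH] at hpart
  have hterm : ∀ U ∈ S, (Finset.univ.filter fun x : V8 => x ∈ U ⊓ H ∧ x ≠ 0).card
      = if U ≤ H then 7 else 3 := by
    intro U hU
    rw [pointcount]
    by_cases h : U ≤ H
    · rw [if_pos h, inf_eq_left.2 h, hS.1 U hU]; norm_num
    · rw [if_neg h, inf_dim (hS.1 U hU) hH h]; norm_num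
  rw [Finset.sum_congr rfl hterm, Finset.sum_ite, Finset.sum_const, Finset.sum_const] at hpart
  have hfil := Finset.card_filter_add_card_filter_not (s := S) (p := fun U => U ≤ H)
  rw [hcard] at hfil
  simp only [smul_eq_mul] at hpart
  omega

lemma D_card (hS : IsPartialThreeSpread S) (hcard : S.card = 34) : (DS S).card = 17 := by
  have hpart := partitionS S hS ⊤
  rw [pointcount, finrank_top_V8] at hpart
  have hterm : ∀ U ∈ S, (Finset.univ.filter fun x : V8 => x ∈ U ⊓ ⊤ ∧ x ≠ 0).card = 7 := by
    intro U hU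
    rw [pointcount]
    rw [inf_top_eq, hS.1 U hU]; norm_num
  rw [Finset.sum_congr rfl hterm, Finset.sum_const, hcard] at hpart
  rw [Finset.filter_true_of_mem (fun x _ => Submodule.mem_top)] at hpart
  simp only [smul_eq_mul] at hpart
  omega

lemma c_bounds (hS : IsPartialThreeSpread S) (hcard : S.card = 34)
    {H : Submodule (ZMod 2) V8} (hH : finrank (ZMod 2) H = 7) :
    2 ≤ (S.filter (fun U => U ≤ H)).card ∧ (S.filter (fun U => U ≤ H)).card ≤ 6 := by
  have h1 := hole_rel S hS hcard hH
  have h2 : ((DS S).filter (fun x => x ∈ H)).card ≤ 17 := by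
    rw [← D_card S hS hcard]
    exact Finset.card_filter_le _ _
  omega

end Main2

section Main3
variable (S : Finset (Submodule (ZMod 2) V8))

lemma span_inf_bot {K : Submodule (ZMod 2) V8} {x : V8} (hx0 : x ≠ 0) (hxK : x ∉ K) :
    K ⊓ Submodule.span (ZMod 2) {x} = ⊥ := by
  rw [eq_bot_iff]
  rintro y ⟨hyK, hyx⟩
  obtain ⟨a, rfl⟩ := Submodule.mem_span_singleton.1 hyx
  rcases zmod2_cases a with rfl | rfl
  · simp
  · simp only [one_smul] at hyK
    exact absurd hyK hxK

lemma sup_span_dim {K : Submodule (ZMod 2) V8} {x : V8} (hK : finrank (ZMod 2) K = 6)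
    (hx0 : x ≠ 0) (hxK : x ∉ K) :
    finrank (ZMod 2) (K ⊔ Submodule.span (ZMod 2) {x} : Submodule (ZMod 2) V8) = 7 := by
  have hsum := Submodule.finrank_sup_add_finrank_inf_eq K (Submodule.span (ZMod 2) {x})
  rw [span_inf_bot hx0 hxK, finrank_bot, finrank_span_singleton hx0, hK] at hsum
  omega

lemma parityD (hS : IsPartialThreeSpread S) (hcard : S.card = 34)
    {K : Submodule (ZMod 2) V8} (hK : finrank (ZMod 2) K = 6) :
    ((DS S).filter (fun x => x ∈ K)).card % 2 = 1 := by
  set T := Finset.univ.filter (fun H : Submodule (ZMod 2) V8 => finrank (ZMod 2) H = 7 ∧ K ≤ H)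
    with hT
  have hTcard : T.card = 3 := by
    rw [hT, count_hyp', hK]; norm_num
  -- way 1
  have way1 : (∑ H ∈ T, ((DS S).filter (fun x => x ∈ H)).card)
      + 4 * (∑ H ∈ T, (S.filter (fun U => U ≤ H)).card) = 75 := by
    rw [Finset.mul_sum, ← Finset.sum_add_distrib]
    have : ∀ H ∈ T, ((DS S).filter (fun x => x ∈ H)).card
        + 4 * (S.filter (fun U => U ≤ H)).card = 25 := by
      intro H hH
      rw [hT, Finset.mem_filter] at hH
      exact hole_rel S hS hcard hH.2.1
    rw [Finset.sum_congr rfl this, Finset.sum_const, hTcard]; norm_num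
  -- way 2
  have way2 : (∑ H ∈ T, ((DS S).filter (fun x => x ∈ H)).card)
      = 17 + 2 * ((DS S).filter (fun x => x ∈ K)).card := by
    simp only [Finset.card_filter]
    rw [Finset.sum_comm]
    have hpt : ∀ x ∈ DS S, (∑ H ∈ T, if x ∈ H then (1:ℕ) else 0)
        = if x ∈ K then 3 else 1 := by
      intro x hx
      have hx0 : x ≠ 0 := by
        rw [DS, Finset.mem_filter] at hx
        exact hx.2.1
      rw [← Finset.card_filter]
      by_cases hxK : x ∈ K
      · rw [if_pos hxK, ← hTcard]
        congr 1
        apply Finset.filter_true_of_mem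
        intro H hH
        rw [hT, Finset.mem_filter] at hH
        exact hH.2.2 hxK
      · rw [if_neg hxK, hT, Finset.filter_filter]
        have hcong : ∀ H : Submodule (ZMod 2) V8,
            ((finrank (ZMod 2) H = 7 ∧ K ≤ H) ∧ x ∈ H)
              ↔ (finrank (ZMod 2) H = 7 ∧ K ⊔ Submodule.span (ZMod 2) {x} ≤ H) := by
          intro H
          rw [sup_le_iff, Submodule.span_singleton_le_iff_mem]
          tauto
        rw [Finset.filter_congr (fun H _ => hcong H), count_hyp',
          sup_span_dim hK hx0 hxK]
        norm_num
    rw [Finset.sum_congr rfl hpt, Finset.sum_ite, Finset.sum_const, Finset.sum_const]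
    have := Finset.card_filter_add_card_filter_not (s := DS S) (p := fun x => x ∈ K)
    rw [D_card S hS hcard] at this
    simp only [smul_eq_mul]
    rw [← Finset.card_filter]
    omega
  omega

lemma c_le_five (hS : IsPartialThreeSpread S) (hcard : S.card = 34)
    {H : Submodule (ZMod 2) V8} (hH : finrank (ZMod 2) H = 7) :
    (S.filter (fun U => U ≤ H)).card ≤ 5 := by
  by_contra hgt
  have h6 : (S.filter (fun U => U ≤ H)).card = 6 := by
    have := (c_bounds S hS hcard hH).2
    omega
  have hrel := hole_rel S hS hcard hH
  rw [h6] at hrel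
  have hD1 : ((DS S).filter (fun x => x ∈ H)).card = 1 := by omega
  obtain ⟨x, hxset⟩ := Finset.card_eq_one.1 hD1
  have hxmem : x ∈ (DS S).filter (fun y => y ∈ H) := by rw [hxset]; exact Finset.mem_singleton_self x
  rw [Finset.mem_filter] at hxmem
  obtain ⟨hxD, hxH⟩ := hxmem
  have hx0 : x ≠ 0 := by
    rw [DS, Finset.mem_filter] at hxD
    exact hxD.2.1
  obtain ⟨i, hi⟩ : ∃ i, x i ≠ 0 := by
    by_contra hall
    push_neg at hall
    exact hx0 (funext hall)
  set f : V8 →ₗ[ZMod 2] ZMod 2 := LinearMap.proj i with hf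
  have hfx : f x ≠ 0 := hi
  have hfne : f ≠ 0 := by
    intro h0
    rw [h0] at hfx
    exact hfx rfl
  have hker7 : finrank (ZMod 2) (LinearMap.ker f) = 7 := ker_finrank_seven hfne
  have hxker : x ∉ LinearMap.ker f := by
    rw [LinearMap.mem_ker]
    exact hfx
  set K : Submodule (ZMod 2) V8 := H ⊓ LinearMap.ker f with hKdef
  have hK6 : finrank (ZMod 2) K = 6 := by
    have hsum := Submodule.finrank_sup_add_finrank_inf_eq H (LinearMap.ker f)
    have hlt : LinearMap.ker f < H ⊔ LinearMap.ker f := by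
      rcases lt_or_eq_of_le (le_sup_right : LinearMap.ker f ≤ H ⊔ LinearMap.ker f) with h | h
      · exact h
      · exfalso
        have : H ≤ LinearMap.ker f := h ▸ le_sup_left
        exact hxker (this hxH)
    have h1 : finrank (ZMod 2) (LinearMap.ker f) <
        finrank (ZMod 2) (H ⊔ LinearMap.ker f : Submodule (ZMod 2) V8) :=
      Submodule.finrank_lt_finrank_of_lt hlt
    have h2 : finrank (ZMod 2) (H ⊔ LinearMap.ker f : Submodule (ZMod 2) V8) ≤ 8 := by
      have := Submodule.finrank_le (H ⊔ LinearMap.ker f : Submodule (ZMod 2) V8)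
      rwa [finrank_V8] at this
    rw [hKdef]
    omega
  have hempty : ((DS S).filter (fun y => y ∈ K)).card = 0 := by
    rw [Finset.card_eq_zero, Finset.eq_empty_iff_forall_notMem]
    intro y hy
    rw [Finset.mem_filter, hKdef, Submodule.mem_inf] at hy
    have : y ∈ (DS S).filter (fun z => z ∈ H) := Finset.mem_filter.2 ⟨hy.1, hy.2.1⟩
    rw [hxset, Finset.mem_singleton] at this
    subst this
    exact hxker hy.2.2
  have := parityD S hS hcard hK6
  rw [hempty] at this
  omega

end Main3

section Main4
variable (S : Finset (Submodule (ZMod 2) V8))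

noncomputable def Hyp : Finset (Submodule (ZMod 2) V8) :=
  Finset.univ.filter (fun H => finrank (ZMod 2) H = 7)

lemma Hyp_card : (Hyp).card = 255 := by
  rw [Hyp]
  have : ∀ H : Submodule (ZMod 2) V8, (finrank (ZMod 2) H = 7)
      ↔ (finrank (ZMod 2) H = 7 ∧ (⊥ : Submodule (ZMod 2) V8) ≤ H) :=
    fun H => (and_iff_left bot_le).symm
  rw [Finset.filter_congr (fun H _ => this H), count_hyp']
  rw [finrank_bot]
  norm_num

lemma count_above (U : Submodule (ZMod 2) V8) (hU3 : finrank (ZMod 2) U = 3) :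
    ((Hyp).filter (fun H => U ≤ H)).card = 31 := by
  rw [Hyp, Finset.filter_filter, count_hyp', hU3]
  norm_num

lemma sum_c (hS : IsPartialThreeSpread S) (hcard : S.card = 34) :
    ∑ H ∈ Hyp, (S.filter (fun U => U ≤ H)).card = 1054 := by
  simp only [Finset.card_filter]
  rw [Finset.sum_comm]
  have : ∀ U ∈ S, (∑ H ∈ Hyp, if U ≤ H then (1:ℕ) else 0) = 31 := by
    intro U hU
    rw [← Finset.card_filter]
    exact count_above U (hS.1 U hU)
  rw [Finset.sum_congr rfl this, Finset.sum_const, hcard]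
  norm_num

lemma sum_c_sq (hS : IsPartialThreeSpread S) (hcard : S.card = 34) :
    ∑ H ∈ Hyp, (S.filter (fun U => U ≤ H)).card ^ 2 = 4420 := by
  have hsq : ∀ H : Submodule (ZMod 2) V8, (S.filter (fun U => U ≤ H)).card ^ 2
      = ∑ U ∈ S, ∑ V ∈ S, (if U ≤ H ∧ V ≤ H then (1:ℕ) else 0) := by
    intro H
    rw [sq, Finset.card_filter, Finset.sum_mul_sum]
    refine Finset.sum_congr rfl fun U _ => Finset.sum_congr rfl fun V _ => ?_
    by_cases h1 : U ≤ H <;> by_cases h2 : V ≤ H <;> simp [h1, h2]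
  rw [Finset.sum_congr rfl (fun H _ => hsq H), Finset.sum_comm]
  have inner : ∀ U ∈ S, (∑ H ∈ Hyp, ∑ V ∈ S, if U ≤ H ∧ V ≤ H then (1:ℕ) else 0) = 130 := by
    intro U hU
    rw [Finset.sum_comm]
    have hVterm : ∀ V ∈ S, (∑ H ∈ Hyp, if U ≤ H ∧ V ≤ H then (1:ℕ) else 0)
        = (if V = U then 28 else 0) + 3 := by
      intro V hV
      rw [← Finset.card_filter]
      by_cases hUV : V = U
      · subst hUV
        have : ∀ H : Submodule (ZMod 2) V8, (V ≤ H ∧ V ≤ H) ↔ V ≤ H := fun H => and_self_iff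
        rw [Finset.filter_congr (fun H _ => this H), count_above V (hS.1 V hV)]
        norm_num
      · have hsup : finrank (ZMod 2) (U ⊔ V : Submodule (ZMod 2) V8) = 6 := by
          have hsum := Submodule.finrank_sup_add_finrank_inf_eq U V
          rw [hS.2 U hU V hV (fun h => hUV h.symm), finrank_bot, hS.1 U hU, hS.1 V hV] at hsum
          omega
        rw [if_neg hUV, Hyp, Finset.filter_filter]
        have hiff : ∀ H : Submodule (ZMod 2) V8,
            (finrank (ZMod 2) H = 7 ∧ (U ≤ H ∧ V ≤ H))
              ↔ (finrank (ZMod 2) H = 7 ∧ U ⊔ V ≤ H) := by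
          intro H
          rw [sup_le_iff]
        rw [Finset.filter_congr (fun H _ => hiff H), count_hyp', hsup]
        norm_num
    rw [Finset.sum_congr rfl hVterm, Finset.sum_add_distrib,
      Finset.sum_ite_eq' S U (fun _ => 28), if_pos hU, Finset.sum_const, hcard]
    norm_num
  rw [Finset.sum_congr rfl inner, Finset.sum_const, hcard]
  norm_num

end Main4

/-- Spectrum of hyperplanes for a maximum partial `3`-spread in `𝔽_2^8`:
if `S` is a partial `3`-spread of cardinality `34`, `c H` counts the members of
`S` contained in a hyperplane `H`, and `a i` counts the hyperplanes `H` with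
`c H = i`, then `a i = 0` for `i ∉ {2,3,4,5}`, `a 2 = 51 − a 5`,
`a 3 = 3·a 5 − 136`, `a 4 = 340 − 3·a 5`, and `46 ≤ a 5 ≤ 51`. -/
theorem hyperplane_spectrum (S : Finset (Submodule (ZMod 2) (Fin 8 → ZMod 2)))
    (hS : IsPartialThreeSpread S) (hcard : S.card = 34)
    (c : Submodule (ZMod 2) (Fin 8 → ZMod 2) → ℕ)
    (hc : ∀ H, c H = {U : Submodule (ZMod 2) (Fin 8 → ZMod 2) | U ∈ S ∧ U ≤ H}.ncard)
    (a : ℕ → ℕ)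
    (ha : ∀ i, a i = {H : Submodule (ZMod 2) (Fin 8 → ZMod 2) |
        Module.finrank (ZMod 2) H = 7 ∧ c H = i}.ncard) :
    (∀ i, i ∉ ({2, 3, 4, 5} : Set ℕ) → a i = 0) ∧
    (a 2 : ℤ) = 51 - (a 5 : ℤ) ∧
    (a 3 : ℤ) = 3 * (a 5 : ℤ) - 136 ∧
    (a 4 : ℤ) = 340 - 3 * (a 5 : ℤ) ∧
    46 ≤ a 5 ∧ a 5 ≤ 51 := by
  classical
  have hcS : ∀ H, c H = (S.filter (fun U => U ≤ H)).card := by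
    intro H
    rw [hc]
    have : {U : Submodule (ZMod 2) V8 | U ∈ S ∧ U ≤ H} = ↑(S.filter (fun U => U ≤ H)) := by
      ext U; simp
    rw [this, Set.ncard_coe_finset]
  have haF : ∀ i, a i = ((Hyp).filter (fun H => c H = i)).card := by
    intro i
    rw [ha]
    have : {H : Submodule (ZMod 2) V8 | finrank (ZMod 2) H = 7 ∧ c H = i}
        = ↑((Hyp).filter (fun H => c H = i)) := by
      ext H; simp [Hyp]
    rw [this, Set.ncard_coe_finset]
  have hbound : ∀ H ∈ Hyp, 2 ≤ c H ∧ c H ≤ 5 := by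
    intro H hH
    rw [Hyp, Finset.mem_filter] at hH
    rw [hcS]
    exact ⟨(c_bounds S hS hcard hH.2).1, c_le_five S hS hcard hH.2⟩
  have hmaps : ∀ H ∈ Hyp, c H ∈ ({2, 3, 4, 5} : Finset ℕ) := by
    intro H hH
    have := hbound H hH
    simp only [Finset.mem_insert, Finset.mem_singleton]
    omega
  have eq1 : a 2 + a 3 + a 4 + a 5 = 255 := by
    have h := Finset.card_eq_sum_card_fiberwise hmaps
    rw [Hyp_card] at h
    have : ∀ i ∈ ({2, 3, 4, 5} : Finset ℕ),
        ((Hyp).filter (fun H => c H = i)).card = a i := fun i _ => (haF i).symm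
    rw [Finset.sum_congr rfl this] at h
    simp [Finset.sum_insert, Finset.mem_insert] at h
    omega
  have eq2 : 2 * a 2 + 3 * a 3 + 4 * a 4 + 5 * a 5 = 1054 := by
    have h := Finset.sum_fiberwise_of_maps_to hmaps (fun H => c H)
    have hS1 : ∑ H ∈ Hyp, c H = 1054 := by
      rw [Finset.sum_congr rfl (fun H _ => hcS H)]
      exact sum_c S hS hcard
    rw [hS1] at h
    have : ∀ i ∈ ({2, 3, 4, 5} : Finset ℕ),
        (∑ H ∈ (Hyp).filter (fun H => c H = i), c H) = a i * i := by
      intro i _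
      have : ∀ H ∈ (Hyp).filter (fun H => c H = i), c H = i := by
        intro H hH
        exact (Finset.mem_filter.1 hH).2
      rw [Finset.sum_congr rfl this, Finset.sum_const, ← haF i, smul_eq_mul]
    rw [Finset.sum_congr rfl this] at h
    simp [Finset.sum_insert, Finset.mem_insert] at h
    omega
  have eq3 : 4 * a 2 + 9 * a 3 + 16 * a 4 + 25 * a 5 = 4420 := by
    have h := Finset.sum_fiberwise_of_maps_to hmaps (fun H => c H ^ 2)
    have hS2 : ∑ H ∈ Hyp, c H ^ 2 = 4420 := by
      rw [Finset.sum_congr rfl (fun H _ => by rw [hcS H])]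
      exact sum_c_sq S hS hcard
    rw [hS2] at h
    have : ∀ i ∈ ({2, 3, 4, 5} : Finset ℕ),
        (∑ H ∈ (Hyp).filter (fun H => c H = i), c H ^ 2) = a i * i ^ 2 := by
      intro i _
      have : ∀ H ∈ (Hyp).filter (fun H => c H = i), c H ^ 2 = i ^ 2 := by
        intro H hH
        rw [(Finset.mem_filter.1 hH).2]
      rw [Finset.sum_congr rfl this, Finset.sum_const, ← haF i, smul_eq_mul]
    rw [Finset.sum_congr rfl this] at h
    simp [Finset.sum_insert, Finset.mem_insert] at h
    omega
  refine ⟨?_, by omega, by omega, by omega, by omega, by omega⟩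
  intro i hi
  simp only [Set.mem_insert_iff, Set.mem_singleton_iff] at hi
  push_neg at hi
  rw [haF i, Finset.card_eq_zero, Finset.eq_empty_iff_forall_notMem]
  intro H hH
  rw [Finset.mem_filter] at hH
  have := hbound H hH.1
  omega
end
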